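/- arXiv:2404.06995 — 7 statements merged into one kernel-verified Lean document; each statement's English description precedes it below -/
import Mathlib

section
/- Let P_X and P_Y be probability measures on a common measurable space (E, ℰ) with P_Y absolutely continuous with respect to P_X, and suppose the Radon–Nikodym derivative L := dP_Y/dP_X has a continuous (atomless) distribution under P_X. Let Z_X ~ P_X and Z_Y ~ P_Y be independent random elements. Then (1/2)·d_tv(P_X, P_Y) ≤ P( L(Z_X) < L(Z_Y) ) − 1/2 ≤ d_tv(P_X, P_Y). -/
open MeasureTheory ProbabilityTheory

/-- Total variation distance: `sup` over measurable sets `A` of `|P_Y(A) − P_X(A)|`. -/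
noncomputable def tvDist {E : Type*} [MeasurableSpace E] (PX PY : Measure E) : ℝ :=
  ⨆ A : {s : Set E // MeasurableSet s}, |(PY A.1).toReal - (PX A.1).toReal|

/-- for `P_Y ≪ P_X` with likelihood ratio `L := dP_Y/dP_X` having an
atomless distribution under `P_X`, and independent `Z_X ~ P_X`, `Z_Y ~ P_Y`,
`(1/2)·d_tv(P_X,P_Y) ≤ P(L(Z_X) < L(Z_Y)) − 1/2 ≤ d_tv(P_X,P_Y)`. -/
theorem statement0 {E : Type*} [MeasurableSpace E] (PX PY : Measure E)
    [IsProbabilityMeasure PX] [IsProbabilityMeasure PY] (hac : PY ≪ PX)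
    (L : E → ℝ) (hL : L = fun z => (PY.rnDeriv PX z).toReal)
    (hatomless : ∀ c : ℝ, PX {z | L z = c} = 0) :
    (1 / 2) * tvDist PX PY ≤ ((PX.prod PY) {p | L p.1 < L p.2}).toReal - 1 / 2 ∧
      ((PX.prod PY) {p | L p.1 < L p.2}).toReal - 1 / 2 ≤ tvDist PX PY := by
  have hfm : Measurable L := by
    rw [hL]; exact (Measure.measurable_rnDeriv PY PX).ennreal_toReal
  have hfint : Integrable L PX := by
    rw [hL]; exact Measure.integrable_toReal_rnDeriv
  have hset : ∀ s : Set E, ∫ x in s, L x ∂PX = (PY s).toReal := by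
    intro s; rw [hL]; exact Measure.setIntegral_toReal_rnDeriv hac s
  have hint1 : ∫ x, L x ∂PX = 1 := by
    rw [hL, Measure.integral_toReal_rnDeriv hac]; simp
  -- the positive part of `L - 1` and total variation
  set twoD : ℝ := ∫ x, |L x - 1| ∂PX with htwoD
  have hsubint : Integrable (fun x => L x - 1) PX := hfint.sub (integrable_const 1)
  have hposint : Integrable (fun x => max (L x - 1) 0) PX := hsubint.pos_part
  have hnegint : Integrable (fun x => max (1 - L x) 0) PX := by
    have := (hsubint.neg).pos_part
    simpa [neg_sub] using this
  have hpos_add_neg : (∫ x, max (L x - 1) 0 ∂PX) + (∫ x, max (1 - L x) 0 ∂PX) = twoD := by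
    rw [← integral_add hposint hnegint, htwoD]
    refine integral_congr_ae (Filter.Eventually.of_forall fun x => ?_)
    have := max_zero_add_max_neg_zero_eq_abs_self (L x - 1)
    simpa [neg_sub] using this
  have hpos_sub_neg : (∫ x, max (L x - 1) 0 ∂PX) - (∫ x, max (1 - L x) 0 ∂PX) = 0 := by
    rw [← integral_sub hposint hnegint]
    have : ∫ x, (max (L x - 1) 0 - max (1 - L x) 0) ∂PX = ∫ x, (L x - 1) ∂PX := by
      refine integral_congr_ae (Filter.Eventually.of_forall fun x => ?_)
      have := max_zero_sub_max_neg_zero_eq_self (L x - 1)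
      simpa [neg_sub] using this
    rw [this, integral_sub hfint (integrable_const 1), hint1]
    simp
  have hpos_eq : (∫ x, max (L x - 1) 0 ∂PX) = twoD / 2 := by linarith
  have hneg_eq : (∫ x, max (1 - L x) 0 ∂PX) = twoD / 2 := by linarith
  -- difference of measures as a set integral
  have hdiff : ∀ s : Set E, MeasurableSet s →
      (PY s).toReal - (PX s).toReal = ∫ x in s, (L x - 1) ∂PX := by
    intro s hs
    rw [integral_sub hfint.integrableOn (integrableOn_const (measure_ne_top _ _)),
      hset s]
    simp [Measure.restrict_apply_univ, Measure.real]
  have habs_le : ∀ s : Set E, MeasurableSet s →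
      |(PY s).toReal - (PX s).toReal| ≤ twoD / 2 := by
    intro s hs
    rw [hdiff s hs, abs_le]
    constructor
    · have h1 : ∫ x in s, (L x - 1) ∂PX ≥ -∫ x in s, max (1 - L x) 0 ∂PX := by
        rw [← integral_neg]
        refine setIntegral_mono_on (hnegint.neg.integrableOn) hsubint.integrableOn hs
          fun x _ => ?_
        have : -(max (1 - L x) 0) ≤ -(1 - L x) := neg_le_neg (le_max_left _ _)
        linarith
      have h2 : ∫ x in s, max (1 - L x) 0 ∂PX ≤ ∫ x, max (1 - L x) 0 ∂PX :=
        setIntegral_le_integral hnegint (Filter.Eventually.of_forall fun x => le_max_right _ _)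
      linarith [hneg_eq]
    · have h1 : ∫ x in s, (L x - 1) ∂PX ≤ ∫ x in s, max (L x - 1) 0 ∂PX :=
        setIntegral_mono_on hsubint.integrableOn hposint.integrableOn hs
          fun x _ => le_max_left _ _
      have h2 : ∫ x in s, max (L x - 1) 0 ∂PX ≤ ∫ x, max (L x - 1) 0 ∂PX :=
        setIntegral_le_integral hposint (Filter.Eventually.of_forall fun x => le_max_right _ _)
      linarith [hpos_eq]
  -- bounded above
  have hbdd : BddAbove (Set.range fun A : {s : Set E // MeasurableSet s} =>
      |(PY A.1).toReal - (PX A.1).toReal|) := by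
    refine ⟨2, ?_⟩
    rintro x ⟨A, rfl⟩
    have h1 : (PY A.1).toReal ≤ 1 := by
      have := measure_mono (Set.subset_univ A.1) (μ := PY)
      have h := ENNReal.toReal_mono (measure_ne_top PY _) this
      simpa using h
    have h2 : (PX A.1).toReal ≤ 1 := by
      have := measure_mono (Set.subset_univ A.1) (μ := PX)
      have h := ENNReal.toReal_mono (measure_ne_top PX _) this
      simpa using h
    have h3 : (0:ℝ) ≤ (PY A.1).toReal := ENNReal.toReal_nonneg
    have h4 : (0:ℝ) ≤ (PX A.1).toReal := ENNReal.toReal_nonneg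
    rw [abs_le]; constructor <;> linarith
  have htv_le : tvDist PX PY ≤ twoD / 2 := by
    refine ciSup_le fun A => habs_le A.1 A.2
  have htv_ge : twoD / 2 ≤ tvDist PX PY := by
    have hA0 : MeasurableSet {x | 1 < L x} := measurableSet_lt measurable_const hfm
    have hval : |(PY {x | 1 < L x}).toReal - (PX {x | 1 < L x}).toReal| = twoD / 2 := by
      rw [hdiff _ hA0, ← integral_indicator hA0]
      have heq : ∀ x, Set.indicator {x | 1 < L x} (fun x => L x - 1) x = max (L x - 1) 0 := by
        intro x
        simp only [Set.indicator_apply, Set.mem_setOf_eq]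
        by_cases h : 1 < L x
        · rw [if_pos h, max_eq_left (by linarith)]
        · rw [if_neg h, max_eq_right (by push_neg at h; linarith)]
      rw [integral_congr_ae (Filter.Eventually.of_forall heq), hpos_eq, abs_of_nonneg]
      have : (0:ℝ) ≤ twoD := integral_nonneg fun x => abs_nonneg _
      linarith
    calc twoD / 2 = |(PY {x | 1 < L x}).toReal - (PX {x | 1 < L x}).toReal| := hval.symm
      _ ≤ tvDist PX PY := le_ciSup hbdd ⟨{x | 1 < L x}, hA0⟩
  have htv : tvDist PX PY = twoD / 2 := le_antisymm htv_le htv_ge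
  -- product measure computations
  set π : Measure (E × E) := PX.prod PX with hπ
  have hS : MeasurableSet {p : E × E | L p.1 < L p.2} :=
    measurableSet_lt (hfm.comp measurable_fst) (hfm.comp measurable_snd)
  have hmapsnd : Measure.map Prod.snd π = PX := by
    rw [hπ]; simp
  have hmapfst : Measure.map Prod.fst π = PX := by
    rw [hπ]; simp
  have hf2int : Integrable (fun p : E × E => L p.2) π := by
    have h := hfint
    rw [← hmapsnd] at h
    exact h.comp_measurable measurable_snd
  have hf1int : Integrable (fun p : E × E => L p.1) π := by
    have h := hfint
    rw [← hmapfst] at h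
    exact h.comp_measurable measurable_fst
  have hdom : ∀ {h : E × E → ℝ}, Measurable h → (∀ p, |h p| ≤ L p.1 + L p.2) →
      Integrable h π := by
    intro h hm hb
    refine (hf1int.add hf2int).mono' hm.aestronglyMeasurable
      (Filter.Eventually.of_forall fun p => ?_)
    rw [Real.norm_eq_abs]
    exact hb p
  have hfnn : ∀ x, 0 ≤ L x := by
    intro x; rw [hL]; exact ENNReal.toReal_nonneg
  have habs_if : ∀ (u v : ℝ), 0 ≤ u → 0 ≤ v → ∀ w : ℝ, 0 ≤ w → w = u ∨ w = v →
      |if u < v then w else 0| ≤ u + v := by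
    intro u v hu hv w hw hwuv
    by_cases h : u < v
    · rw [if_pos h, abs_of_nonneg hw]; rcases hwuv with rfl | rfl <;> linarith
    · rw [if_neg h, abs_zero]; linarith
  -- all the if-integrands are integrable
  have hSmeas' : MeasurableSet {p : E × E | L p.2 < L p.1} :=
    measurableSet_lt (hfm.comp measurable_snd) (hfm.comp measurable_fst)
  have hEmeas : MeasurableSet {p : E × E | L p.1 = L p.2} :=
    measurableSet_eq_fun (hfm.comp measurable_fst) (hfm.comp measurable_snd)
  have hia : Integrable (fun p : E × E => if L p.1 < L p.2 then L p.2 else 0) π :=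
    hdom (Measurable.ite hS (hfm.comp measurable_snd) measurable_const)
      (fun p => habs_if _ _ (hfnn _) (hfnn _) _ (hfnn _) (Or.inr rfl))
  have hia' : Integrable (fun p : E × E => if L p.1 < L p.2 then L p.1 else 0) π :=
    hdom (Measurable.ite hS (hfm.comp measurable_fst) measurable_const)
      (fun p => habs_if _ _ (hfnn _) (hfnn _) _ (hfnn _) (Or.inl rfl))
  have hib : Integrable (fun p : E × E => if L p.2 < L p.1 then L p.1 else 0) π :=
    hdom (Measurable.ite hSmeas' (hfm.comp measurable_fst) measurable_const)
      (fun p => (habs_if _ _ (hfnn _) (hfnn _) _ (hfnn _) (Or.inr rfl)).trans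
        (le_of_eq (add_comm _ _)))
  have hib' : Integrable (fun p : E × E => if L p.2 < L p.1 then L p.2 else 0) π :=
    hdom (Measurable.ite hSmeas' (hfm.comp measurable_snd) measurable_const)
      (fun p => (habs_if _ _ (hfnn _) (hfnn _) _ (hfnn _) (Or.inl rfl)).trans
        (le_of_eq (add_comm _ _)))
  have hie1 : Integrable (fun p : E × E => if L p.1 = L p.2 then L p.1 else 0) π := by
    refine hdom (Measurable.ite hEmeas (hfm.comp measurable_fst) measurable_const) fun p => ?_
    by_cases h : L p.1 = L p.2
    · rw [if_pos h, abs_of_nonneg (hfnn _)]; linarith [hfnn p.2]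
    · rw [if_neg h, abs_zero]; linarith [hfnn p.1, hfnn p.2]
  have hie2 : Integrable (fun p : E × E => if L p.1 = L p.2 then L p.2 else 0) π := by
    refine hdom (Measurable.ite hEmeas (hfm.comp measurable_snd) measurable_const) fun p => ?_
    by_cases h : L p.1 = L p.2
    · rw [if_pos h, abs_of_nonneg (hfnn _)]; linarith [hfnn p.1]
    · rw [if_neg h, abs_zero]; linarith [hfnn p.1, hfnn p.2]
  have hiI : Integrable (fun p : E × E => |L p.1 - L p.2|) π := by
    refine hdom ((hfm.comp measurable_fst).sub (hfm.comp measurable_snd)).abs fun p => ?_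
    rw [abs_abs]
    have := abs_sub (L p.1) (L p.2)
    calc |L p.1 - L p.2| ≤ |L p.1| + |L p.2| := abs_sub _ _
      _ = L p.1 + L p.2 := by rw [abs_of_nonneg (hfnn _), abs_of_nonneg (hfnn _)]
  -- names for the integrals
  set a : ℝ := ∫ p, (if L p.1 < L p.2 then L p.2 else 0) ∂π with ha
  set a' : ℝ := ∫ p, (if L p.1 < L p.2 then L p.1 else 0) ∂π with ha'
  set b : ℝ := ∫ p, (if L p.2 < L p.1 then L p.1 else 0) ∂π with hb
  set b' : ℝ := ∫ p, (if L p.2 < L p.1 then L p.2 else 0) ∂π with hb'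
  set I : ℝ := ∫ p, |L p.1 - L p.2| ∂π with hI
  -- P = a
  have hP : ((PX.prod PY) {p | L p.1 < L p.2}).toReal = a := by
    have h2 : ((PX.prod PY) {p | L p.1 < L p.2}).toReal
        = ∫ x, (PY (Prod.mk x ⁻¹' {p : E × E | L p.1 < L p.2})).toReal ∂PX := by
      rw [Measure.prod_apply hS, ← integral_toReal
        (measurable_measure_prodMk_left hS).aemeasurable
        (Filter.Eventually.of_forall fun x => measure_lt_top _ _)]
    rw [h2, ha, integral_prod _ hia]
    refine integral_congr_ae (Filter.Eventually.of_forall fun x => ?_)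
    show (PY (Prod.mk x ⁻¹' {p : E × E | L p.1 < L p.2})).toReal
      = ∫ y, (if L x < L y then L y else 0) ∂PX
    have hpre : Prod.mk x ⁻¹' {p : E × E | L p.1 < L p.2} = {y | L x < L y} := rfl
    rw [hpre]
    have hmx : MeasurableSet {y | L x < L y} := measurableSet_lt measurable_const hfm
    rw [← hset {y | L x < L y}, ← integral_indicator hmx]
    refine integral_congr_ae (Filter.Eventually.of_forall fun y => ?_)
    simp [Set.indicator_apply]
  -- a = b by symmetry
  have hab : a = b := by
    have h := integral_prod_swap (μ := PX) (ν := PX)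
      (fun p : E × E => if L p.1 < L p.2 then L p.2 else 0)
    rw [ha, hb, ← h]
    rfl
  -- diagonal terms vanish
  have he2 : ∫ p, (if L p.1 = L p.2 then L p.2 else 0) ∂π = 0 := by
    rw [hπ, integral_prod _ (hπ ▸ hie2)]
    refine integral_eq_zero_of_ae (Filter.Eventually.of_forall fun x => ?_)
    have hnull : PX {y | L x = L y} = 0 :=
      measure_mono_null (fun y (hy : L x = L y) => hy.symm) (hatomless (L x))
    have hae : ∀ᵐ y ∂PX, ¬ (L x = L y) := by
      rw [ae_iff]; simpa [not_not] using hnull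
    refine integral_eq_zero_of_ae ?_
    filter_upwards [hae] with y hy
    simp [hy]
  have he1 : ∫ p, (if L p.1 = L p.2 then L p.1 else 0) ∂π = 0 := by
    rw [hπ, integral_prod _ (hπ ▸ hie1)]
    refine integral_eq_zero_of_ae (Filter.Eventually.of_forall fun x => ?_)
    have hnull : PX {y | L x = L y} = 0 :=
      measure_mono_null (fun y (hy : L x = L y) => hy.symm) (hatomless (L x))
    have hae : ∀ᵐ y ∂PX, ¬ (L x = L y) := by
      rw [ae_iff]; simpa [not_not] using hnull
    refine integral_eq_zero_of_ae ?_
    filter_upwards [hae] with y hy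
    simp [hy]
  -- ∫ L p.2 = 1 and ∫ L p.1 = 1
  have hsnd1 : ∫ p, L p.2 ∂π = 1 := by
    rw [← hint1, ← hmapsnd, integral_map measurable_snd.aemeasurable hfm.aestronglyMeasurable]
  have hfst1 : ∫ p, L p.1 ∂π = 1 := by
    rw [← hint1, ← hmapfst, integral_map measurable_fst.aemeasurable hfm.aestronglyMeasurable]
  -- trichotomy sums
  have htri2 : a + b' = 1 := by
    have key : ∀ p : E × E, (if L p.1 < L p.2 then L p.2 else 0)
        + (if L p.2 < L p.1 then L p.2 else 0)
        + (if L p.1 = L p.2 then L p.2 else 0) = L p.2 := by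
      intro p
      rcases lt_trichotomy (L p.1) (L p.2) with h | h | h
      · simp [h, asymm h, ne_of_lt h]
      · simp [h, lt_irrefl]
      · simp [h, asymm h, (ne_of_gt h)]
    have := integral_congr_ae (μ := π) (Filter.Eventually.of_forall key)
    have habint : Integrable (fun p : E × E => (if L p.1 < L p.2 then L p.2 else 0)
        + (if L p.2 < L p.1 then L p.2 else 0)) π := hia.add hib'
    have hadd1 := integral_add (μ := π) habint hie2
    have hadd2 := integral_add (μ := π) hia hib'
    beta_reduce at hadd1 hadd2
    rw [hadd1, hadd2, he2, hsnd1] at this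
    linarith
  have htri1 : a' + b = 1 := by
    have key : ∀ p : E × E, (if L p.1 < L p.2 then L p.1 else 0)
        + (if L p.2 < L p.1 then L p.1 else 0)
        + (if L p.1 = L p.2 then L p.1 else 0) = L p.1 := by
      intro p
      rcases lt_trichotomy (L p.1) (L p.2) with h | h | h
      · simp [h, asymm h, ne_of_lt h]
      · simp [h, lt_irrefl]
      · simp [h, asymm h, (ne_of_gt h)]
    have := integral_congr_ae (μ := π) (Filter.Eventually.of_forall key)
    have habint : Integrable (fun p : E × E => (if L p.1 < L p.2 then L p.1 else 0)
        + (if L p.2 < L p.1 then L p.1 else 0)) π := hia'.add hib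
    have hadd1 := integral_add (μ := π) habint hie1
    have hadd2 := integral_add (μ := π) hia' hib
    beta_reduce at hadd1 hadd2
    rw [hadd1, hadd2, he1, hfst1] at this
    linarith
  -- I = a - a' + b - b'
  have hIdecomp : I = a - a' + (b - b') := by
    have key : ∀ p : E × E, |L p.1 - L p.2|
        = ((if L p.1 < L p.2 then L p.2 else 0) - (if L p.1 < L p.2 then L p.1 else 0))
        + ((if L p.2 < L p.1 then L p.1 else 0) - (if L p.2 < L p.1 then L p.2 else 0)) := by
      intro p
      rcases lt_trichotomy (L p.1) (L p.2) with h | h | h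
      · rw [abs_of_nonpos (by linarith)]
        simp only [if_pos h, if_neg (asymm h)]
        ring
      · simp [h, lt_irrefl]
      · rw [abs_of_nonneg (by linarith)]
        simp only [if_pos h, if_neg (asymm h)]
        ring
    have := integral_congr_ae (μ := π) (Filter.Eventually.of_forall key)
    have hsint1 : Integrable (fun p : E × E => (if L p.1 < L p.2 then L p.2 else 0)
        - (if L p.1 < L p.2 then L p.1 else 0)) π := hia.sub hia'
    have hsint2 : Integrable (fun p : E × E => (if L p.2 < L p.1 then L p.1 else 0)
        - (if L p.2 < L p.1 then L p.2 else 0)) π := hib.sub hib'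
    have hadd1 := integral_add (μ := π) hsint1 hsint2
    have hsub1 := integral_sub (μ := π) hia hia'
    have hsub2 := integral_sub (μ := π) hib hib'
    beta_reduce at hadd1 hsub1 hsub2
    rw [hadd1, hsub1, hsub2] at this
    rw [hI, this, ha, ha', hb, hb']
  have hPI : ((PX.prod PY) {p | L p.1 < L p.2}).toReal - 1 / 2 = I / 4 := by
    rw [hP]
    have hba : b = a := hab.symm
    linarith [htri1, htri2, hIdecomp]
  -- lower bound: twoD ≤ I
  have hIlow : twoD ≤ I := by
    have hIiter : I = ∫ x, ∫ y, |L x - L y| ∂PX ∂PX := by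
      rw [hI, hπ, integral_prod _ (hπ ▸ hiI)]
    have hinner_int : Integrable (fun x => ∫ y, |L x - L y| ∂PX) PX := by
      have := (hπ ▸ hiI : Integrable (fun p : E × E => |L p.1 - L p.2|) (PX.prod PX))
      exact this.integral_prod_left
    have hlhs_int : Integrable (fun x => |L x - 1|) PX := hsubint.abs
    rw [hIiter, htwoD]
    refine integral_mono hlhs_int hinner_int fun x => ?_
    have h1 : ∫ y, (L x - L y) ∂PX = L x - 1 := by
      rw [integral_sub (integrable_const _) hfint, hint1, integral_const]
      simp
    calc |L x - 1| = |∫ y, (L x - L y) ∂PX| := by rw [h1]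
      _ ≤ ∫ y, |L x - L y| ∂PX := by
          have := norm_integral_le_integral_norm (f := fun y => L x - L y) (μ := PX)
          simpa [Real.norm_eq_abs] using this
  -- upper bound: I ≤ 2 * twoD
  have hIup : I ≤ 2 * twoD := by
    have h1int : Integrable (fun p : E × E => |L p.1 - 1|) π := by
      have h := hsubint.abs
      rw [← hmapfst] at h
      exact h.comp_measurable measurable_fst
    have h2int : Integrable (fun p : E × E => |L p.2 - 1|) π := by
      have h := hsubint.abs
      rw [← hmapsnd] at h
      exact h.comp_measurable measurable_snd
    have hmono : I ≤ ∫ p, (|L p.1 - 1| + |L p.2 - 1|) ∂π := by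
      rw [hI]
      refine integral_mono hiI (h1int.add h2int) fun p => ?_
      calc |L p.1 - L p.2| = |(L p.1 - 1) + (1 - L p.2)| := by ring_nf
        _ ≤ |L p.1 - 1| + |1 - L p.2| := abs_add_le _ _
        _ = |L p.1 - 1| + |L p.2 - 1| := by rw [abs_sub_comm 1 (L p.2)]
    have hsum : ∫ p, (|L p.1 - 1| + |L p.2 - 1|) ∂π = twoD + twoD := by
      rw [integral_add h1int h2int, htwoD]
      congr 1
      · rw [← hmapfst, integral_map measurable_fst.aemeasurable
          (show Measurable fun x => |L x - 1| from (hfm.sub measurable_const).abs).aestronglyMeasurable]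
      · rw [← hmapsnd, integral_map measurable_snd.aemeasurable
          (show Measurable fun x => |L x - 1| from (hfm.sub measurable_const).abs).aestronglyMeasurable]
    linarith
  constructor
  · rw [hPI, htv]; linarith
  · rw [hPI, htv]; linarith
end

section
/- Let P_X and P_Y be probability measures on a common measurable space (E, ℰ) with P_Y absolutely continuous with respect to P_X, and suppose L := dP_Y/dP_X has a continuous (atomless) distribution under P_X. Define δ := E| L(Z_X) − L(Z'_X) | for independent Z_X, Z'_X each distributed according to P_X. Then 2·d_tv(P_X, P_Y) ≤ δ ≤ 4·d_tv(P_X, P_Y). -/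
open MeasureTheory ProbabilityTheory

/-- with `L := dP_Y/dP_X` atomless under `P_X`, and
`δ := E|L(Z_X) − L(Z'_X)|` for independent `Z_X, Z'_X ~ P_X`,
`2·d_tv(P_X,P_Y) ≤ δ ≤ 4·d_tv(P_X,P_Y)`. -/
theorem statement1 {E : Type*} [MeasurableSpace E] (PX PY : Measure E)
    [IsProbabilityMeasure PX] [IsProbabilityMeasure PY] (hac : PY ≪ PX)
    (L : E → ℝ) (hL : L = fun z => (PY.rnDeriv PX z).toReal)
    (hatomless : ∀ c : ℝ, PX {z | L z = c} = 0)
    (δ : ℝ) (hδ : δ = ∫ p, |L p.1 - L p.2| ∂(PX.prod PX)) :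
    2 * tvDist PX PY ≤ δ ∧ δ ≤ 4 * tvDist PX PY := by
  have hLmeas : Measurable L := by
    rw [hL]; exact (Measure.measurable_rnDeriv PY PX).ennreal_toReal
  have hLint : Integrable L PX := by
    rw [hL]; exact Measure.integrable_toReal_rnDeriv
  have hLmean : ∫ x, L x ∂PX = 1 := by
    rw [hL, Measure.integral_toReal_rnDeriv hac]; simp
  have hLset : ∀ s : Set E, ∫ x in s, L x ∂PX = (PY s).toReal := by
    intro s; rw [hL]; exact Measure.setIntegral_toReal_rnDeriv hac s
  have hGint : Integrable (fun x => L x - 1) PX := hLint.sub (integrable_const 1)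
  have hGabs : Integrable (fun x => |L x - 1|) PX := hGint.abs
  set I := ∫ x, |L x - 1| ∂PX with hI
  have hzero : ∫ x, (L x - 1) ∂PX = 0 := by
    rw [integral_sub hLint (integrable_const 1), hLmean]; simp
  have hAeq : ∀ s : Set E, (PY s).toReal - (PX s).toReal = ∫ x in s, (L x - 1) ∂PX := by
    intro s
    rw [integral_sub hLint.integrableOn (integrable_const 1).integrableOn,
      hLset, setIntegral_const]
    simp; rfl
  have habs_int : ∀ s : Set E, |∫ x in s, (L x - 1) ∂PX| ≤ ∫ x in s, |L x - 1| ∂PX := by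
    intro s
    simpa [Real.norm_eq_abs] using
      norm_integral_le_integral_norm (μ := PX.restrict s) (f := fun x => L x - 1)
  haveI : Nonempty {s : Set E // MeasurableSet s} := ⟨⟨∅, MeasurableSet.empty⟩⟩
  have hbdd : BddAbove (Set.range fun A : {s : Set E // MeasurableSet s} =>
      |(PY A.1).toReal - (PX A.1).toReal|) := by
    refine ⟨1, ?_⟩
    rintro x ⟨A, rfl⟩
    have h1 : (PY A.1).toReal ≤ 1 := by
      have := measure_mono (μ := PY) (Set.subset_univ A.1)
      simpa using ENNReal.toReal_mono (by simp) this
    have h2 : (PX A.1).toReal ≤ 1 := by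
      have := measure_mono (μ := PX) (Set.subset_univ A.1)
      simpa using ENNReal.toReal_mono (by simp) this
    have h3 : 0 ≤ (PY A.1).toReal := ENNReal.toReal_nonneg
    have h4 : 0 ≤ (PX A.1).toReal := ENNReal.toReal_nonneg
    rw [abs_sub_le_iff]; constructor <;> linarith
  -- 2 * tvDist ≤ I
  have htvI : 2 * tvDist PX PY ≤ I := by
    have : tvDist PX PY ≤ I / 2 := by
      refine ciSup_le fun A => ?_
      have hsplit : ∫ x in A.1, (L x - 1) ∂PX + ∫ x in A.1ᶜ, (L x - 1) ∂PX = 0 := by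
        rw [integral_add_compl A.2 hGint]; exact hzero
      have hIsplit : ∫ x in A.1, |L x - 1| ∂PX + ∫ x in A.1ᶜ, |L x - 1| ∂PX = I := by
        rw [integral_add_compl A.2 hGabs]
      have h1 := habs_int A.1
      have h2 := habs_int A.1ᶜ
      have heq : |∫ x in A.1ᶜ, (L x - 1) ∂PX| = |∫ x in A.1, (L x - 1) ∂PX| := by
        have : ∫ x in A.1ᶜ, (L x - 1) ∂PX = -∫ x in A.1, (L x - 1) ∂PX := by linarith
        rw [this, abs_neg]
      rw [hAeq A.1]
      linarith
    linarith
  -- I ≤ 2 * tvDist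
  have hItv : I ≤ 2 * tvDist PX PY := by
    set s : Set E := {x | 1 ≤ L x} with hs_def
    have hs : MeasurableSet s := measurableSet_le measurable_const hLmeas
    have h1 : ∫ x in s, |L x - 1| ∂PX = ∫ x in s, (L x - 1) ∂PX := by
      refine setIntegral_congr_fun hs fun x hx => ?_
      exact abs_of_nonneg (by simpa [hs_def, sub_nonneg] using hx)
    have h2 : ∫ x in sᶜ, |L x - 1| ∂PX = -∫ x in sᶜ, (L x - 1) ∂PX := by
      rw [← integral_neg]
      refine setIntegral_congr_fun hs.compl fun x hx => ?_
      have : L x < 1 := by simpa [hs_def] using hx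
      rw [abs_of_nonpos (by linarith)]
    have hsplit : ∫ x in s, (L x - 1) ∂PX + ∫ x in sᶜ, (L x - 1) ∂PX = 0 := by
      rw [integral_add_compl hs hGint]; exact hzero
    have hIsplit : ∫ x in s, |L x - 1| ∂PX + ∫ x in sᶜ, |L x - 1| ∂PX = I := by
      rw [integral_add_compl hs hGabs]
    have hItwo : I = 2 * ∫ x in s, (L x - 1) ∂PX := by
      rw [← hIsplit, h1, h2]; linarith
    have htv : |(PY s).toReal - (PX s).toReal| ≤ tvDist PX PY :=
      le_ciSup hbdd ⟨s, hs⟩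
    rw [hAeq s] at htv
    have := le_abs_self (∫ x in s, (L x - 1) ∂PX)
    linarith
  -- integrability on the product
  have hfst : Integrable (fun p : E × E => L p.1) (PX.prod PX) := by
    have h : Integrable L (Measure.map Prod.fst (PX.prod PX)) := by
      rw [Measure.map_fst_prod, measure_univ, one_smul]; exact hLint
    exact h.comp_measurable measurable_fst
  have hsnd : Integrable (fun p : E × E => L p.2) (PX.prod PX) := by
    have h : Integrable L (Measure.map Prod.snd (PX.prod PX)) := by
      rw [Measure.map_snd_prod, measure_univ, one_smul]; exact hLint
    exact h.comp_measurable measurable_snd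
  have hdiff : Integrable (fun p : E × E => |L p.1 - L p.2|) (PX.prod PX) :=
    (hfst.sub hsnd).abs
  -- I ≤ δ
  have hIδ : I ≤ δ := by
    rw [hδ, integral_prod _ hdiff]
    refine integral_mono hGabs hdiff.integral_prod_left fun x => ?_
    have hint : ∫ y, (L x - L y) ∂PX = L x - 1 := by
      rw [integral_sub (integrable_const _) hLint, hLmean, integral_const]
      simp
    calc |L x - 1| = |∫ y, (L x - L y) ∂PX| := by rw [hint]
      _ ≤ ∫ y, |L x - L y| ∂PX := by
          simpa [Real.norm_eq_abs] using
            norm_integral_le_integral_norm (μ := PX) (f := fun y => L x - L y)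
  -- δ ≤ 2 * I
  have hδI : δ ≤ 2 * I := by
    have hi1 : Integrable (fun p : E × E => |L p.1 - 1|) (PX.prod PX) :=
      (hfst.sub (integrable_const 1)).abs
    have hi2 : Integrable (fun p : E × E => |L p.2 - 1|) (PX.prod PX) :=
      (hsnd.sub (integrable_const 1)).abs
    have key1 : ∫ p : E × E, |L p.1 - 1| ∂(PX.prod PX) = I := by
      have h := integral_map (φ := Prod.fst) (μ := PX.prod PX)
        measurable_fst.aemeasurable
        (f := fun x => |L x - 1|)
        ((hLmeas.sub measurable_const).abs).aestronglyMeasurable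
      rw [Measure.map_fst_prod, measure_univ, one_smul] at h
      exact h.symm
    have key2 : ∫ p : E × E, |L p.2 - 1| ∂(PX.prod PX) = I := by
      have h := integral_map (φ := Prod.snd) (μ := PX.prod PX)
        measurable_snd.aemeasurable
        (f := fun x => |L x - 1|)
        ((hLmeas.sub measurable_const).abs).aestronglyMeasurable
      rw [Measure.map_snd_prod, measure_univ, one_smul] at h
      exact h.symm
    calc δ = ∫ p, |L p.1 - L p.2| ∂(PX.prod PX) := hδ
      _ ≤ ∫ p : E × E, (|L p.1 - 1| + |L p.2 - 1|) ∂(PX.prod PX) := by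
          refine integral_mono hdiff (hi1.add hi2) fun p => ?_
          calc |L p.1 - L p.2| = |(L p.1 - 1) + (1 - L p.2)| := by ring_nf
            _ ≤ |L p.1 - 1| + |1 - L p.2| := abs_add_le _ _
            _ = |L p.1 - 1| + |L p.2 - 1| := by rw [abs_sub_comm 1 (L p.2)]
      _ = I + I := by rw [integral_add hi1 hi2, key1, key2]
      _ = 2 * I := by ring
  exact ⟨by linarith, by linarith⟩
end

section
/- Let P_X and P_Y be probability measures on a common measurable space (E, ℰ) with P_Y absolutely continuous with respect to P_X, and suppose L := dP_Y/dP_X has a continuous (atomless) distribution under P_X. Define δ := E|L(Z_X) − L(Z'_X)| for independent Z_X, Z'_X ~ P_X, and μ := P( L(Z_X) < L(Z_Y) ) for independent Z_X ~ P_X and Z_Y ~ P_Y. Then δ = 4μ − 2, equivalently μ = 1/2 + δ/4. -/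
open MeasureTheory ProbabilityTheory
open scoped ENNReal

private lemma aux_snd {E : Type*} [MeasurableSpace E] (PX PY : Measure E)
    [IsProbabilityMeasure PX] [IsProbabilityMeasure PY] (hac : PY ≪ PX)
    (L : E → ℝ) (hL : L = fun z => (PY.rnDeriv PX z).toReal)
    {A : Set (E × E)} (hA : MeasurableSet A) :
    ∫ p in A, L p.2 ∂(PX.prod PX) = ((PX.prod PY) A).toReal := by
  subst hL
  have hf : Measurable (PY.rnDeriv PX) := Measure.measurable_rnDeriv PY PX
  have h0 : PX {y | PY.rnDeriv PX y = ⊤} = 0 := by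
    have h := Measure.rnDeriv_ne_top PY PX
    rw [ae_iff] at h
    simpa using h
  have hfin : ∀ᵐ p ∂((PX.prod PX).restrict A), PY.rnDeriv PX p.2 < ⊤ := by
    refine ae_restrict_of_ae ?_
    rw [ae_iff]
    have heq : {p : E × E | ¬ PY.rnDeriv PX p.2 < ⊤}
        = Set.univ ×ˢ {y | PY.rnDeriv PX y = ⊤} := by
      ext p; simp [not_lt, top_le_iff]
    rw [heq, Measure.prod_prod, h0, mul_zero]
  show ∫ p in A, ((PY.rnDeriv PX) p.2).toReal ∂(PX.prod PX) = ((PX.prod PY) A).toReal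
  have hkey : ∫ p in A, ((PY.rnDeriv PX) p.2).toReal ∂(PX.prod PX)
      = (∫⁻ p in A, PY.rnDeriv PX p.2 ∂(PX.prod PX)).toReal :=
    integral_toReal ((hf.comp measurable_snd).aemeasurable.restrict) hfin
  rw [hkey]
  congr 1
  have hm : Measurable fun p : E × E => PY.rnDeriv PX p.2 := hf.comp measurable_snd
  rw [Measure.prod_apply hA, ← lintegral_indicator hA,
    lintegral_prod _ ((hm.indicator hA).aemeasurable)]
  refine lintegral_congr fun x => ?_
  have hptw : ∀ y, A.indicator (fun p : E × E => PY.rnDeriv PX p.2) (x, y)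
      = (Prod.mk x ⁻¹' A).indicator (PY.rnDeriv PX) y := fun y => by
    by_cases h : (x, y) ∈ A
    · rw [Set.indicator_of_mem h]
      rw [Set.indicator_of_mem (show y ∈ Prod.mk x ⁻¹' A from h)]
    · rw [Set.indicator_of_notMem h]
      rw [Set.indicator_of_notMem (show y ∉ Prod.mk x ⁻¹' A from h)]
  calc ∫⁻ y, A.indicator (fun p : E × E => PY.rnDeriv PX p.2) (x, y) ∂PX
      = ∫⁻ y, (Prod.mk x ⁻¹' A).indicator (PY.rnDeriv PX) y ∂PX := lintegral_congr hptw
    _ = ∫⁻ y in Prod.mk x ⁻¹' A, PY.rnDeriv PX y ∂PX :=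
        lintegral_indicator (measurable_prodMk_left hA) _
    _ = PY (Prod.mk x ⁻¹' A) := Measure.setLIntegral_rnDeriv hac _

/-- with `L := dP_Y/dP_X` atomless under `P_X`,
`δ := E|L(Z_X) − L(Z'_X)|` for independent `Z_X, Z'_X ~ P_X`, and
`μ := P(L(Z_X) < L(Z_Y))` for independent `Z_X ~ P_X, Z_Y ~ P_Y`, one has
`δ = 4μ − 2`, equivalently `μ = 1/2 + δ/4`. -/
theorem statement4 {E : Type*} [MeasurableSpace E] (PX PY : Measure E)
    [IsProbabilityMeasure PX] [IsProbabilityMeasure PY] (hac : PY ≪ PX)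
    (L : E → ℝ) (hL : L = fun z => (PY.rnDeriv PX z).toReal)
    (hatomless : ∀ c : ℝ, PX {z | L z = c} = 0)
    (δ : ℝ) (hδ : δ = ∫ p, |L p.1 - L p.2| ∂(PX.prod PX))
    (μ : ℝ) (hμ : μ = ((PX.prod PY) {p | L p.1 < L p.2}).toReal) :
    δ = 4 * μ - 2 ∧ μ = 1 / 2 + δ / 4 := by
  have hf : Measurable (PY.rnDeriv PX) := Measure.measurable_rnDeriv PY PX
  have hLm : Measurable L := by rw [hL]; exact hf.ennreal_toReal
  set ρ := PX.prod PX with hρ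
  have hρswap : Measure.map Prod.swap ρ = ρ := Measure.prod_swap
  set S : Set (E × E) := {p | L p.1 < L p.2} with hS
  have hSm : MeasurableSet S := measurableSet_lt (hLm.comp measurable_fst) (hLm.comp measurable_snd)
  set T : Set (E × E) := {p | L p.2 < L p.1} with hT
  have hTm : MeasurableSet T := measurableSet_lt (hLm.comp measurable_snd) (hLm.comp measurable_fst)
  have hDm : MeasurableSet {p : E × E | L p.1 = L p.2} :=
    measurableSet_eq_fun (hLm.comp measurable_fst) (hLm.comp measurable_snd)
  have hLint : Integrable L PX := by rw [hL]; exact Measure.integrable_toReal_rnDeriv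
  have hi1 : Integrable (fun p : E × E => L p.1) ρ := by
    have hmap : Measure.map Prod.fst ρ = PX := by rw [hρ, Measure.map_fst_prod]; simp
    have h' := hLint; rw [← hmap] at h'
    exact (integrable_map_measure hLm.aestronglyMeasurable measurable_fst.aemeasurable).mp h'
  have hi2 : Integrable (fun p : E × E => L p.2) ρ := by
    have hmap : Measure.map Prod.snd ρ = PX := by rw [hρ, Measure.map_snd_prod]; simp
    have h' := hLint; rw [← hmap] at h'
    exact (integrable_map_measure hLm.aestronglyMeasurable measurable_snd.aemeasurable).mp h'
  have hslice : ∀ x : E, Prod.mk x ⁻¹' {p : E × E | L p.1 = L p.2} = {y | L y = L x} := by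
    intro x; ext y; simp [eq_comm]
  have hD0X : ρ {p : E × E | L p.1 = L p.2} = 0 := by
    rw [hρ, Measure.prod_apply hDm]
    have h' : ∀ x, PX (Prod.mk x ⁻¹' {p : E × E | L p.1 = L p.2}) = 0 := fun x => by
      rw [hslice x]; exact hatomless (L x)
    simp only [h', lintegral_zero]
  have hD0Y : (PX.prod PY) {p : E × E | L p.1 = L p.2} = 0 := by
    rw [Measure.prod_apply hDm]
    have h' : ∀ x, PY (Prod.mk x ⁻¹' {p : E × E | L p.1 = L p.2}) = 0 := fun x => by
      rw [hslice x]; exact hac (hatomless (L x))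
    simp only [h', lintegral_zero]
  -- (PX.prod PY) S + (PX.prod PY) T = 1
  have hdisj : Disjoint S T := by
    rw [Set.disjoint_left]; intro p hp hp'
    simp only [hS, Set.mem_setOf_eq] at hp
    simp only [hT, Set.mem_setOf_eq] at hp'
    exact lt_asymm hp hp'
  have hcomplST : (S ∪ T)ᶜ = {p : E × E | L p.1 = L p.2} := by
    ext p; simp only [Set.mem_compl_iff, Set.mem_union, hS, hT, Set.mem_setOf_eq, not_or, not_lt]
    constructor
    · rintro ⟨h1, h2⟩; exact le_antisymm h2 h1
    · rintro h; exact ⟨le_of_eq h.symm, le_of_eq h⟩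
  have hsum : (PX.prod PY) S + (PX.prod PY) T = 1 := by
    have h1 : (PX.prod PY) (S ∪ T) + (PX.prod PY) ((S ∪ T)ᶜ) = 1 := by
      rw [measure_add_measure_compl (hSm.union hTm)]; simp
    rw [hcomplST, hD0Y, add_zero, measure_union hdisj hTm] at h1
    exact h1
  have hμS : ((PX.prod PY) S).toReal = μ := hμ.symm
  have hτ : ((PX.prod PY) T).toReal = 1 - μ := by
    have h1 := congrArg ENNReal.toReal hsum
    rw [ENNReal.toReal_add (measure_ne_top _ _) (measure_ne_top _ _)] at h1
    simp only [ENNReal.toReal_one] at h1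
    rw [hμS] at h1
    linarith
  have hIS2 : ∫ p in S, L p.2 ∂ρ = μ := (aux_snd PX PY hac L hL hSm).trans hμS
  have hIT2 : ∫ p in T, L p.2 ∂ρ = 1 - μ := (aux_snd PX PY hac L hL hTm).trans hτ
  have hIS1 : ∫ p in S, L p.1 ∂ρ = 1 - μ := by
    have hmeas : AEStronglyMeasurable (S.indicator fun p : E × E => L p.1) (Measure.map Prod.swap ρ) :=
      (((hLm.comp measurable_fst).indicator hSm).aestronglyMeasurable)
    have key : ∫ p in S, L p.1 ∂ρ = ∫ p in T, L p.2 ∂ρ := by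
      rw [← integral_indicator hSm, ← integral_indicator hTm]
      conv_lhs => rw [← hρswap]
      rw [integral_map measurable_swap.aemeasurable hmeas]
      refine integral_congr_ae (Filter.Eventually.of_forall fun p => ?_)
      show S.indicator (fun p : E × E => L p.1) p.swap = T.indicator (fun p : E × E => L p.2) p
      by_cases h : p ∈ T
      · have h' : Prod.swap p ∈ S := by simpa [hS, hT] using h
        rw [Set.indicator_of_mem h', Set.indicator_of_mem h]; rfl
      · have h' : Prod.swap p ∉ S := by simpa [hS, hT] using h
        rw [Set.indicator_of_notMem h', Set.indicator_of_notMem h]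
    rw [key, hIT2]
  -- pointwise decomposition of |L p.1 - L p.2|
  have hae : ∀ᵐ p ∂ρ, L p.1 ≠ L p.2 := by
    rw [ae_iff]; simpa using hD0X
  have hptwise : ∀ᵐ p ∂ρ, |L p.1 - L p.2|
      = S.indicator (fun p : E × E => L p.2 - L p.1) p
        + T.indicator (fun p : E × E => L p.1 - L p.2) p := by
    filter_upwards [hae] with p hp
    rcases hp.lt_or_gt with h | h
    · have hpS : p ∈ S := h
      have hpT : p ∉ T := not_lt.2 (le_of_lt h)
      rw [Set.indicator_of_mem hpS, Set.indicator_of_notMem hpT,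
        abs_of_neg (sub_neg.2 h)]
      ring
    · have hpT : p ∈ T := h
      have hpS : p ∉ S := not_lt.2 (le_of_lt h)
      rw [Set.indicator_of_notMem hpS, Set.indicator_of_mem hpT,
        abs_of_pos (sub_pos.2 h)]
      ring
  have hiS : Integrable (S.indicator fun p : E × E => L p.2 - L p.1) ρ := (hi2.sub hi1).indicator hSm
  have hiT : Integrable (T.indicator fun p : E × E => L p.1 - L p.2) ρ := (hi1.sub hi2).indicator hTm
  have hδval : δ = 2 * (μ - (1 - μ)) := by
    rw [hδ, integral_congr_ae hptwise, integral_add hiS hiT]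
    have hswapint : ∫ p, T.indicator (fun p : E × E => L p.1 - L p.2) p ∂ρ
        = ∫ p, S.indicator (fun p : E × E => L p.2 - L p.1) p ∂ρ := by
      conv_rhs => rw [← hρswap]
      have hm' : AEStronglyMeasurable (S.indicator fun p : E × E => L p.2 - L p.1)
          (Measure.map Prod.swap ρ) :=
        (((hLm.comp measurable_snd).sub (hLm.comp measurable_fst)).indicator hSm).aestronglyMeasurable
      rw [integral_map measurable_swap.aemeasurable hm']
      refine integral_congr_ae (Filter.Eventually.of_forall fun p => ?_)
      show T.indicator (fun p : E × E => L p.1 - L p.2) p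
          = S.indicator (fun p : E × E => L p.2 - L p.1) p.swap
      by_cases h : p ∈ T
      · have h' : Prod.swap p ∈ S := by simpa [hS, hT] using h
        rw [Set.indicator_of_mem h, Set.indicator_of_mem h']; rfl
      · have h' : Prod.swap p ∉ S := by simpa [hS, hT] using h
        rw [Set.indicator_of_notMem h, Set.indicator_of_notMem h']
    rw [hswapint]
    have hsplit : ∫ p, S.indicator (fun p : E × E => L p.2 - L p.1) p ∂ρ = μ - (1 - μ) := by
      rw [integral_indicator hSm, integral_sub hi2.integrableOn hi1.integrableOn, hIS2, hIS1]
    rw [hsplit]; ring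
  constructor
  · linarith
  · linarith
end

section
/- Let P_X and P_Y be probability measures on a common measurable space (E, ℰ) with P_Y absolutely continuous with respect to P_X, and suppose L := dP_Y/dP_X has a continuous (atomless) distribution under P_X. Define δ := E|L(Z_X) − L(Z'_X)| for independent Z_X, Z'_X ~ P_X, μ := P( L(Z_X) < L(Z_Y) ) for independent Z_X ~ P_X, Z_Y ~ P_Y, and μ_XY := P( L(Z_X) < L(Z_Y) and L(Z'_X) < L(Z_Y) ) for independent Z_X, Z'_X ~ P_X and Z_Y ~ P_Y. Then 1/3 + δ/6 ≤ μ_XY ≤ 1/3 + δ/2; consequently there is a universal constant C > 0 such that the variance σ_XY := μ_XY − μ² satisfies | σ_XY − 1/12 | ≤ C·δ. -/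
open MeasureTheory ProbabilityTheory

namespace Stmt5Aux
open Set


private lemma measurable_F (ν : Measure ℝ) : Measurable fun r : ℝ => ν (Iio r) :=
  Monotone.measurable (fun _ _ h => measure_mono (Iio_subset_Iio h))

private lemma measurable_G (ν : Measure ℝ) : Measurable fun r : ℝ => ν (Ici r) :=
  Antitone.measurable (fun _ _ h => measure_mono (Ici_subset_Ici.mpr h))

/-- layer-cake swap -/
private lemma layer (ν : Measure ℝ) [IsProbabilityMeasure ν] {g : ℝ → ENNReal}
    (hg : Measurable g) :
    ∫⁻ u, g u * ENNReal.ofReal u ∂ν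
      = ∫⁻ r in Ioi (0:ℝ), ∫⁻ u, (Ici r).indicator g u ∂ν ∂volume := by
  have h1 : ∀ u : ℝ, g u * ENNReal.ofReal u
      = ∫⁻ r in Ioi (0:ℝ), (Ici r).indicator g u ∂volume := by
    intro u
    have h2 : ∀ r : ℝ, (Ici r).indicator g u = (Iic u).indicator (fun _ => g u) r := by
      intro r
      simp only [indicator_apply, mem_Ici, mem_Iic]
    calc g u * ENNReal.ofReal u = g u * volume (Ioc 0 u) := by
          rw [Real.volume_Ioc, sub_zero]
      _ = g u * (volume.restrict (Ioi 0)) (Iic u) := by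
          rw [Measure.restrict_apply measurableSet_Iic, inter_comm, Ioi_inter_Iic]
      _ = ∫⁻ r in Ioi (0:ℝ), (Iic u).indicator (fun _ => g u) r ∂volume := by
          rw [lintegral_indicator_const measurableSet_Iic]
      _ = ∫⁻ r in Ioi (0:ℝ), (Ici r).indicator g u ∂volume := by
          exact lintegral_congr fun r => (h2 r).symm
  rw [lintegral_congr h1]
  refine lintegral_lintegral_swap ?_
  have : (Function.uncurry fun u r => (Ici r).indicator g u)
      = {p : ℝ × ℝ | p.2 ≤ p.1}.indicator (fun p => g p.1) := by
    funext p
    simp only [Function.uncurry, indicator_apply, mem_Ici, mem_setOf_eq]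
  rw [this]
  exact ((hg.comp measurable_fst).indicator
    (measurableSet_le measurable_snd measurable_fst)).aemeasurable

private lemma norm1 (ν : Measure ℝ) [IsProbabilityMeasure ν]
    (hm1 : ∫⁻ t, ENNReal.ofReal t ∂ν = 1) :
    ∫⁻ r in Ioi (0:ℝ), ν (Ici r) ∂volume = 1 := by
  have := layer ν (g := fun _ => (1:ENNReal)) measurable_const
  simp only [one_mul] at this
  rw [hm1] at this
  rw [this]
  refine lintegral_congr fun r => ?_
  rw [lintegral_indicator_const measurableSet_Ici, one_mul]




private lemma mset2 (a r : ℝ) : MeasurableSet {q : ℝ × ℝ | a < q.1 ∧ q.2 < q.1 ∧ r ≤ q.1} :=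
  (measurableSet_lt measurable_const measurable_fst).inter
    ((measurableSet_lt measurable_snd measurable_fst).inter
      (measurableSet_le measurable_const measurable_fst))

private lemma double_int (ν : Measure ℝ) [IsProbabilityMeasure ν] (r : ℝ) :
    ∫⁻ a, ν.prod ν {q : ℝ × ℝ | a < q.1 ∧ q.2 < q.1 ∧ r ≤ q.1} ∂ν
      = ∫⁻ a, (Ici r).indicator (fun a => ν (Iio a) * ν (Iio a)) a ∂ν := by
  have hS : MeasurableSet {p : ℝ × ℝ | p.1 < p.2 ∧ r ≤ p.2} :=
    (measurableSet_lt measurable_fst measurable_snd).inter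
      (measurableSet_le measurable_const measurable_snd)
  have hslice : ∀ a : ℝ, ν.prod ν {q : ℝ × ℝ | a < q.1 ∧ q.2 < q.1 ∧ r ≤ q.1}
      = ∫⁻ b, {p : ℝ × ℝ | p.1 < p.2 ∧ r ≤ p.2}.indicator (fun p => ν (Iio p.2)) (a, b) ∂ν := by
    intro a
    rw [Measure.prod_apply (mset2 a r)]
    refine lintegral_congr fun b => ?_
    by_cases h : a < b ∧ r ≤ b
    · have hp : Prod.mk b ⁻¹' {q : ℝ × ℝ | a < q.1 ∧ q.2 < q.1 ∧ r ≤ q.1} = Iio b := by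
        ext c
        simp [h.1, h.2]
      rw [hp, indicator_of_mem (show (a, b) ∈ {p : ℝ × ℝ | p.1 < p.2 ∧ r ≤ p.2} from h)]
    · have hp : Prod.mk b ⁻¹' {q : ℝ × ℝ | a < q.1 ∧ q.2 < q.1 ∧ r ≤ q.1} = ∅ := by
        ext c
        simp only [mem_preimage, mem_setOf_eq, mem_empty_iff_false, iff_false]
        intro hc
        exact h ⟨hc.1, hc.2.2⟩
      rw [hp, measure_empty,
        indicator_of_notMem (show (a, b) ∉ {p : ℝ × ℝ | p.1 < p.2 ∧ r ≤ p.2} from h)]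
  rw [lintegral_congr hslice]
  have hswap : AEMeasurable (Function.uncurry fun (a b : ℝ) =>
      {p : ℝ × ℝ | p.1 < p.2 ∧ r ≤ p.2}.indicator (fun p => ν (Iio p.2)) (a, b)) (ν.prod ν) := by
    exact (((measurable_F ν).comp measurable_snd).indicator hS).aemeasurable
  rw [lintegral_lintegral_swap hswap]
  refine lintegral_congr fun b => ?_
  by_cases hrb : r ≤ b
  · have h1 : ∀ a : ℝ, {p : ℝ × ℝ | p.1 < p.2 ∧ r ≤ p.2}.indicator (fun p => ν (Iio p.2)) (a, b)
        = (Iio b).indicator (fun _ => ν (Iio b)) a := by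
      intro a
      simp only [indicator_apply, mem_setOf_eq, mem_Iio, hrb, and_true]
    rw [lintegral_congr h1, lintegral_indicator_const measurableSet_Iio,
      indicator_of_mem (show b ∈ Ici r from hrb)]
  · have h1 : ∀ a : ℝ, {p : ℝ × ℝ | p.1 < p.2 ∧ r ≤ p.2}.indicator (fun p => ν (Iio p.2)) (a, b)
        = 0 := fun a => indicator_of_notMem (fun hc => hrb hc.2) _
    rw [lintegral_congr h1, lintegral_zero,
      indicator_of_notMem (show b ∉ Ici r from hrb)]




-- coordinate measurability on ℝ × ℝ × ℝ
private lemma mc1 : Measurable fun x : ℝ × ℝ × ℝ => x.1 := measurable_fst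
private lemma mc2 : Measurable fun x : ℝ × ℝ × ℝ => x.2.1 := measurable_fst.comp measurable_snd
private lemma mc3 : Measurable fun x : ℝ × ℝ × ℝ => x.2.2 := measurable_snd.comp measurable_snd

private lemma mE1 (r : ℝ) : MeasurableSet {x : ℝ × ℝ × ℝ | x.2.1 < x.1 ∧ x.2.2 < x.1 ∧ r ≤ x.1} :=
  (measurableSet_lt mc2 mc1).inter
    ((measurableSet_lt mc3 mc1).inter (measurableSet_le measurable_const mc1))
private lemma mE2 (r : ℝ) : MeasurableSet {x : ℝ × ℝ × ℝ | x.1 < x.2.1 ∧ x.2.2 < x.2.1 ∧ r ≤ x.2.1} :=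
  (measurableSet_lt mc1 mc2).inter
    ((measurableSet_lt mc3 mc2).inter (measurableSet_le measurable_const mc2))
private lemma mE3 (r : ℝ) : MeasurableSet {x : ℝ × ℝ × ℝ | x.1 < x.2.2 ∧ x.2.1 < x.2.2 ∧ r ≤ x.2.2} :=
  (measurableSet_lt mc1 mc3).inter
    ((measurableSet_lt mc2 mc3).inter (measurableSet_le measurable_const mc3))
private lemma mset2' (a r : ℝ) : MeasurableSet {q : ℝ × ℝ | a < q.2 ∧ q.1 < q.2 ∧ r ≤ q.2} :=
  (measurableSet_lt measurable_const measurable_snd).inter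
    ((measurableSet_lt measurable_fst measurable_snd).inter
      (measurableSet_le measurable_const measurable_snd))

section meas
variable (ν : Measure ℝ) [IsProbabilityMeasure ν]

private lemma meas_E1 (r : ℝ) :
    ν.prod (ν.prod ν) {x : ℝ × ℝ × ℝ | x.2.1 < x.1 ∧ x.2.2 < x.1 ∧ r ≤ x.1}
      = ∫⁻ a, (Ici r).indicator (fun a => ν (Iio a) * ν (Iio a)) a ∂ν := by
  rw [Measure.prod_apply (mE1 r)]
  refine lintegral_congr fun a => ?_
  by_cases h : r ≤ a
  · have hp : Prod.mk a ⁻¹' {x : ℝ × ℝ × ℝ | x.2.1 < x.1 ∧ x.2.2 < x.1 ∧ r ≤ x.1}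
        = Iio a ×ˢ Iio a := by
      ext ⟨q1, q2⟩
      simp [h]
    rw [hp, Measure.prod_prod, indicator_of_mem (show a ∈ Ici r from h)]
  · have hp : Prod.mk a ⁻¹' {x : ℝ × ℝ × ℝ | x.2.1 < x.1 ∧ x.2.2 < x.1 ∧ r ≤ x.1} = ∅ := by
      ext ⟨q1, q2⟩
      simp [h]
    rw [hp, measure_empty, indicator_of_notMem (show a ∉ Ici r from h)]


private lemma meas_E2 (r : ℝ) :
    ν.prod (ν.prod ν) {x : ℝ × ℝ × ℝ | x.1 < x.2.1 ∧ x.2.2 < x.2.1 ∧ r ≤ x.2.1}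
      = ∫⁻ a, (Ici r).indicator (fun a => ν (Iio a) * ν (Iio a)) a ∂ν := by
  rw [Measure.prod_apply (mE2 r), ← double_int ν r]
  rfl

private lemma meas_E3 (r : ℝ) :
    ν.prod (ν.prod ν) {x : ℝ × ℝ × ℝ | x.1 < x.2.2 ∧ x.2.1 < x.2.2 ∧ r ≤ x.2.2}
      = ∫⁻ a, (Ici r).indicator (fun a => ν (Iio a) * ν (Iio a)) a ∂ν := by
  rw [Measure.prod_apply (mE3 r), ← double_int ν r]
  refine lintegral_congr fun a => ?_
  have hpre : Prod.mk a ⁻¹' {x : ℝ × ℝ × ℝ | x.1 < x.2.2 ∧ x.2.1 < x.2.2 ∧ r ≤ x.2.2}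
      = Prod.swap ⁻¹' {q : ℝ × ℝ | a < q.1 ∧ q.2 < q.1 ∧ r ≤ q.1} := rfl
  rw [hpre, ← Measure.map_apply measurable_swap (mset2 a r), Measure.prod_swap]

private lemma meas_B (r : ℝ) :
    ν.prod (ν.prod ν) {x : ℝ × ℝ × ℝ | x.1 < r ∧ x.2.1 < r ∧ x.2.2 < r}
      = ν (Iio r) * (ν (Iio r) * ν (Iio r)) := by
  have : {x : ℝ × ℝ × ℝ | x.1 < r ∧ x.2.1 < r ∧ x.2.2 < r} = Iio r ×ˢ (Iio r ×ˢ Iio r) := rfl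
  rw [this, Measure.prod_prod, Measure.prod_prod]

private lemma meas_N1 (hatom : ∀ c : ℝ, ν {c} = 0) :
    ν.prod (ν.prod ν) {x : ℝ × ℝ × ℝ | x.1 = x.2.1} = 0 := by
  rw [Measure.prod_apply (measurableSet_eq_fun mc1 mc2)]
  have h : ∀ a : ℝ, (ν.prod ν) (Prod.mk a ⁻¹' {x : ℝ × ℝ × ℝ | x.1 = x.2.1}) = 0 := by
    intro a
    have : Prod.mk a ⁻¹' {x : ℝ × ℝ × ℝ | x.1 = x.2.1} = ({a} : Set ℝ) ×ˢ (univ : Set ℝ) := by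
      ext ⟨q1, q2⟩
      simp [eq_comm]
    rw [this, Measure.prod_prod, hatom a, zero_mul]
  rw [lintegral_congr h, lintegral_zero]

private lemma meas_N2 (hatom : ∀ c : ℝ, ν {c} = 0) :
    ν.prod (ν.prod ν) {x : ℝ × ℝ × ℝ | x.1 = x.2.2} = 0 := by
  rw [Measure.prod_apply (measurableSet_eq_fun mc1 mc3)]
  have h : ∀ a : ℝ, (ν.prod ν) (Prod.mk a ⁻¹' {x : ℝ × ℝ × ℝ | x.1 = x.2.2}) = 0 := by
    intro a
    have : Prod.mk a ⁻¹' {x : ℝ × ℝ × ℝ | x.1 = x.2.2} = (univ : Set ℝ) ×ˢ ({a} : Set ℝ) := by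
      ext ⟨q1, q2⟩
      simp [eq_comm]
    rw [this, Measure.prod_prod, hatom a, mul_zero]
  rw [lintegral_congr h, lintegral_zero]

private lemma meas_N3 (hatom : ∀ c : ℝ, ν {c} = 0) :
    ν.prod (ν.prod ν) {x : ℝ × ℝ × ℝ | x.2.1 = x.2.2} = 0 := by
  rw [Measure.prod_apply (measurableSet_eq_fun mc2 mc3)]
  have h : ∀ a : ℝ, (ν.prod ν) (Prod.mk a ⁻¹' {x : ℝ × ℝ × ℝ | x.2.1 = x.2.2}) = 0 := by
    intro a
    have hd : Prod.mk a ⁻¹' {x : ℝ × ℝ × ℝ | x.2.1 = x.2.2} = {q : ℝ × ℝ | q.1 = q.2} := rfl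
    rw [hd, Measure.prod_apply (measurableSet_eq_fun measurable_fst measurable_snd)]
    have h2 : ∀ b : ℝ, ν (Prod.mk b ⁻¹' {q : ℝ × ℝ | q.1 = q.2}) = 0 := by
      intro b
      have : Prod.mk b ⁻¹' {q : ℝ × ℝ | q.1 = q.2} = ({b} : Set ℝ) := by
        ext c
        simp [eq_comm]
      rw [this, hatom b]
    rw [lintegral_congr h2, lintegral_zero]
  rw [lintegral_congr h, lintegral_zero]

end meas



private lemma mD1 (r : ℝ) : MeasurableSet {q : ℝ × ℝ | q.2 < q.1 ∧ r ≤ q.1} :=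
  (measurableSet_lt measurable_snd measurable_fst).inter
    (measurableSet_le measurable_const measurable_fst)
private lemma mB2' (r : ℝ) : MeasurableSet {q : ℝ × ℝ | q.1 < r ∧ q.2 < r} :=
  (measurableSet_lt measurable_fst measurable_const).inter
    (measurableSet_lt measurable_snd measurable_const)
private lemma mD2 (r : ℝ) : MeasurableSet {q : ℝ × ℝ | q.1 < q.2 ∧ r ≤ q.2} :=
  (measurableSet_lt measurable_fst measurable_snd).inter
    (measurableSet_le measurable_const measurable_snd)

section meas
variable (ν : Measure ℝ) [IsProbabilityMeasure ν]

private lemma meas_D1 (r : ℝ) :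
    ν.prod ν {q : ℝ × ℝ | q.2 < q.1 ∧ r ≤ q.1}
      = ∫⁻ a, (Ici r).indicator (fun a => ν (Iio a)) a ∂ν := by
  rw [Measure.prod_apply (mD1 r)]
  refine lintegral_congr fun a => ?_
  by_cases h : r ≤ a
  · have hp : Prod.mk a ⁻¹' {q : ℝ × ℝ | q.2 < q.1 ∧ r ≤ q.1} = Iio a := by
      ext b
      simp [h]
    rw [hp, indicator_of_mem (show a ∈ Ici r from h)]
  · have hp : Prod.mk a ⁻¹' {q : ℝ × ℝ | q.2 < q.1 ∧ r ≤ q.1} = ∅ := by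
      ext b
      simp [h]
    rw [hp, measure_empty, indicator_of_notMem (show a ∉ Ici r from h)]

private lemma meas_D2 (r : ℝ) :
    ν.prod ν {q : ℝ × ℝ | q.1 < q.2 ∧ r ≤ q.2}
      = ∫⁻ a, (Ici r).indicator (fun a => ν (Iio a)) a ∂ν := by
  rw [show {q : ℝ × ℝ | q.1 < q.2 ∧ r ≤ q.2}
      = Prod.swap ⁻¹' {q : ℝ × ℝ | q.2 < q.1 ∧ r ≤ q.1} from rfl,
    ← Measure.map_apply measurable_swap (mD1 r), Measure.prod_swap, meas_D1]

private lemma meas_B2 (r : ℝ) :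
    ν.prod ν {q : ℝ × ℝ | q.1 < r ∧ q.2 < r} = ν (Iio r) * ν (Iio r) := by
  rw [show {q : ℝ × ℝ | q.1 < r ∧ q.2 < r} = Iio r ×ˢ Iio r from rfl, Measure.prod_prod]

private lemma meas_N (hatom : ∀ c : ℝ, ν {c} = 0) :
    ν.prod ν {q : ℝ × ℝ | q.1 = q.2} = 0 := by
  rw [Measure.prod_apply (measurableSet_eq_fun measurable_fst measurable_snd)]
  have h2 : ∀ b : ℝ, ν (Prod.mk b ⁻¹' {q : ℝ × ℝ | q.1 = q.2}) = 0 := by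
    intro b
    have : Prod.mk b ⁻¹' {q : ℝ × ℝ | q.1 = q.2} = ({b} : Set ℝ) := by
      ext c
      simp [eq_comm]
    rw [this, hatom b]
  rw [lintegral_congr h2, lintegral_zero]

private lemma two_var (hatom : ∀ c : ℝ, ν {c} = 0) (r : ℝ) :
    (∫⁻ a, (Ici r).indicator (fun a => ν (Iio a)) a ∂ν)
      + ((∫⁻ a, (Ici r).indicator (fun a => ν (Iio a)) a ∂ν)
        + ν (Iio r) * ν (Iio r)) = 1 := by
  have hD1 := meas_D1 ν r
  have hD2 := meas_D2 ν r
  have hB := meas_B2 ν r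
  have hN := meas_N ν hatom
  have hU : ν.prod ν ({q : ℝ × ℝ | q.2 < q.1 ∧ r ≤ q.1}
      ∪ ({q : ℝ × ℝ | q.1 < q.2 ∧ r ≤ q.2} ∪ {q : ℝ × ℝ | q.1 < r ∧ q.2 < r}))
      = (∫⁻ a, (Ici r).indicator (fun a => ν (Iio a)) a ∂ν)
        + ((∫⁻ a, (Ici r).indicator (fun a => ν (Iio a)) a ∂ν)
          + ν (Iio r) * ν (Iio r)) := by
    rw [measure_union ?d1 ((mD2 r).union (mB2' r)),
      measure_union ?d2 (mB2' r), hD1, hD2, hB]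
    case d1 =>
      rw [Set.disjoint_left]
      rintro ⟨q1, q2⟩ hq hq'
      rcases hq' with h' | h'
      · exact absurd hq.1 (not_lt.mpr h'.1.le)
      · exact absurd hq.2 (not_le.mpr h'.1)
    case d2 =>
      rw [Set.disjoint_left]
      rintro ⟨q1, q2⟩ hq hq'
      exact absurd hq.2 (not_le.mpr hq'.2)
  refine le_antisymm ?_ ?_
  · rw [← hU]
    exact prob_le_one
  · calc (1 : ENNReal) = ν.prod ν univ := measure_univ.symm
      _ ≤ ν.prod ν ({q : ℝ × ℝ | q.1 = q.2} ∪ ({q : ℝ × ℝ | q.2 < q.1 ∧ r ≤ q.1}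
          ∪ ({q : ℝ × ℝ | q.1 < q.2 ∧ r ≤ q.2} ∪ {q : ℝ × ℝ | q.1 < r ∧ q.2 < r}))) := by
        refine measure_mono fun q _ => ?_
        rcases q with ⟨q1, q2⟩
        simp only [mem_union, mem_setOf_eq]
        by_cases he : q1 = q2
        · tauto
        rcases Ne.lt_or_gt he with h1 | h1 <;>
          rcases le_or_gt r q1 with h2 | h2 <;>
          rcases le_or_gt r q2 with h3 | h3 <;>
          first
            | tauto
            | (right; right; right; exact ⟨by linarith, by linarith⟩)
      _ ≤ ν.prod ν {q : ℝ × ℝ | q.1 = q.2} + ν.prod ν ({q : ℝ × ℝ | q.2 < q.1 ∧ r ≤ q.1}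
          ∪ ({q : ℝ × ℝ | q.1 < q.2 ∧ r ≤ q.2} ∪ {q : ℝ × ℝ | q.1 < r ∧ q.2 < r})) :=
        measure_union_le _ _
      _ = _ := by rw [hN, zero_add, hU]
end meas



private lemma mB3 (r : ℝ) : MeasurableSet {x : ℝ × ℝ × ℝ | x.1 < r ∧ x.2.1 < r ∧ x.2.2 < r} :=
  (measurableSet_lt mc1 measurable_const).inter
    ((measurableSet_lt mc2 measurable_const).inter (measurableSet_lt mc3 measurable_const))

section meas
variable (ν : Measure ℝ) [IsProbabilityMeasure ν]

private lemma trich (a b c r : ℝ) :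
    a = b ∨ (a = c ∨ (b = c
      ∨ ((b < a ∧ c < a ∧ r ≤ a) ∨ ((a < b ∧ c < b ∧ r ≤ b) ∨ ((a < c ∧ b < c ∧ r ≤ c)
      ∨ (a < r ∧ b < r ∧ c < r)))))) := by
  by_cases hab : a = b
  · tauto
  by_cases hac : a = c
  · tauto
  by_cases hbc : b = c
  · tauto
  rcases le_or_gt r (max a (max b c)) with hr | hr
  · rcases max_cases a (max b c) with ⟨h1, h2⟩ | ⟨h1, h2⟩
    · rw [h1] at hr
      have hb : b < a := lt_of_le_of_ne (le_trans (le_max_left b c) h2) fun h => hab h.symm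
      have hc : c < a := lt_of_le_of_ne (le_trans (le_max_right b c) h2) fun h => hac h.symm
      exact Or.inr (Or.inr (Or.inr (Or.inl ⟨hb, hc, hr⟩)))
    · rw [h1] at hr
      rcases max_cases b c with ⟨h3, h4⟩ | ⟨h3, h4⟩
      · rw [h3] at hr h2
        exact Or.inr (Or.inr (Or.inr (Or.inr (Or.inl
          ⟨h2, lt_of_le_of_ne h4 fun h => hbc h.symm, hr⟩))))
      · rw [h3] at hr h2
        exact Or.inr (Or.inr (Or.inr (Or.inr (Or.inr (Or.inl ⟨h2, h4, hr⟩)))))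
  · refine Or.inr (Or.inr (Or.inr (Or.inr (Or.inr (Or.inr ⟨?_, ?_, ?_⟩)))))
    · exact lt_of_le_of_lt (le_max_left a (max b c)) hr
    · exact lt_of_le_of_lt (le_trans (le_max_left b c) (le_max_right a (max b c))) hr
    · exact lt_of_le_of_lt (le_trans (le_max_right b c) (le_max_right a (max b c))) hr

set_option maxHeartbeats 1000000 in
private lemma three_var (hatom : ∀ c : ℝ, ν {c} = 0) (r : ℝ) :
    (∫⁻ a, (Ici r).indicator (fun a => ν (Iio a) * ν (Iio a)) a ∂ν)
      + ((∫⁻ a, (Ici r).indicator (fun a => ν (Iio a) * ν (Iio a)) a ∂ν)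
        + ((∫⁻ a, (Ici r).indicator (fun a => ν (Iio a) * ν (Iio a)) a ∂ν)
          + ν (Iio r) * (ν (Iio r) * ν (Iio r)))) = 1 := by
  have hU : ν.prod (ν.prod ν) ({x : ℝ × ℝ × ℝ | x.2.1 < x.1 ∧ x.2.2 < x.1 ∧ r ≤ x.1}
      ∪ ({x : ℝ × ℝ × ℝ | x.1 < x.2.1 ∧ x.2.2 < x.2.1 ∧ r ≤ x.2.1}
        ∪ ({x : ℝ × ℝ × ℝ | x.1 < x.2.2 ∧ x.2.1 < x.2.2 ∧ r ≤ x.2.2}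
          ∪ {x : ℝ × ℝ × ℝ | x.1 < r ∧ x.2.1 < r ∧ x.2.2 < r})))
      = (∫⁻ a, (Ici r).indicator (fun a => ν (Iio a) * ν (Iio a)) a ∂ν)
        + ((∫⁻ a, (Ici r).indicator (fun a => ν (Iio a) * ν (Iio a)) a ∂ν)
          + ((∫⁻ a, (Ici r).indicator (fun a => ν (Iio a) * ν (Iio a)) a ∂ν)
            + ν (Iio r) * (ν (Iio r) * ν (Iio r)))) := by
    rw [measure_union ?d1 ((mE2 r).union ((mE3 r).union (mB3 r))),
      measure_union ?d2 ((mE3 r).union (mB3 r)),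
      measure_union ?d3 (mB3 r),
      meas_E1, meas_E2, meas_E3, meas_B]
    case d1 =>
      rw [Set.disjoint_left]
      rintro ⟨a, b, c⟩ hq hq'
      rcases hq' with h' | h' | h'
      · exact absurd hq.1 (not_lt.mpr h'.1.le)
      · exact absurd hq.2.1 (not_lt.mpr h'.1.le)
      · exact absurd hq.2.2 (not_le.mpr h'.1)
    case d2 =>
      rw [Set.disjoint_left]
      rintro ⟨a, b, c⟩ hq hq'
      rcases hq' with h' | h'
      · exact absurd hq.2.1 (not_lt.mpr h'.2.1.le)
      · exact absurd hq.2.2 (not_le.mpr h'.2.1)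
    case d3 =>
      rw [Set.disjoint_left]
      rintro ⟨a, b, c⟩ hq hq'
      exact absurd hq.2.2 (not_le.mpr hq'.2.2)
  refine le_antisymm ?_ ?_
  · rw [← hU]
    exact prob_le_one
  · have hcov : (univ : Set (ℝ × ℝ × ℝ)) ⊆ {x : ℝ × ℝ × ℝ | x.1 = x.2.1}
        ∪ ({x : ℝ × ℝ × ℝ | x.1 = x.2.2}
        ∪ ({x : ℝ × ℝ × ℝ | x.2.1 = x.2.2}
        ∪ ({x : ℝ × ℝ × ℝ | x.2.1 < x.1 ∧ x.2.2 < x.1 ∧ r ≤ x.1}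
        ∪ ({x : ℝ × ℝ × ℝ | x.1 < x.2.1 ∧ x.2.2 < x.2.1 ∧ r ≤ x.2.1}
        ∪ ({x : ℝ × ℝ × ℝ | x.1 < x.2.2 ∧ x.2.1 < x.2.2 ∧ r ≤ x.2.2}
          ∪ {x : ℝ × ℝ × ℝ | x.1 < r ∧ x.2.1 < r ∧ x.2.2 < r}))))) := by
      rintro ⟨a, b, c⟩ -
      simp only [mem_union, mem_setOf_eq]
      exact trich a b c r
    calc (1 : ENNReal) = ν.prod (ν.prod ν) univ := measure_univ.symm
      _ ≤ _ := measure_mono hcov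
      _ ≤ ν.prod (ν.prod ν) {x : ℝ × ℝ × ℝ | x.1 = x.2.1} + _ := measure_union_le _ _
      _ ≤ 0 + (ν.prod (ν.prod ν) {x : ℝ × ℝ × ℝ | x.1 = x.2.2} + _) := by
        rw [meas_N1 ν hatom]
        exact add_le_add_right (measure_union_le _ _) _
      _ ≤ 0 + (0 + (ν.prod (ν.prod ν) {x : ℝ × ℝ × ℝ | x.2.1 = x.2.2} + _)) := by
        rw [meas_N2 ν hatom]
        exact add_le_add_right (add_le_add_right (measure_union_le _ _) _) _
      _ = ν.prod (ν.prod ν) ({x : ℝ × ℝ × ℝ | x.2.1 < x.1 ∧ x.2.2 < x.1 ∧ r ≤ x.1}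
          ∪ ({x : ℝ × ℝ × ℝ | x.1 < x.2.1 ∧ x.2.2 < x.2.1 ∧ r ≤ x.2.1}
            ∪ ({x : ℝ × ℝ × ℝ | x.1 < x.2.2 ∧ x.2.1 < x.2.2 ∧ r ≤ x.2.2}
              ∪ {x : ℝ × ℝ × ℝ | x.1 < r ∧ x.2.1 < r ∧ x.2.2 < r}))) := by
        rw [meas_N3 ν hatom, zero_add, zero_add, zero_add]
      _ = _ := hU
end meas



private lemma cancel2 {K x y : ENNReal} (hx : x ≠ ⊤) (h1 : K + (K + x * x) = 1)
    (hxy : x + y = 1) : K + K = y + y * x := by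
  have hyx : y + x = 1 := by rwa [add_comm] at hxy
  have t2 : y * x + x * x = x := by rw [← add_mul, hyx, one_mul]
  have e1 : x * x + (K + K) = 1 := by rw [← h1]; abel
  have e2 : x * x + (y + y * x) = 1 := by
    calc x * x + (y + y * x) = y + (y * x + x * x) := by abel
      _ = y + x := by rw [t2]
      _ = 1 := hyx
  exact (ENNReal.add_right_inj (ENNReal.mul_ne_top hx hx)).mp (e1.trans e2.symm)

private lemma cancel3 {K x y : ENNReal} (hx : x ≠ ⊤)
    (h1 : K + (K + (K + x * (x * x))) = 1) (hxy : x + y = 1) :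
    K + (K + K) = y + (y * x + y * (x * x)) := by
  have hyx : y + x = 1 := by rwa [add_comm] at hxy
  have t1 : y * (x * x) + x * (x * x) = x * x := by rw [← add_mul, hyx, one_mul]
  have t2 : y * x + x * x = x := by rw [← add_mul, hyx, one_mul]
  have e1 : x * (x * x) + (K + (K + K)) = 1 := by rw [← h1]; abel
  have e2 : x * (x * x) + (y + (y * x + y * (x * x))) = 1 := by
    calc x * (x * x) + (y + (y * x + y * (x * x)))
        = y + (y * x + (y * (x * x) + x * (x * x))) := by abel
      _ = y + (y * x + x * x) := by rw [t1]
      _ = y + x := by rw [t2]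
      _ = 1 := hyx
  exact (ENNReal.add_right_inj
    (ENNReal.mul_ne_top hx (ENNReal.mul_ne_top hx hx))).mp (e1.trans e2.symm)

private lemma ioc_mem_iff (s t r : ℝ) :
    (s ⊓ t < r ∧ r ≤ s ⊔ t) ↔ ((s < r ∧ r ≤ t) ∨ (r ≤ s ∧ t < r)) := by
  constructor
  · rintro ⟨h1, h2⟩
    rcases inf_lt_iff.mp h1 with h | h <;> rcases le_sup_iff.mp h2 with h' | h'
    · exact absurd h (not_lt.mpr h')
    · exact Or.inl ⟨h, h'⟩
    · exact Or.inr ⟨h', h⟩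
    · exact absurd h (not_lt.mpr h')
  · rintro (⟨h1, h2⟩ | ⟨h1, h2⟩)
    · exact ⟨inf_lt_iff.mpr (Or.inl h1), le_sup_iff.mpr (Or.inr h2)⟩
    · exact ⟨inf_lt_iff.mpr (Or.inr h2), le_sup_iff.mpr (Or.inl h1)⟩

private lemma core (ν : Measure ℝ) [IsProbabilityMeasure ν]
    (hatom : ∀ c : ℝ, ν {c} = 0) (hneg : ν (Iio (0:ℝ)) = 0)
    (hm1 : ∫⁻ t, ENNReal.ofReal t ∂ν = 1) :
    ∃ a b : ℝ, 0 ≤ b ∧ b ≤ a ∧ a ≤ 1 ∧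
      (∫ p : ℝ × ℝ, |p.1 - p.2| ∂(ν.prod ν)) = a + a ∧
      ((ν.prod (ν.withDensity fun t => ENNReal.ofReal t)) {q : ℝ × ℝ | q.1 < q.2}).toReal
        + ((ν.prod (ν.withDensity fun t => ENNReal.ofReal t)) {q : ℝ × ℝ | q.1 < q.2}).toReal
        = 1 + a ∧
      ((ν.prod (ν.prod (ν.withDensity fun t => ENNReal.ofReal t)))
          {p : ℝ × ℝ × ℝ | p.1 < p.2.2 ∧ p.2.1 < p.2.2}).toReal
        + (((ν.prod (ν.prod (ν.withDensity fun t => ENNReal.ofReal t)))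
          {p : ℝ × ℝ × ℝ | p.1 < p.2.2 ∧ p.2.1 < p.2.2}).toReal
        + ((ν.prod (ν.prod (ν.withDensity fun t => ENNReal.ofReal t)))
          {p : ℝ × ℝ × ℝ | p.1 < p.2.2 ∧ p.2.1 < p.2.2}).toReal)
        = 1 + (a + b) := by
  have hprob' : IsProbabilityMeasure (ν.withDensity fun t => ENNReal.ofReal t) := by
    constructor
    rw [withDensity_apply _ MeasurableSet.univ, Measure.restrict_univ]
    exact hm1
  set ν' : Measure ℝ := ν.withDensity fun t => ENNReal.ofReal t with hν'def
  -- abbreviations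
  set aE : ENNReal := ∫⁻ r in Ioi (0:ℝ), ν (Ici r) * ν (Iio r) ∂volume with haEdef
  set bE : ENNReal := ∫⁻ r in Ioi (0:ℝ), ν (Ici r) * (ν (Iio r) * ν (Iio r)) ∂volume with hbEdef
  have hFG : ∀ r : ℝ, ν (Iio r) + ν (Ici r) = 1 := by
    intro r
    have := measure_add_measure_compl (μ := ν) (measurableSet_Iio (a := r))
    rwa [compl_Iio, measure_univ] at this
  -- K functions
  set K1 : ℝ → ENNReal := fun r => ∫⁻ a, (Ici r).indicator (fun a => ν (Iio a)) a ∂ν with hK1def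
  set K2 : ℝ → ENNReal :=
    fun r => ∫⁻ a, (Ici r).indicator (fun a => ν (Iio a) * ν (Iio a)) a ∂ν with hK2def
  have hK1m : Measurable K1 :=
    Antitone.measurable fun r r' h => lintegral_mono fun a =>
      indicator_le_indicator_of_subset (Ici_subset_Ici.mpr h) (fun _ => zero_le) a
  have hK2m : Measurable K2 :=
    Antitone.measurable fun r r' h => lintegral_mono fun a =>
      indicator_le_indicator_of_subset (Ici_subset_Ici.mpr h) (fun _ => zero_le) a
  -- pointwise identities
  have hpt2 : ∀ r : ℝ, K1 r + K1 r = ν (Ici r) + ν (Ici r) * ν (Iio r) := fun r =>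
    cancel2 (measure_ne_top ν _) (two_var ν hatom r) (hFG r)
  have hpt3 : ∀ r : ℝ, K2 r + (K2 r + K2 r)
      = ν (Ici r) + (ν (Ici r) * ν (Iio r) + ν (Ici r) * (ν (Iio r) * ν (Iio r))) := fun r =>
    cancel3 (measure_ne_top ν _) (three_var ν hatom r) (hFG r)
  -- integrated identities
  have hA : (∫⁻ r in Ioi (0:ℝ), K1 r ∂volume) + (∫⁻ r in Ioi (0:ℝ), K1 r ∂volume)
      = 1 + aE := by
    rw [← lintegral_add_left hK1m, lintegral_congr hpt2,
      lintegral_add_left (measurable_G ν), norm1 ν hm1]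
  have hB : (∫⁻ r in Ioi (0:ℝ), K2 r ∂volume) + ((∫⁻ r in Ioi (0:ℝ), K2 r ∂volume)
      + (∫⁻ r in Ioi (0:ℝ), K2 r ∂volume)) = 1 + (aE + bE) := by
    rw [← lintegral_add_left hK2m, ← lintegral_add_left hK2m (fun r => K2 r + K2 r),
      lintegral_congr hpt3,
      lintegral_add_left (measurable_G ν),
      lintegral_add_left (show Measurable fun r => ν (Ici r) * ν (Iio r) from
        (measurable_G ν).mul (measurable_F ν)), norm1 ν hm1]
  -- μ computation
  have hμE : (ν.prod ν') {q : ℝ × ℝ | q.1 < q.2} = ∫⁻ r in Ioi (0:ℝ), K1 r ∂volume := by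
    rw [Measure.prod_apply_symm (measurableSet_lt measurable_fst measurable_snd)]
    have e1 : ∫⁻ u, ν ((fun x => (x, u)) ⁻¹' {q : ℝ × ℝ | q.1 < q.2}) ∂ν'
        = ∫⁻ u, ν (Iio u) ∂ν' := lintegral_congr fun u => rfl
    rw [e1, hν'def, lintegral_withDensity_eq_lintegral_mul ν
      ENNReal.measurable_ofReal (measurable_F ν)]
    have e2 : ∫⁻ u, ((fun t => ENNReal.ofReal t) * fun u => ν (Iio u)) u ∂ν
        = ∫⁻ u, ν (Iio u) * ENNReal.ofReal u ∂ν := lintegral_congr fun u => mul_comm _ _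
    rw [e2, layer ν (measurable_F ν)]
  -- μXY computation
  have hT3 : MeasurableSet {p : ℝ × ℝ × ℝ | p.1 < p.2.2 ∧ p.2.1 < p.2.2} :=
    (measurableSet_lt measurable_fst (measurable_snd.comp measurable_snd)).inter
      (measurableSet_lt (measurable_fst.comp measurable_snd)
        (measurable_snd.comp measurable_snd))
  have hμXYE : (ν.prod (ν.prod ν')) {p : ℝ × ℝ × ℝ | p.1 < p.2.2 ∧ p.2.1 < p.2.2}
      = ∫⁻ r in Ioi (0:ℝ), K2 r ∂volume := by
    rw [Measure.prod_apply hT3]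
    have e1 : ∀ s : ℝ, (ν.prod ν') (Prod.mk s ⁻¹' {p : ℝ × ℝ × ℝ | p.1 < p.2.2 ∧ p.2.1 < p.2.2})
        = ∫⁻ u, (Ioi s).indicator (fun u => ν (Iio u)) u ∂ν' := by
      intro s
      rw [show Prod.mk s ⁻¹' {p : ℝ × ℝ × ℝ | p.1 < p.2.2 ∧ p.2.1 < p.2.2}
          = {q : ℝ × ℝ | s < q.2 ∧ q.1 < q.2} from rfl,
        Measure.prod_apply_symm (show MeasurableSet {q : ℝ × ℝ | s < q.2 ∧ q.1 < q.2} from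
          (measurableSet_lt measurable_const measurable_snd).inter
            (measurableSet_lt measurable_fst measurable_snd))]
      refine lintegral_congr fun u => ?_
      by_cases h : s < u
      · rw [show (fun x => (x, u)) ⁻¹' {q : ℝ × ℝ | s < q.2 ∧ q.1 < q.2} = Iio u from by
          ext x; simp [h], indicator_of_mem (show u ∈ Ioi s from h)]
      · rw [show (fun x => (x, u)) ⁻¹' {q : ℝ × ℝ | s < q.2 ∧ q.1 < q.2} = ∅ from by
          ext x; simp [h], measure_empty, indicator_of_notMem (show u ∉ Ioi s from h)]
    rw [lintegral_congr e1]
    have hswap : AEMeasurable (Function.uncurry fun (s u : ℝ) =>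
        (Ioi s).indicator (fun u => ν (Iio u)) u) (ν.prod ν') := by
      have hfe : (Function.uncurry fun (s u : ℝ) => (Ioi s).indicator (fun u => ν (Iio u)) u)
          = {p : ℝ × ℝ | p.1 < p.2}.indicator (fun p => ν (Iio p.2)) := by
        funext p
        simp only [Function.uncurry, indicator_apply, mem_Ioi, mem_setOf_eq]
      rw [hfe]
      exact (((measurable_F ν).comp measurable_snd).indicator
        (measurableSet_lt measurable_fst measurable_snd)).aemeasurable
    rw [lintegral_lintegral_swap hswap]
    have e2 : ∀ u : ℝ, (∫⁻ s, (Ioi s).indicator (fun u => ν (Iio u)) u ∂ν)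
        = ν (Iio u) * ν (Iio u) := by
      intro u
      have : ∀ s : ℝ, (Ioi s).indicator (fun u => ν (Iio u)) u
          = (Iio u).indicator (fun _ => ν (Iio u)) s := by
        intro s
        simp only [indicator_apply, mem_Ioi, mem_Iio]
      rw [lintegral_congr this, lintegral_indicator_const measurableSet_Iio]
    rw [lintegral_congr e2, hν'def, lintegral_withDensity_eq_lintegral_mul ν
      ENNReal.measurable_ofReal (show Measurable fun u => ν (Iio u) * ν (Iio u) from
        (measurable_F ν).mul (measurable_F ν))]
    have e3 : ∫⁻ u, ((fun t => ENNReal.ofReal t) * fun u => ν (Iio u) * ν (Iio u)) u ∂ν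
        = ∫⁻ u, (ν (Iio u) * ν (Iio u)) * ENNReal.ofReal u ∂ν :=
      lintegral_congr fun u => mul_comm _ _
    rw [e3, layer ν (show Measurable fun u => ν (Iio u) * ν (Iio u) from
      (measurable_F ν).mul (measurable_F ν))]
  -- δ computation
  have hδE : ∫⁻ p : ℝ × ℝ, ENNReal.ofReal |p.1 - p.2| ∂(ν.prod ν) = aE + aE := by
    have e1 : ∀ p : ℝ × ℝ, ENNReal.ofReal |p.1 - p.2|
        = ∫⁻ r, (Ioc (p.1 ⊓ p.2) (p.1 ⊔ p.2)).indicator (fun _ => (1:ENNReal)) r ∂volume := by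
      intro p
      rw [lintegral_indicator_const measurableSet_Ioc, one_mul, Real.volume_Ioc,
        max_sub_min_eq_abs, abs_sub_comm]
    rw [lintegral_congr e1]
    have hswap : AEMeasurable (Function.uncurry fun (p : ℝ × ℝ) (r : ℝ) =>
        (Ioc (p.1 ⊓ p.2) (p.1 ⊔ p.2)).indicator (fun _ => (1:ENNReal)) r)
        ((ν.prod ν).prod volume) := by
      have hfe : (Function.uncurry fun (p : ℝ × ℝ) (r : ℝ) =>
          (Ioc (p.1 ⊓ p.2) (p.1 ⊔ p.2)).indicator (fun _ => (1:ENNReal)) r)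
          = {z : (ℝ × ℝ) × ℝ | z.1.1 ⊓ z.1.2 < z.2 ∧ z.2 ≤ z.1.1 ⊔ z.1.2}.indicator
              (fun _ => (1:ENNReal)) := by
        funext z
        simp only [Function.uncurry, indicator_apply, mem_Ioc, mem_setOf_eq]
      rw [hfe]
      exact (measurable_const.indicator
        ((measurableSet_lt (measurable_fst.fst.min measurable_fst.snd) measurable_snd).inter
          (measurableSet_le measurable_snd
            (measurable_fst.fst.max measurable_fst.snd)))).aemeasurable
    rw [lintegral_lintegral_swap hswap]
    have e2 : ∀ r : ℝ, (∫⁻ p : ℝ × ℝ,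
        (Ioc (p.1 ⊓ p.2) (p.1 ⊔ p.2)).indicator (fun _ => (1:ENNReal)) r ∂(ν.prod ν))
        = ν (Iio r) * ν (Ici r) + ν (Ici r) * ν (Iio r) := by
      intro r
      have hset : ∀ p : ℝ × ℝ, (Ioc (p.1 ⊓ p.2) (p.1 ⊔ p.2)).indicator (fun _ => (1:ENNReal)) r
          = ((Iio r ×ˢ Ici r) ∪ (Ici r ×ˢ Iio r)).indicator (fun _ => (1:ENNReal)) p := by
        intro p
        simp only [indicator_apply, mem_Ioc, mem_union, mem_prod, mem_Iio, mem_Ici]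
        rw [if_congr (ioc_mem_iff p.1 p.2 r) rfl rfl]
      rw [lintegral_congr hset, lintegral_indicator_const
        (((measurableSet_Iio.prod measurableSet_Ici)).union
          (measurableSet_Ici.prod measurableSet_Iio)), one_mul,
        measure_union ?disj (measurableSet_Ici.prod measurableSet_Iio),
        Measure.prod_prod, Measure.prod_prod]
      case disj =>
        rw [Set.disjoint_left]
        rintro ⟨p1, p2⟩ hp hp'
        exact absurd hp.1 (not_lt.mpr (show r ≤ p1 from hp'.1))
    rw [lintegral_congr e2]
    have e3 : ∫⁻ r, (ν (Iio r) * ν (Ici r) + ν (Ici r) * ν (Iio r)) ∂volume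
        = (∫⁻ r, ν (Ici r) * ν (Iio r) ∂volume) + ∫⁻ r, ν (Ici r) * ν (Iio r) ∂volume := by
      rw [← lintegral_add_left (show Measurable fun r => ν (Ici r) * ν (Iio r) from
        (measurable_G ν).mul (measurable_F ν))]
      exact lintegral_congr fun r => by rw [mul_comm]
    rw [e3]
    have e4 : ∫⁻ r, ν (Ici r) * ν (Iio r) ∂volume = aE := by
      rw [← lintegral_add_compl (fun r => ν (Ici r) * ν (Iio r))
        (measurableSet_Ioi (a := (0:ℝ))) (μ := volume), compl_Ioi, haEdef]
      have : ∫⁻ r in Iic (0:ℝ), ν (Ici r) * ν (Iio r) ∂volume = 0 := by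
        rw [setLIntegral_congr_fun measurableSet_Iic (fun r hr => ?_),
          lintegral_zero]
        have h0 : ν (Iio r) = 0 := measure_mono_null (Iio_subset_Iio hr) hneg
        rw [h0, mul_zero]
      rw [this, add_zero]
    rw [e4]
  -- finiteness
  have haE1 : aE ≤ 1 := by
    rw [← norm1 ν hm1]
    refine lintegral_mono fun r => ?_
    calc ν (Ici r) * ν (Iio r) ≤ ν (Ici r) * 1 := mul_le_mul_right prob_le_one _
      _ = ν (Ici r) := mul_one _
  have haEne : aE ≠ ⊤ := (lt_of_le_of_lt haE1 ENNReal.one_lt_top).ne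
  have hbEa : bE ≤ aE := by
    refine lintegral_mono fun r => ?_
    refine mul_le_mul_right ?_ _
    calc ν (Iio r) * ν (Iio r) ≤ ν (Iio r) * 1 := mul_le_mul_right prob_le_one _
      _ = ν (Iio r) := mul_one _
  have hbEne : bE ≠ ⊤ := (lt_of_le_of_lt hbEa haEne.lt_top).ne
  have hK1ne : (∫⁻ r in Ioi (0:ℝ), K1 r ∂volume) ≠ ⊤ :=
    ne_top_of_le_ne_top (ENNReal.add_ne_top.mpr ⟨ENNReal.one_ne_top, haEne⟩)
      (hA ▸ le_self_add)
  have hK2ne : (∫⁻ r in Ioi (0:ℝ), K2 r ∂volume) ≠ ⊤ :=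
    ne_top_of_le_ne_top (ENNReal.add_ne_top.mpr ⟨ENNReal.one_ne_top,
      ENNReal.add_ne_top.mpr ⟨haEne, hbEne⟩⟩) (hB ▸ le_self_add)
  refine ⟨aE.toReal, bE.toReal, ENNReal.toReal_nonneg, ENNReal.toReal_mono haEne hbEa,
    ?_, ?_, ?_, ?_⟩
  · simpa using ENNReal.toReal_mono ENNReal.one_ne_top haE1
  · rw [integral_eq_lintegral_of_nonneg_ae (ae_of_all _ fun p => abs_nonneg _)
      ((show Continuous fun p : ℝ × ℝ => |p.1 - p.2| from
        (continuous_fst.sub continuous_snd).abs).aestronglyMeasurable), hδE,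
      ENNReal.toReal_add haEne haEne]
  · rw [hμE, ← ENNReal.toReal_add hK1ne hK1ne, hA,
      ENNReal.toReal_add ENNReal.one_ne_top haEne, ENNReal.toReal_one]
  · rw [hμXYE, ← ENNReal.toReal_add hK2ne hK2ne,
      ← ENNReal.toReal_add hK2ne (ENNReal.add_ne_top.mpr ⟨hK2ne, hK2ne⟩), hB,
      ENNReal.toReal_add ENNReal.one_ne_top (ENNReal.add_ne_top.mpr ⟨haEne, hbEne⟩),
      ENNReal.toReal_add haEne hbEne, ENNReal.toReal_one]


end Stmt5Aux

open Set in
/-- with `L := dP_Y/dP_X` atomless under `P_X`, `δ := E|L(Z_X) − L(Z'_X)|`,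
`μ := P(L(Z_X) < L(Z_Y))` and `μ_XY := P(L(Z_X) < L(Z_Y) ∧ L(Z'_X) < L(Z_Y))`
(for independent `Z_X, Z'_X ~ P_X`, `Z_Y ~ P_Y`), one has
`1/3 + δ/6 ≤ μ_XY ≤ 1/3 + δ/2`, and there is a universal constant `C > 0` such that
`σ_XY := μ_XY − μ²` satisfies `|σ_XY − 1/12| ≤ C·δ`. -/
theorem statement5 :
    ∃ C : ℝ, 0 < C ∧
      ∀ (E : Type) [MeasurableSpace E] (PX PY : Measure E)
        [IsProbabilityMeasure PX] [IsProbabilityMeasure PY],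
        PY ≪ PX →
        ∀ (L : E → ℝ), L = (fun z => (PY.rnDeriv PX z).toReal) →
        (∀ c : ℝ, PX {z | L z = c} = 0) →
        ∀ (δ : ℝ), δ = ∫ p, |L p.1 - L p.2| ∂(PX.prod PX) →
        ∀ (μ : ℝ), μ = ((PX.prod PY) {p | L p.1 < L p.2}).toReal →
        ∀ (μXY : ℝ),
          μXY = ((PX.prod (PX.prod PY))
            {p | L p.1 < L p.2.2 ∧ L p.2.1 < L p.2.2}).toReal →
        ∀ (σXY : ℝ), σXY = μXY - μ ^ 2 →
          (1 / 3 + δ / 6 ≤ μXY ∧ μXY ≤ 1 / 3 + δ / 2) ∧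
            |σXY - 1 / 12| ≤ C * δ := by
  refine ⟨1, one_pos, ?_⟩
  intro E mE PX PY hPX hPY hac L hLdef hatomPX δ hδ μ hμ μXY hμXY σXY hσ
  have hL : Measurable L := by
    rw [hLdef]
    exact (Measure.measurable_rnDeriv PY PX).ennreal_toReal
  set ν : Measure ℝ := PX.map L with hνdef
  haveI hνprob : IsProbabilityMeasure ν := Measure.isProbabilityMeasure_map hL.aemeasurable
  have hatom : ∀ c : ℝ, ν {c} = 0 := by
    intro c
    rw [hνdef, Measure.map_apply hL (measurableSet_singleton c)]
    exact hatomPX c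
  have hneg : ν (Iio (0:ℝ)) = 0 := by
    rw [hνdef, Measure.map_apply hL measurableSet_Iio]
    have : L ⁻¹' (Iio 0) = ∅ := by
      refine eq_empty_iff_forall_notMem.mpr fun z hz => ?_
      rw [mem_preimage, mem_Iio, hLdef] at hz
      exact absurd hz (not_lt.mpr ENNReal.toReal_nonneg)
    rw [this, measure_empty]
  have hone : ∫⁻ t, ENNReal.ofReal t ∂ν = 1 := by
    rw [hνdef, lintegral_map ENNReal.measurable_ofReal hL]
    have hae : ∀ᵐ z ∂PX, ENNReal.ofReal (L z) = PY.rnDeriv PX z := by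
      filter_upwards [Measure.rnDeriv_lt_top PY PX] with z hz
      rw [hLdef]
      exact ENNReal.ofReal_toReal hz.ne
    rw [lintegral_congr_ae hae, Measure.lintegral_rnDeriv hac, measure_univ]
  set ν' : Measure ℝ := ν.withDensity fun t => ENNReal.ofReal t with hν'def
  have hmapY : PY.map L = ν' := by
    refine Measure.ext fun s hs => ?_
    rw [Measure.map_apply hL hs, hν'def, withDensity_apply _ hs, hνdef,
      setLIntegral_map hs ENNReal.measurable_ofReal hL,
      ← Measure.setLIntegral_rnDeriv hac]
    refine lintegral_congr_ae (ae_restrict_of_ae ?_)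
    filter_upwards [Measure.rnDeriv_lt_top PY PX] with z hz
    rw [hLdef]
    exact (ENNReal.ofReal_toReal hz.ne).symm
  -- identify the three statement quantities
  have hμset : (PX.prod PY) {p | L p.1 < L p.2} = (ν.prod ν') {q : ℝ × ℝ | q.1 < q.2} := by
    rw [show {p : E × E | L p.1 < L p.2}
        = Prod.map L L ⁻¹' {q : ℝ × ℝ | q.1 < q.2} from rfl,
      ← Measure.map_apply (hL.prodMap hL)
        (measurableSet_lt measurable_fst measurable_snd),
      ← Measure.map_prod_map _ _ hL hL, hmapY, hνdef]
  have hμXYset : (PX.prod (PX.prod PY)) {p | L p.1 < L p.2.2 ∧ L p.2.1 < L p.2.2}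
      = (ν.prod (ν.prod ν')) {p : ℝ × ℝ × ℝ | p.1 < p.2.2 ∧ p.2.1 < p.2.2} := by
    have hT3 : MeasurableSet {p : ℝ × ℝ × ℝ | p.1 < p.2.2 ∧ p.2.1 < p.2.2} :=
      (measurableSet_lt measurable_fst (measurable_snd.comp measurable_snd)).inter
        (measurableSet_lt (measurable_fst.comp measurable_snd)
          (measurable_snd.comp measurable_snd))
    rw [show {p : E × E × E | L p.1 < L p.2.2 ∧ L p.2.1 < L p.2.2}
        = Prod.map L (Prod.map L L) ⁻¹' {p : ℝ × ℝ × ℝ | p.1 < p.2.2 ∧ p.2.1 < p.2.2} from rfl,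
      ← Measure.map_apply (hL.prodMap (hL.prodMap hL)) hT3,
      ← Measure.map_prod_map _ _ hL (hL.prodMap hL),
      ← Measure.map_prod_map _ _ hL hL, hmapY, hνdef]
  have hδν : δ = ∫ q : ℝ × ℝ, |q.1 - q.2| ∂(ν.prod ν) := by
    rw [hδ, hνdef, Measure.map_prod_map _ _ hL hL,
      integral_map (hL.prodMap hL).aemeasurable
        ((show Continuous fun p : ℝ × ℝ => |p.1 - p.2| from
        (continuous_fst.sub continuous_snd).abs).aestronglyMeasurable)]
    rfl
  obtain ⟨a, b, hb0, hba, ha1, hδab, hμab, hμXYab⟩ := Stmt5Aux.core ν hatom hneg hone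
  rw [← hν'def] at hμab hμXYab
  have hδa : δ = a + a := by rw [hδν, hδab]
  have hμa : μ + μ = 1 + a := by rw [hμ, hμset]; exact hμab
  have hμXYa : μXY + (μXY + μXY) = 1 + (a + b) := by rw [hμXY, hμXYset]; exact hμXYab
  have ha2 : a ^ 2 ≤ a := by nlinarith
  have hμval : μ = (1 + a) / 2 := by linarith
  have hμsq : μ ^ 2 = (1 + 2 * a + a ^ 2) / 4 := by rw [hμval]; ring
  refine ⟨⟨by linarith, by linarith⟩, ?_⟩
  rw [abs_le]
  constructor <;> [skip; skip] <;> nlinarith [hb0, hba, ha1, ha2, hμsq, hσ, hμXYa, hδa]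
end

section
/- Let P_X and P_Y be probability measures on a common measurable space (E, ℰ) with P_Y absolutely continuous with respect to P_X, let L := dP_Y/dP_X, and suppose L(Z) has a continuous (atomless) distribution both when Z ~ P_X and when Z ~ P_Y. Let F_X (respectively F_Y) denote the cumulative distribution function of L(Z) when Z ~ P_X (respectively Z ~ P_Y), and define δ := E|L(Z_X) − L(Z'_X)| for independent Z_X, Z'_X ~ P_X. Then for Z_X ~ P_X, (1/3)·(1 − δ/2) ≤ E[ F_X(L(Z_X)) · F_Y(L(Z_X)) ] ≤ 1/3. -/
open MeasureTheory Set

namespace S7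

variable (ν : Measure ℝ)

/-- CDF -/
noncomputable def F (t : ℝ) : ℝ := (ν (Iic t)).toReal
/-- partial mean -/
noncomputable def G (t : ℝ) : ℝ := ∫ z, z * (if z ≤ t then (1:ℝ) else 0) ∂ν

variable [IsProbabilityMeasure ν]

lemma F_nonneg (t : ℝ) : 0 ≤ F ν t := ENNReal.toReal_nonneg

lemma F_le_one (t : ℝ) : F ν t ≤ 1 := by
  have := prob_le_one (μ := ν) (s := Iic t)
  simpa [F] using ENNReal.toReal_le_of_le_ofReal one_pos.le (by simpa using this)

lemma F_mono : Monotone (F ν) := fun a b hab =>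
  ENNReal.toReal_le_toReal (measure_ne_top _ _) (measure_ne_top _ _) |>.2
    (measure_mono (Iic_subset_Iic.2 hab))

lemma F_meas : Measurable (F ν) := (F_mono ν).measurable

lemma bdd_int {f : ℝ × ℝ → ℝ} (hm : AEStronglyMeasurable f (ν.prod ν)) (C : ℝ)
    (h : ∀ p, |f p| ≤ C) : Integrable f (ν.prod ν) :=
  Integrable.mono' (integrable_const C) hm (Filter.Eventually.of_forall fun p => by
    simpa [Real.norm_eq_abs] using h p)

lemma bdd_int1 {f : ℝ → ℝ} (hm : AEStronglyMeasurable f ν) (C : ℝ)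
    (h : ∀ p, |f p| ≤ C) : Integrable f ν :=
  Integrable.mono' (integrable_const C) hm (Filter.Eventually.of_forall fun p => by
    simpa [Real.norm_eq_abs] using h p)

lemma int_swap {f : ℝ × ℝ → ℝ} (hm : AEStronglyMeasurable f (ν.prod ν)) :
    ∫ p, f p ∂(ν.prod ν) = ∫ p, f (p.2, p.1) ∂(ν.prod ν) := by
  have h1 : AEStronglyMeasurable f (Measure.map Prod.swap (ν.prod ν)) := by
    rwa [Measure.prod_swap]
  calc ∫ p, f p ∂(ν.prod ν) = ∫ p, f p ∂(Measure.map Prod.swap (ν.prod ν)) := by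
        rw [Measure.prod_swap]
    _ = ∫ p, f (Prod.swap p) ∂(ν.prod ν) := integral_map measurable_swap.aemeasurable h1
    _ = ∫ p, f (p.2, p.1) ∂(ν.prod ν) := rfl

lemma int_ite {α : Type*} [MeasurableSpace α] (μ : Measure α) {p : α → Prop}
    (hp : MeasurableSet {x | p x}) [∀ x, Decidable (p x)] :
    ∫ x, (if p x then (1:ℝ) else 0) ∂μ = (μ {x | p x}).toReal := by
  have := integral_indicator_const (1:ℝ) hp (μ := μ)
  simp only [smul_eq_mul, mul_one, measureReal_def] at this
  rw [← this]
  congr 1 with x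
  simp [Set.indicator_apply, Set.mem_setOf_eq]

variable (h0 : ∀ c : ℝ, ν {c} = 0)

include h0 in
lemma diag_null : (ν.prod ν) {p : ℝ × ℝ | p.1 = p.2} = 0 := by
  have hs : MeasurableSet {p : ℝ × ℝ | p.1 = p.2} :=
    measurableSet_eq_fun measurable_fst measurable_snd
  rw [Measure.prod_apply hs]
  have : ∀ x : ℝ, ν (Prod.mk x ⁻¹' {p : ℝ × ℝ | p.1 = p.2}) = 0 := by
    intro x
    have : Prod.mk x ⁻¹' {p : ℝ × ℝ | p.1 = p.2} = {y | y = x} := by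
      ext y; simp [eq_comm]
    rw [this]
    simpa [Set.setOf_eq_eq_singleton] using h0 x
  simp only [this]
  have : ∀ x:ℝ, ν {x} = 0 := h0
  simp [this]

include h0 in
lemma F_eq_Iio (t : ℝ) : F ν t = (ν (Iio t)).toReal := by
  have : ν (Iic t) = ν (Iio t) := by
    have h : Iic t = Iio t ∪ {t} := by ext x; simp [le_iff_lt_or_eq]
    rw [h]
    exact le_antisymm ((measure_union_le _ _).trans (by simp [h0 t]))
      (measure_mono subset_union_left)
  rw [F, this]

end S7

namespace S7
open Filter

variable {ν : Measure ℝ} [IsProbabilityMeasure ν]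

lemma integrable_F : Integrable (F ν) ν :=
  bdd_int1 ν (F_meas ν).aestronglyMeasurable 1
    (fun t => abs_le.2 ⟨by linarith [F_nonneg ν t], F_le_one ν t⟩)

lemma Ioi_toReal (w : ℝ) : (ν (Ioi w)).toReal = 1 - F ν w := by
  rw [← compl_Iic, measure_compl measurableSet_Iic (measure_ne_top _ _), measure_univ,
    ENNReal.toReal_sub_of_le prob_le_one ENNReal.one_ne_top]
  simp [F]

lemma intF (h0 : ∀ c : ℝ, ν {c} = 0) : ∫ t, F ν t ∂ν = 1 / 2 := by
  classical
  set f : ℝ × ℝ → ℝ := fun p => if p.2 ≤ p.1 then (1:ℝ) else 0 with hf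
  have hfm : Measurable f :=
    Measurable.ite (measurableSet_le measurable_snd measurable_fst) measurable_const
      measurable_const
  have hfi : Integrable f (ν.prod ν) :=
    bdd_int ν hfm.aestronglyMeasurable 1 (fun p => by by_cases h : p.2 ≤ p.1 <;> simp [f, h])
  have h1 : ∫ p, f p ∂(ν.prod ν) = ∫ t, F ν t ∂ν := by
    rw [integral_prod f hfi]
    refine integral_congr_ae (Eventually.of_forall fun x => ?_)
    exact int_ite (μ := ν) (p := fun y => y ≤ x) measurableSet_Iic
  have h2 : ∫ p, f p ∂(ν.prod ν) = ∫ p, f (p.2, p.1) ∂(ν.prod ν) :=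
    int_swap ν hfm.aestronglyMeasurable
  have hfi' : Integrable (fun p => f (p.2, p.1)) (ν.prod ν) :=
    bdd_int ν (hfm.comp measurable_swap).aestronglyMeasurable 1
      (fun p => by by_cases h : p.1 ≤ p.2 <;> simp [f, h])
  have key : ∀ p : ℝ × ℝ, f p + f (p.2, p.1)
      = 1 + (if p.1 = p.2 then (1:ℝ) else 0) := by
    rintro ⟨a, b⟩
    rcases lt_trichotomy a b with h | h | h
    · simp [f, not_le.2 h, h.le, h.ne]
    · simp [f, h]
    · simp [f, not_le.2 h, h.le, h.ne']
  have h3 : ∫ p, (f p + f (p.2, p.1)) ∂(ν.prod ν) = 1 := by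
    have hd : ∫ p, (if p.1 = p.2 then (1:ℝ) else 0) ∂(ν.prod ν) = 0 := by
      rw [int_ite (ν.prod ν) (p := fun p : ℝ × ℝ => p.1 = p.2)
        (measurableSet_eq_fun measurable_fst measurable_snd), diag_null ν h0]
      simp
    have : ∫ p, (f p + f (p.2, p.1)) ∂(ν.prod ν)
        = ∫ p, (1 + (if p.1 = p.2 then (1:ℝ) else 0)) ∂(ν.prod ν) :=
      integral_congr_ae (Eventually.of_forall fun p => key p)
    rw [this, integral_add (integrable_const 1)
      (bdd_int ν (Measurable.ite (measurableSet_eq_fun measurable_fst measurable_snd)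
        measurable_const measurable_const).aestronglyMeasurable 1
        (fun p => by by_cases h : p.1 = p.2 <;> simp [h])), hd]
    simp
  rw [integral_add hfi hfi', ← h2, h1] at h3
  linarith

lemma int_half_sq (h0 : ∀ c : ℝ, ν {c} = 0) (t : ℝ) :
    ∫ x, F ν x * (if x < t then (1:ℝ) else 0) ∂ν = F ν t ^ 2 / 2 := by
  classical
  set f : ℝ × ℝ → ℝ :=
    fun p => (if p.2 ≤ p.1 then (1:ℝ) else 0) * (if p.1 < t then (1:ℝ) else 0) with hf
  have hfm : Measurable f :=
    (Measurable.ite (measurableSet_le measurable_snd measurable_fst) measurable_const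
      measurable_const).mul
      (Measurable.ite (measurableSet_lt measurable_fst measurable_const) measurable_const
        measurable_const)
  have hbd : ∀ (a b : Prop) [Decidable a] [Decidable b],
      |(if a then (1:ℝ) else 0) * (if b then (1:ℝ) else 0)| ≤ 1 := by
    intro a b _ _; by_cases h : a <;> by_cases h' : b <;> simp [h, h']
  have hfi : Integrable f (ν.prod ν) := bdd_int ν hfm.aestronglyMeasurable 1 (fun p => hbd _ _)
  have h1 : ∫ p, f p ∂(ν.prod ν) = ∫ x, F ν x * (if x < t then (1:ℝ) else 0) ∂ν := by
    rw [integral_prod f hfi]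
    refine integral_congr_ae (Eventually.of_forall fun x => ?_)
    have : ∫ y, (if y ≤ x then (1:ℝ) else 0) * (if x < t then (1:ℝ) else 0) ∂ν
        = (∫ y, (if y ≤ x then (1:ℝ) else 0) ∂ν) * (if x < t then (1:ℝ) else 0) :=
      integral_mul_const _ _
    show ∫ y, (if y ≤ x then (1:ℝ) else 0) * (if x < t then (1:ℝ) else 0) ∂ν
        = F ν x * (if x < t then (1:ℝ) else 0)
    rw [this, int_ite (μ := ν) (p := fun y => y ≤ x) measurableSet_Iic]
    rfl
  have h2 : ∫ p, f p ∂(ν.prod ν) = ∫ p, f (p.2, p.1) ∂(ν.prod ν) :=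
    int_swap ν hfm.aestronglyMeasurable
  have hfi' : Integrable (fun p => f (p.2, p.1)) (ν.prod ν) :=
    bdd_int ν (hfm.comp measurable_swap).aestronglyMeasurable 1 (fun p => hbd _ _)
  have key : ∀ p : ℝ × ℝ, f p + f (p.2, p.1)
      = (if p.1 < t then (1:ℝ) else 0) * (if p.2 < t then (1:ℝ) else 0)
        + (if p.1 = p.2 then (1:ℝ) else 0) * (if p.1 < t then (1:ℝ) else 0) := by
    rintro ⟨a, b⟩
    rcases lt_trichotomy a b with h | h | h
    · by_cases hb : b < t
      · have ha : a < t := h.trans hb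
        simp [f, not_le.2 h, h.le, h.ne, ha, hb]
      · simp [f, not_le.2 h, h.le, h.ne, hb]
    · subst h; by_cases ha : a < t <;> simp [f, ha]
    · by_cases ha : a < t
      · have hb : b < t := h.trans ha
        simp [f, not_le.2 h, h.le, h.ne', ha, hb]
      · simp [f, not_le.2 h, h.le, h.ne', ha]
  have hprod : ∫ p : ℝ × ℝ, (if p.1 < t then (1:ℝ) else 0) * (if p.2 < t then (1:ℝ) else 0)
      ∂(ν.prod ν) = F ν t ^ 2 := by
    rw [integral_prod_mul (fun x => if x < t then (1:ℝ) else 0)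
      (fun x => if x < t then (1:ℝ) else 0),
      int_ite (μ := ν) (p := fun y => y < t) measurableSet_Iio, F_eq_Iio ν h0]
    ring_nf
    rfl
  have hdiag : ∫ p : ℝ × ℝ, (if p.1 = p.2 then (1:ℝ) else 0) * (if p.1 < t then (1:ℝ) else 0)
      ∂(ν.prod ν) = 0 := by
    have hz : (fun p : ℝ × ℝ => (if p.1 = p.2 then (1:ℝ) else 0) * (if p.1 < t then (1:ℝ) else 0))
        =ᵐ[ν.prod ν] 0 := by
      have : ∀ᵐ p ∂(ν.prod ν), p.1 ≠ p.2 := by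
        rw [ae_iff]
        simpa using diag_null ν h0
      filter_upwards [this] with p hp
      simp [hp]
    rw [integral_congr_ae hz]
    simp
  have h3 : ∫ p, (f p + f (p.2, p.1)) ∂(ν.prod ν) = F ν t ^ 2 := by
    have e : ∫ p, (f p + f (p.2, p.1)) ∂(ν.prod ν)
        = ∫ p : ℝ × ℝ, ((if p.1 < t then (1:ℝ) else 0) * (if p.2 < t then (1:ℝ) else 0)
          + (if p.1 = p.2 then (1:ℝ) else 0) * (if p.1 < t then (1:ℝ) else 0)) ∂(ν.prod ν) :=
      integral_congr_ae (Eventually.of_forall fun p => key p)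
    rw [e, integral_add (f := fun p : ℝ × ℝ => (if p.1 < t then (1:ℝ) else 0) * (if p.2 < t then (1:ℝ) else 0))
      (g := fun p : ℝ × ℝ => (if p.1 = p.2 then (1:ℝ) else 0) * (if p.1 < t then (1:ℝ) else 0))
      (bdd_int ν (((Measurable.ite (measurableSet_lt measurable_fst measurable_const)
        measurable_const measurable_const)).mul
        (Measurable.ite (measurableSet_lt measurable_snd measurable_const) measurable_const
          measurable_const)).aestronglyMeasurable 1 (fun p => hbd _ _))
      (bdd_int ν ((Measurable.ite (measurableSet_eq_fun measurable_fst measurable_snd)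
        measurable_const measurable_const).mul
        (Measurable.ite (measurableSet_lt measurable_fst measurable_const) measurable_const
          measurable_const)).aestronglyMeasurable 1 (fun p => hbd _ _)), hprod, hdiag]
    simp
  rw [integral_add hfi hfi', ← h2, h1] at h3
  linarith

end S7

namespace S7
open Filter

variable {ν : Measure ℝ} [IsProbabilityMeasure ν]

lemma map_snd_self : (ν.prod ν).map Prod.snd = ν := by
  rw [Measure.map_snd_prod, measure_univ, one_smul]

lemma map_fst_self : (ν.prod ν).map Prod.fst = ν := by
  rw [Measure.map_fst_prod, measure_univ, one_smul]

lemma int_comp_snd {g : ℝ → ℝ} (hg : AEStronglyMeasurable g ν) :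
    ∫ p, g p.2 ∂(ν.prod ν) = ∫ z, g z ∂ν := by
  conv_rhs => rw [← map_snd_self (ν := ν)]
  rw [integral_map measurable_snd.aemeasurable (by rwa [map_snd_self])]

lemma int_comp_fst {g : ℝ → ℝ} (hg : AEStronglyMeasurable g ν) :
    ∫ p, g p.1 ∂(ν.prod ν) = ∫ z, g z ∂ν := by
  conv_rhs => rw [← map_fst_self (ν := ν)]
  rw [integral_map measurable_fst.aemeasurable (by rwa [map_fst_self])]

lemma integrable_comp_snd {g : ℝ → ℝ} (hg : Integrable g ν) :
    Integrable (fun p : ℝ × ℝ => g p.2) (ν.prod ν) := by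
  have h1 : Integrable g ((ν.prod ν).map Prod.snd) := by rwa [map_snd_self]
  exact (integrable_map_measure (by rw [map_snd_self]; exact hg.aestronglyMeasurable)
    measurable_snd.aemeasurable).mp h1

lemma integrable_comp_fst {g : ℝ → ℝ} (hg : Integrable g ν) :
    Integrable (fun p : ℝ × ℝ => g p.1) (ν.prod ν) := by
  have h1 : Integrable g ((ν.prod ν).map Prod.fst) := by rwa [map_fst_self]
  exact (integrable_map_measure (by rw [map_fst_self]; exact hg.aestronglyMeasurable)
    measurable_fst.aemeasurable).mp h1

lemma abs_F_le (t : ℝ) : |F ν t| ≤ 1 :=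
  abs_le.2 ⟨by linarith [F_nonneg ν t], F_le_one ν t⟩

lemma integrable_F2 : Integrable (fun t => F ν t ^ 2) ν :=
  bdd_int1 ν ((F_meas ν).pow_const 2).aestronglyMeasurable 1 (fun t => by
    have := abs_F_le (ν := ν) t
    rw [abs_pow]
    nlinarith [abs_nonneg (F ν t)])

lemma intF2 (h0 : ∀ c : ℝ, ν {c} = 0) : ∫ t, F ν t ^ 2 ∂ν = 1 / 3 := by
  classical
  set g : ℝ × ℝ → ℝ := fun p => F ν p.2 * (if p.2 < p.1 then (1:ℝ) else 0) with hg
  have hgm : Measurable g :=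
    ((F_meas ν).comp measurable_snd).mul
      (Measurable.ite (measurableSet_lt measurable_snd measurable_fst) measurable_const
        measurable_const)
  have hgi : Integrable g (ν.prod ν) := bdd_int ν hgm.aestronglyMeasurable 1 (fun p => by
    rw [abs_mul]
    by_cases h : p.2 < p.1 <;> simp [h]
    exact abs_F_le _)
  have h1 : ∫ p, g p ∂(ν.prod ν) = (∫ t, F ν t ^ 2 ∂ν) / 2 := by
    rw [integral_prod g hgi]
    have : ∀ x : ℝ, ∫ y, g (x, y) ∂ν = F ν x ^ 2 / 2 := fun x => int_half_sq h0 x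
    rw [integral_congr_ae (Eventually.of_forall this), integral_div]
  have h2 : ∫ p, g p ∂(ν.prod ν) = ∫ y, F ν y * (1 - F ν y) ∂ν := by
    rw [integral_prod_symm g hgi]
    refine integral_congr_ae (Eventually.of_forall fun y => ?_)
    show ∫ x, F ν y * (if y < x then (1:ℝ) else 0) ∂ν = F ν y * (1 - F ν y)
    rw [MeasureTheory.integral_const_mul, int_ite (μ := ν) (p := fun x => y < x) measurableSet_Ioi]
    rw [show {x | y < x} = Ioi y from rfl, Ioi_toReal]
  have h3 : ∫ y, F ν y * (1 - F ν y) ∂ν = 1 / 2 - ∫ t, F ν t ^ 2 ∂ν := by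
    have e : ∀ y : ℝ, F ν y * (1 - F ν y) = F ν y - F ν y ^ 2 := fun y => by ring
    rw [integral_congr_ae (Eventually.of_forall e),
      integral_sub integrable_F integrable_F2, intF h0]
  rw [h2, h3] at h1
  linarith

end S7

namespace S7
open Filter

variable {ν : Measure ℝ} [IsProbabilityMeasure ν]

lemma integrable_zite (hid : Integrable (fun z : ℝ => z) ν) (t : ℝ) :
    Integrable (fun z => z * (if z ≤ t then (1:ℝ) else 0)) ν := by
  refine Integrable.mono' hid.abs
    ((measurable_id.mul (Measurable.ite measurableSet_Iic measurable_const
      measurable_const)).aestronglyMeasurable) ?_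
  refine Eventually.of_forall fun z => ?_
  rw [Real.norm_eq_abs, abs_mul]
  by_cases h : z ≤ t <;> simp [h, abs_nonneg]

lemma G_mono (hpos : ∀ᵐ z ∂ν, 0 ≤ z) (hid : Integrable (fun z : ℝ => z) ν) :
    Monotone (G ν) := by
  intro a b hab
  refine integral_mono_ae (integrable_zite hid a) (integrable_zite hid b) ?_
  filter_upwards [hpos] with z hz
  by_cases h : z ≤ a
  · simp [h, h.trans hab]
  · by_cases h' : z ≤ b
    · simpa [h, h'] using hz
    · simp [h, h']

lemma G_meas (hpos : ∀ᵐ z ∂ν, 0 ≤ z) (hid : Integrable (fun z : ℝ => z) ν) :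
    Measurable (G ν) := (G_mono hpos hid).measurable

lemma int_abs_id (hpos : ∀ᵐ z ∂ν, 0 ≤ z) (hmean : ∫ z, z ∂ν = 1) :
    ∫ z, |z| ∂ν = 1 := by
  rw [← hmean]
  refine integral_congr_ae ?_
  filter_upwards [hpos] with z hz
  exact abs_of_nonneg hz

lemma abs_G_le (hpos : ∀ᵐ z ∂ν, 0 ≤ z) (hid : Integrable (fun z : ℝ => z) ν)
    (hmean : ∫ z, z ∂ν = 1) (t : ℝ) : |G ν t| ≤ 1 := by
  have h1 : |G ν t| ≤ ∫ z, |z * (if z ≤ t then (1:ℝ) else 0)| ∂ν := by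
    show |∫ z, z * (if z ≤ t then (1:ℝ) else 0) ∂ν| ≤ _
    simpa only [Real.norm_eq_abs] using
      norm_integral_le_integral_norm (μ := ν) (fun z => z * (if z ≤ t then (1:ℝ) else 0))
  have h2 : ∫ z, |z * (if z ≤ t then (1:ℝ) else 0)| ∂ν ≤ ∫ z, |z| ∂ν := by
    refine integral_mono ((integrable_zite hid t).abs) hid.abs fun z => ?_
    rw [abs_mul]
    by_cases h : z ≤ t <;> simp [h, abs_nonneg]
  rw [int_abs_id hpos hmean] at h2
  exact h1.trans h2

lemma I_eq (h0 : ∀ c : ℝ, ν {c} = 0) (hid : Integrable (fun z : ℝ => z) ν)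
    (hmean : ∫ z, z ∂ν = 1) :
    ∫ t, F ν t * G ν t ∂ν = (1 - ∫ z, z * F ν z ^ 2 ∂ν) / 2 := by
  classical
  set f : ℝ × ℝ → ℝ := fun p => F ν p.1 * (p.2 * (if p.2 ≤ p.1 then (1:ℝ) else 0)) with hf
  have hfm : Measurable f :=
    ((F_meas ν).comp measurable_fst).mul (measurable_snd.mul
      (Measurable.ite (measurableSet_le measurable_snd measurable_fst) measurable_const
        measurable_const))
  have habs : ∀ p : ℝ × ℝ, ‖f p‖ ≤ |p.2| := by
    intro p
    rw [Real.norm_eq_abs, abs_mul, abs_mul]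
    have h1 := abs_F_le (ν := ν) p.1
    have h2 : |if p.2 ≤ p.1 then (1:ℝ) else 0| ≤ 1 := by
      by_cases h : p.2 ≤ p.1 <;> simp [h]
    calc |F ν p.1| * (|p.2| * |if p.2 ≤ p.1 then (1:ℝ) else 0|)
        ≤ 1 * (|p.2| * 1) := by gcongr
      _ = |p.2| := by ring
  have hfi : Integrable f (ν.prod ν) :=
    Integrable.mono' (integrable_comp_snd hid.abs) hfm.aestronglyMeasurable
      (Eventually.of_forall habs)
  have h1 : ∫ p, f p ∂(ν.prod ν) = ∫ t, F ν t * G ν t ∂ν := by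
    rw [integral_prod f hfi]
    refine integral_congr_ae (Eventually.of_forall fun x => ?_)
    show ∫ y, F ν x * (y * (if y ≤ x then (1:ℝ) else 0)) ∂ν = F ν x * G ν x
    rw [MeasureTheory.integral_const_mul]
    rfl
  have inner_eq : ∀ y : ℝ, ∫ x, F ν x * (if y ≤ x then (1:ℝ) else 0) ∂ν
      = 1 / 2 - F ν y ^ 2 / 2 := by
    intro y
    have e : ∀ x : ℝ, F ν x * (if y ≤ x then (1:ℝ) else 0)
        = F ν x - F ν x * (if x < y then (1:ℝ) else 0) := by
      intro x
      by_cases h : y ≤ x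
      · simp [h, not_lt.2 h]
      · simp [h, not_le.1 h]
    rw [integral_congr_ae (Eventually.of_forall e), integral_sub integrable_F
      (g := fun x => F ν x * (if x < y then (1:ℝ) else 0))
      (bdd_int1 ν ((F_meas ν).mul (Measurable.ite measurableSet_Iio measurable_const
        measurable_const)).aestronglyMeasurable 1 (fun x => by
          rw [abs_mul]
          have h1 := abs_F_le (ν := ν) x
          by_cases h : x < y <;> simp [h] <;> nlinarith [abs_nonneg (F ν x)])),
      intF h0, int_half_sq h0 y]
  have h2 : ∫ p, f p ∂(ν.prod ν) = ∫ y, y * (1 / 2 - F ν y ^ 2 / 2) ∂ν := by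
    rw [integral_prod_symm f hfi]
    refine integral_congr_ae (Eventually.of_forall fun y => ?_)
    show ∫ x, F ν x * (y * (if y ≤ x then (1:ℝ) else 0)) ∂ν = y * (1 / 2 - F ν y ^ 2 / 2)
    have e : ∀ x : ℝ, F ν x * (y * (if y ≤ x then (1:ℝ) else 0))
        = y * (F ν x * (if y ≤ x then (1:ℝ) else 0)) := fun x => by ring
    rw [integral_congr_ae (Eventually.of_forall e), MeasureTheory.integral_const_mul,
      inner_eq y]
  have hzF2 : Integrable (fun z => z * F ν z ^ 2) ν := by
    refine Integrable.mono' hid.abs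
      ((measurable_id.mul ((F_meas ν).pow_const 2)).aestronglyMeasurable) ?_
    refine Eventually.of_forall fun z => ?_
    rw [Real.norm_eq_abs, abs_mul, abs_pow]
    calc |z| * |F ν z| ^ 2 ≤ |z| * 1 := by
          have := abs_F_le (ν := ν) z
          have h2 : |F ν z| ^ 2 ≤ 1 := by nlinarith [abs_nonneg (F ν z)]
          exact mul_le_mul_of_nonneg_left h2 (abs_nonneg z)
      _ = |z| := mul_one _
  have h3 : ∫ y, y * (1 / 2 - F ν y ^ 2 / 2) ∂ν = (1 - ∫ z, z * F ν z ^ 2 ∂ν) / 2 := by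
    have e : ∀ y : ℝ, y * (1 / 2 - F ν y ^ 2 / 2) = (y - y * F ν y ^ 2) * (1 / 2) :=
      fun y => by ring
    rw [integral_congr_ae (Eventually.of_forall e), integral_mul_const,
      integral_sub hid hzF2, hmean]
    ring
  rw [← h1, h2, h3]

lemma S_ge (h0 : ∀ c : ℝ, ν {c} = 0) (hid : Integrable (fun z : ℝ => z) ν)
    (hmean : ∫ z, z ∂ν = 1) : 1 / 3 ≤ ∫ z, z * F ν z ^ 2 ∂ν := by
  have hzF2 : Integrable (fun z => z * F ν z ^ 2) ν := by
    refine Integrable.mono' hid.abs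
      ((measurable_id.mul ((F_meas ν).pow_const 2)).aestronglyMeasurable) ?_
    refine Eventually.of_forall fun z => ?_
    rw [Real.norm_eq_abs, abs_mul, abs_pow]
    calc |z| * |F ν z| ^ 2 ≤ |z| * 1 := by
          have := abs_F_le (ν := ν) z
          have h2 : |F ν z| ^ 2 ≤ 1 := by nlinarith [abs_nonneg (F ν z)]
          exact mul_le_mul_of_nonneg_left h2 (abs_nonneg z)
      _ = |z| := mul_one _
  have key : 0 ≤ ∫ p : ℝ × ℝ, (p.2 - p.1) * (F ν p.2 ^ 2 - F ν p.1 ^ 2) ∂(ν.prod ν) := by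
    refine integral_nonneg fun p => ?_
    simp only [Pi.zero_apply]
    rcases le_total p.1 p.2 with h | h
    · have hm := F_mono ν h
      have h1 := F_nonneg ν p.1
      exact mul_nonneg (by linarith) (by nlinarith)
    · have hm := F_mono ν h
      have h1 := F_nonneg ν p.2
      nlinarith [mul_nonneg (sub_nonneg.2 h)
        (sub_nonneg.2 (by nlinarith : F ν p.2 ^ 2 ≤ F ν p.1 ^ 2))]
  have e : ∀ p : ℝ × ℝ, (p.2 - p.1) * (F ν p.2 ^ 2 - F ν p.1 ^ 2)
      = (p.2 * F ν p.2 ^ 2 + p.1 * F ν p.1 ^ 2)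
        - (F ν p.1 ^ 2 * p.2 + p.1 * F ν p.2 ^ 2) := fun p => by ring
  have i1 : Integrable (fun p : ℝ × ℝ => p.2 * F ν p.2 ^ 2) (ν.prod ν) :=
    integrable_comp_snd hzF2
  have i2 : Integrable (fun p : ℝ × ℝ => p.1 * F ν p.1 ^ 2) (ν.prod ν) :=
    integrable_comp_fst hzF2
  have i3 : Integrable (fun p : ℝ × ℝ => F ν p.1 ^ 2 * p.2) (ν.prod ν) := by
    refine Integrable.mono' (integrable_comp_snd hid.abs)
      ((((F_meas ν).comp measurable_fst).pow_const 2).mul measurable_snd).aestronglyMeasurable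
      (Eventually.of_forall fun p => ?_)
    rw [Real.norm_eq_abs, abs_mul, abs_pow]
    calc |F ν p.1| ^ 2 * |p.2| ≤ 1 * |p.2| := by
          have := abs_F_le (ν := ν) p.1
          have h2 : |F ν p.1| ^ 2 ≤ 1 := by nlinarith [abs_nonneg (F ν p.1)]
          exact mul_le_mul_of_nonneg_right h2 (abs_nonneg p.2)
      _ = |p.2| := one_mul _
  have i4 : Integrable (fun p : ℝ × ℝ => p.1 * F ν p.2 ^ 2) (ν.prod ν) := by
    refine Integrable.mono' (integrable_comp_fst hid.abs)
      ((measurable_fst.mul (((F_meas ν).comp measurable_snd).pow_const 2))).aestronglyMeasurable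
      (Eventually.of_forall fun p => ?_)
    rw [Real.norm_eq_abs, abs_mul, abs_pow]
    calc |p.1| * |F ν p.2| ^ 2 ≤ |p.1| * 1 := by
          have := abs_F_le (ν := ν) p.2
          have h2 : |F ν p.2| ^ 2 ≤ 1 := by nlinarith [abs_nonneg (F ν p.2)]
          exact mul_le_mul_of_nonneg_left h2 (abs_nonneg p.1)
      _ = |p.1| := mul_one _
  have i12 : Integrable (fun p : ℝ × ℝ => p.2 * F ν p.2 ^ 2 + p.1 * F ν p.1 ^ 2) (ν.prod ν) :=
    i1.add i2
  have i34 : Integrable (fun p : ℝ × ℝ => F ν p.1 ^ 2 * p.2 + p.1 * F ν p.2 ^ 2) (ν.prod ν) :=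
    i3.add i4
  have t1 : ∫ p : ℝ × ℝ, p.2 * F ν p.2 ^ 2 ∂(ν.prod ν) = ∫ z, z * F ν z ^ 2 ∂ν :=
    int_comp_snd hzF2.aestronglyMeasurable
  have t2 : ∫ p : ℝ × ℝ, p.1 * F ν p.1 ^ 2 ∂(ν.prod ν) = ∫ z, z * F ν z ^ 2 ∂ν :=
    int_comp_fst hzF2.aestronglyMeasurable
  have t3 : ∫ p : ℝ × ℝ, F ν p.1 ^ 2 * p.2 ∂(ν.prod ν) = 1 / 3 := by
    rw [integral_prod_mul (fun x => F ν x ^ 2) (fun z => z), intF2 h0, hmean, mul_one]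
  have t4 : ∫ p : ℝ × ℝ, p.1 * F ν p.2 ^ 2 ∂(ν.prod ν) = 1 / 3 := by
    rw [integral_prod_mul (fun x => x) (fun z => F ν z ^ 2), intF2 h0, hmean, one_mul]
  rw [integral_congr_ae (Eventually.of_forall e), integral_sub i12 i34,
    integral_add i1 i2, integral_add i3 i4, t1, t2, t3, t4] at key
  linarith

end S7

namespace S7
open Filter

variable {ν : Measure ℝ} [IsProbabilityMeasure ν]

noncomputable def phi (ν : Measure ℝ) (a : ℝ) : ℝ := ∫ x, max (a - x) 0 ∂ν

lemma integrable_max_sub (hid : Integrable (fun z : ℝ => z) ν) (a : ℝ) :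
    Integrable (fun x => max (a - x) 0) ν := by
  have hb : Integrable (fun x : ℝ => |a| + |x|) ν := (integrable_const _).add hid.abs
  refine Integrable.mono' hb
    (((measurable_const.sub measurable_id).max measurable_const).aestronglyMeasurable)
    (Eventually.of_forall fun x => ?_)
  rw [Real.norm_eq_abs]
  rcases le_total (a - x) 0 with h | h
  · rw [max_eq_right h, abs_zero]
    positivity
  · rw [max_eq_left h, abs_of_nonneg h]
    have := le_abs_self a; have := neg_abs_le x; linarith

lemma phi_nonneg (a : ℝ) : 0 ≤ phi ν a :=
  integral_nonneg fun x => le_max_right _ _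

lemma phi_mono (hid : Integrable (fun z : ℝ => z) ν) : Monotone (phi ν) := by
  intro a b hab
  refine integral_mono (integrable_max_sub hid a) (integrable_max_sub hid b) fun x => ?_
  exact max_le_max (by linarith) le_rfl

lemma integrable_phi (hpos : ∀ᵐ z ∂ν, 0 ≤ z) (hid : Integrable (fun z : ℝ => z) ν)
    (hmean : ∫ z, z ∂ν = 1) : Integrable (phi ν) ν := by
  have hb : Integrable (fun a : ℝ => |a| + 1) ν := hid.abs.add (integrable_const 1)
  refine Integrable.mono' hb
    ((phi_mono hid).measurable.aestronglyMeasurable) (Eventually.of_forall fun a => ?_)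
  rw [Real.norm_eq_abs, abs_of_nonneg (phi_nonneg a)]
  have h1 : phi ν a ≤ ∫ x, |a| + |x| ∂ν := by
    refine integral_mono (integrable_max_sub hid a) ((integrable_const _).add hid.abs)
      fun x => ?_
    rcases le_total (a - x) 0 with h | h
    · rw [max_eq_right h]
      positivity
    · rw [max_eq_left h]
      have := le_abs_self a; have := neg_abs_le x; linarith
  rw [integral_add (integrable_const _) hid.abs, integral_const, probReal_univ,
    smul_eq_mul, one_mul, int_abs_id hpos hmean] at h1
  linarith

lemma integrable_pair_abs (hid : Integrable (fun z : ℝ => z) ν) :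
    Integrable (fun p : ℝ × ℝ => |p.1| + |p.2|) (ν.prod ν) :=
  (integrable_comp_fst hid.abs).add (integrable_comp_snd hid.abs)

lemma integrable_abs_sub (hid : Integrable (fun z : ℝ => z) ν) :
    Integrable (fun p : ℝ × ℝ => |p.1 - p.2|) (ν.prod ν) := by
  refine Integrable.mono' (integrable_pair_abs hid)
    ((measurable_fst.sub measurable_snd).abs.aestronglyMeasurable)
    (Eventually.of_forall fun p => ?_)
  rw [Real.norm_eq_abs, abs_abs]
  exact abs_sub _ _

lemma integrable_max_sub2 (hid : Integrable (fun z : ℝ => z) ν) :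
    Integrable (fun p : ℝ × ℝ => max (p.1 - p.2) 0) (ν.prod ν) := by
  refine Integrable.mono' (integrable_pair_abs hid)
    (((measurable_fst.sub measurable_snd).max measurable_const).aestronglyMeasurable)
    (Eventually.of_forall fun p => ?_)
  rw [Real.norm_eq_abs]
  rcases le_total (p.1 - p.2) 0 with h | h
  · rw [max_eq_right h, abs_zero]
    positivity
  · rw [max_eq_left h, abs_of_nonneg h]
    have := le_abs_self p.1; have := neg_abs_le p.2; linarith

lemma integrable_max_sub2' (hid : Integrable (fun z : ℝ => z) ν) :
    Integrable (fun p : ℝ × ℝ => max (p.2 - p.1) 0) (ν.prod ν) := by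
  refine Integrable.mono' (integrable_pair_abs hid)
    (((measurable_snd.sub measurable_fst).max measurable_const).aestronglyMeasurable)
    (Eventually.of_forall fun p => ?_)
  rw [Real.norm_eq_abs]
  rcases le_total (p.2 - p.1) 0 with h | h
  · rw [max_eq_right h, abs_zero]
    positivity
  · rw [max_eq_left h, abs_of_nonneg h]
    have := le_abs_self p.2; have := neg_abs_le p.1; linarith

lemma int_max_half (hid : Integrable (fun z : ℝ => z) ν) :
    ∫ p, max (p.1 - p.2) 0 ∂(ν.prod ν) = (∫ p, |p.1 - p.2| ∂(ν.prod ν)) / 2 := by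
  have hswap : ∫ p, max (p.1 - p.2) 0 ∂(ν.prod ν) = ∫ p, max (p.2 - p.1) 0 ∂(ν.prod ν) :=
    int_swap ν ((measurable_fst.sub measurable_snd).max measurable_const).aestronglyMeasurable
  have hsum : ∫ p, (max (p.1 - p.2) 0 + max (p.2 - p.1) 0) ∂(ν.prod ν)
      = ∫ p, |p.1 - p.2| ∂(ν.prod ν) := by
    refine integral_congr_ae (Eventually.of_forall fun p => ?_)
    show max (p.1 - p.2) 0 + max (p.2 - p.1) 0 = |p.1 - p.2|
    rcases le_total p.2 p.1 with h | h
    · rw [max_eq_left (by linarith), max_eq_right (by linarith), abs_of_nonneg (by linarith)]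
      ring
    · rw [max_eq_right (by linarith), max_eq_left (by linarith), abs_of_nonpos (by linarith)]
      ring
  rw [integral_add (integrable_max_sub2 hid) (integrable_max_sub2' hid), ← hswap] at hsum
  linarith

lemma int_phi (hid : Integrable (fun z : ℝ => z) ν) :
    ∫ a, phi ν a ∂ν = (∫ p, |p.1 - p.2| ∂(ν.prod ν)) / 2 := by
  rw [← int_max_half hid, integral_prod _ (integrable_max_sub2 hid)]
  rfl

lemma psi_eq (h0 : ∀ c : ℝ, ν {c} = 0) (hid : Integrable (fun z : ℝ => z) ν)
    (hmean : ∫ z, z ∂ν = 1) (m : ℝ) :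
    ∫ x, max x m ∂ν = (1 - G ν m) + m * F ν m := by
  classical
  have e : ∀ x : ℝ, max x m
      = (x - x * (if x ≤ m then (1:ℝ) else 0)) + m * (if x ≤ m then (1:ℝ) else 0) := by
    intro x
    by_cases h : x ≤ m
    · simp [h, max_eq_right h]
    · simp [h, max_eq_left (le_of_not_ge h)]
  have i1 : Integrable (fun x => x - x * (if x ≤ m then (1:ℝ) else 0)) ν :=
    hid.sub (integrable_zite hid m)
  have i2 : Integrable (fun x => m * (if x ≤ m then (1:ℝ) else 0)) ν :=
    bdd_int1 ν ((measurable_const.mul (Measurable.ite measurableSet_Iic measurable_const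
      measurable_const)).aestronglyMeasurable) |m| (fun x => by
        rw [abs_mul]
        by_cases h : x ≤ m <;> simp [h, abs_nonneg])
  rw [integral_congr_ae (Eventually.of_forall e), integral_add i1 i2,
    integral_sub hid (integrable_zite hid m), hmean, MeasureTheory.integral_const_mul,
    int_ite (μ := ν) (p := fun x => x ≤ m) measurableSet_Iic]
  rfl

lemma psi_le (hpos : ∀ᵐ z ∂ν, 0 ≤ z) (hid : Integrable (fun z : ℝ => z) ν)
    (hmean : ∫ z, z ∂ν = 1) (y z : ℝ) :
    ∫ x, max x (max y z) ∂ν ≤ 1 + phi ν y + phi ν z := by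
  have imx : Integrable (fun x => max x (max y z)) ν := by
    have hb : Integrable (fun x : ℝ => |x| + |max y z|) ν := hid.abs.add (integrable_const _)
    refine Integrable.mono' hb
      ((measurable_id.max measurable_const).aestronglyMeasurable)
      (Eventually.of_forall fun x => ?_)
    rw [Real.norm_eq_abs]
    refine (abs_max_le_max_abs_abs).trans (max_le ?_ ?_)
    · linarith [abs_nonneg (max y z)]
    · linarith [abs_nonneg x]
  have pw : ∀ x : ℝ, max x (max y z) ≤ x + (max (y - x) 0 + max (z - x) 0) := by
    intro x
    refine max_le ?_ (max_le ?_ ?_)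
    · have := le_max_right (y - x) (0:ℝ); have := le_max_right (z - x) (0:ℝ); linarith
    · have := le_max_left (y - x) (0:ℝ); have := le_max_right (z - x) (0:ℝ); linarith
    · have := le_max_right (y - x) (0:ℝ); have := le_max_left (z - x) (0:ℝ); linarith
  have hb2 : Integrable (fun x : ℝ => max (y - x) 0 + max (z - x) 0) ν :=
    (integrable_max_sub hid y).add (integrable_max_sub hid z)
  have hb3 : Integrable (fun x : ℝ => x + (max (y - x) 0 + max (z - x) 0)) ν := hid.add hb2
  have h := integral_mono imx hb3 pw
  rw [integral_add hid hb2, integral_add (integrable_max_sub hid y) (integrable_max_sub hid z),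
    hmean] at h
  simp only [phi]
  linarith

end S7

namespace S7
open Filter

variable {ν : Measure ℝ} [IsProbabilityMeasure ν]

lemma abs_max_le (p : ℝ × ℝ) : |max p.1 p.2| ≤ |p.1| + |p.2| :=
  abs_max_le_max_abs_abs.trans (max_le (by linarith [abs_nonneg p.2, le_refl |p.1|])
    (by linarith [abs_nonneg p.1, le_refl |p.2|]))

lemma M_le (h0 : ∀ c : ℝ, ν {c} = 0) (hpos : ∀ᵐ z ∂ν, 0 ≤ z)
    (hid : Integrable (fun z : ℝ => z) ν) (hmean : ∫ z, z ∂ν = 1) :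
    ∫ p, ((1 - G ν (max p.1 p.2)) + max p.1 p.2 * F ν (max p.1 p.2)) ∂(ν.prod ν)
      ≤ 1 + ∫ p, |p.1 - p.2| ∂(ν.prod ν) := by
  have hGme := G_meas hpos hid
  have hmax : Measurable fun p : ℝ × ℝ => max p.1 p.2 := measurable_fst.max measurable_snd
  have hmeas : Measurable fun p : ℝ × ℝ =>
      (1 - G ν (max p.1 p.2)) + max p.1 p.2 * F ν (max p.1 p.2) :=
    (measurable_const.sub (hGme.comp hmax)).add (hmax.mul ((F_meas ν).comp hmax))
  have iM : Integrable (fun p : ℝ × ℝ =>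
      (1 - G ν (max p.1 p.2)) + max p.1 p.2 * F ν (max p.1 p.2)) (ν.prod ν) := by
    have hb : Integrable (fun p : ℝ × ℝ => 2 + (|p.1| + |p.2|)) (ν.prod ν) :=
      (integrable_const _).add (integrable_pair_abs hid)
    refine Integrable.mono' hb hmeas.aestronglyMeasurable (Eventually.of_forall fun p => ?_)
    rw [Real.norm_eq_abs]
    set m := max p.1 p.2
    have h1 : |1 - G ν m| ≤ 2 := by
      have := abs_G_le hpos hid hmean m
      have := abs_sub (1:ℝ) (G ν m)
      simp only [abs_one] at this
      linarith
    have h2 : |m * F ν m| ≤ |m| := by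
      rw [abs_mul]
      calc |m| * |F ν m| ≤ |m| * 1 :=
            mul_le_mul_of_nonneg_left (abs_F_le m) (abs_nonneg m)
        _ = |m| := mul_one _
    have h3 := abs_max_le p
    calc |(1 - G ν m) + m * F ν m| ≤ |1 - G ν m| + |m * F ν m| := abs_add_le _ _
      _ ≤ 2 + (|p.1| + |p.2|) := by simp only [m] at h2 ⊢; linarith
  have pe : ∀ p : ℝ × ℝ,
      (1 - G ν (max p.1 p.2)) + max p.1 p.2 * F ν (max p.1 p.2)
        ≤ 1 + phi ν p.1 + phi ν p.2 := by
    intro p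
    rw [← psi_eq h0 hid hmean (max p.1 p.2)]
    exact psi_le hpos hid hmean p.1 p.2
  have iphi := integrable_phi hpos hid hmean
  have hbr : Integrable (fun p : ℝ × ℝ => 1 + phi ν p.1 + phi ν p.2) (ν.prod ν) :=
    ((integrable_const 1).add (integrable_comp_fst iphi)).add (integrable_comp_snd iphi)
  have h := integral_mono iM hbr pe
  have hr : ∫ p : ℝ × ℝ, (1 + phi ν p.1 + phi ν p.2) ∂(ν.prod ν)
      = 1 + ∫ p, |p.1 - p.2| ∂(ν.prod ν) := by
    have ib1 : Integrable (fun p : ℝ × ℝ => 1 + phi ν p.1) (ν.prod ν) :=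
      (integrable_const 1).add (integrable_comp_fst iphi)
    rw [integral_add ib1 (integrable_comp_snd iphi),
      integral_add (integrable_const 1) (integrable_comp_fst iphi),
      integral_const, int_comp_fst iphi.aestronglyMeasurable,
      int_comp_snd iphi.aestronglyMeasurable, int_phi hid]
    simp
    ring
  rwa [hr] at h

lemma M_eq (h0 : ∀ c : ℝ, ν {c} = 0) (hpos : ∀ᵐ z ∂ν, 0 ≤ z)
    (hid : Integrable (fun z : ℝ => z) ν) (hmean : ∫ z, z ∂ν = 1) :
    ∫ p, ((1 - G ν (max p.1 p.2)) + max p.1 p.2 * F ν (max p.1 p.2)) ∂(ν.prod ν)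
      = 3 * ∫ z, z * F ν z ^ 2 ∂ν := by
  classical
  have hGme := G_meas hpos hid
  have hmax : Measurable fun p : ℝ × ℝ => max p.1 p.2 := measurable_fst.max measurable_snd
  have hne : ∀ᵐ p ∂(ν.prod ν), p.1 ≠ p.2 := by
    rw [ae_iff]
    simpa using diag_null ν h0
  -- part 1 : ∫ G(max) = 2I
  have i_t1 : Integrable (fun p : ℝ × ℝ => G ν p.1 * (if p.2 < p.1 then (1:ℝ) else 0))
      (ν.prod ν) :=
    bdd_int ν ((hGme.comp measurable_fst).mul (Measurable.ite
      (measurableSet_lt measurable_snd measurable_fst) measurable_const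
        measurable_const)).aestronglyMeasurable 1 (fun p => by
      rw [abs_mul]
      by_cases h : p.2 < p.1 <;> simp [h]
      exact abs_G_le hpos hid hmean _)
  have i_t2 : Integrable (fun p : ℝ × ℝ => G ν p.2 * (if p.1 < p.2 then (1:ℝ) else 0))
      (ν.prod ν) :=
    bdd_int ν ((hGme.comp measurable_snd).mul (Measurable.ite
      (measurableSet_lt measurable_fst measurable_snd) measurable_const
        measurable_const)).aestronglyMeasurable 1 (fun p => by
      rw [abs_mul]
      by_cases h : p.1 < p.2 <;> simp [h]
      exact abs_G_le hpos hid hmean _)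
  have iGmax : Integrable (fun p : ℝ × ℝ => G ν (max p.1 p.2)) (ν.prod ν) :=
    bdd_int ν (hGme.comp hmax).aestronglyMeasurable 1
      (fun p => abs_G_le hpos hid hmean _)
  have hae1 : (fun p : ℝ × ℝ => G ν (max p.1 p.2)) =ᵐ[ν.prod ν]
      (fun p : ℝ × ℝ => G ν p.1 * (if p.2 < p.1 then (1:ℝ) else 0)
        + G ν p.2 * (if p.1 < p.2 then (1:ℝ) else 0)) := by
    filter_upwards [hne] with p hp
    rcases hp.lt_or_gt with h | h
    · rw [max_eq_right h.le]
      simp [h, asymm h]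
    · rw [max_eq_left h.le]
      simp [h, asymm h]
  have e1 : ∫ p : ℝ × ℝ, G ν p.1 * (if p.2 < p.1 then (1:ℝ) else 0) ∂(ν.prod ν)
      = ∫ t, F ν t * G ν t ∂ν := by
    rw [integral_prod _ i_t1]
    refine integral_congr_ae (Eventually.of_forall fun x => ?_)
    show ∫ y, G ν x * (if y < x then (1:ℝ) else 0) ∂ν = F ν x * G ν x
    rw [MeasureTheory.integral_const_mul, int_ite (μ := ν) (p := fun y => y < x)
      measurableSet_Iio, show {y : ℝ | y < x} = Iio x from rfl, ← F_eq_Iio ν h0]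
    ring
  have e2 : ∫ p : ℝ × ℝ, G ν p.2 * (if p.1 < p.2 then (1:ℝ) else 0) ∂(ν.prod ν)
      = ∫ t, F ν t * G ν t ∂ν := by
    rw [integral_prod_symm _ i_t2]
    refine integral_congr_ae (Eventually.of_forall fun y => ?_)
    show ∫ x, G ν y * (if x < y then (1:ℝ) else 0) ∂ν = F ν y * G ν y
    rw [MeasureTheory.integral_const_mul, int_ite (μ := ν) (p := fun x => x < y)
      measurableSet_Iio, show {x : ℝ | x < y} = Iio y from rfl, ← F_eq_Iio ν h0]
    ring
  have A1 : ∫ p : ℝ × ℝ, G ν (max p.1 p.2) ∂(ν.prod ν) = 2 * ∫ t, F ν t * G ν t ∂ν := by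
    rw [integral_congr_ae hae1, integral_add i_t1 i_t2, e1, e2]
    ring
  -- part 2 : ∫ max * F(max) = 2S
  have i_s1 : Integrable (fun p : ℝ × ℝ => p.1 * F ν p.1 * (if p.2 < p.1 then (1:ℝ) else 0))
      (ν.prod ν) := by
    refine Integrable.mono' (integrable_comp_fst hid.abs)
      ((((measurable_fst.mul ((F_meas ν).comp measurable_fst))).mul (Measurable.ite
        (measurableSet_lt measurable_snd measurable_fst) measurable_const
          measurable_const)).aestronglyMeasurable) (Eventually.of_forall fun p => ?_)
    rw [Real.norm_eq_abs, abs_mul, abs_mul]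
    have h1 := abs_F_le (ν := ν) p.1
    have h2 : |if p.2 < p.1 then (1:ℝ) else 0| ≤ 1 := by
      by_cases h : p.2 < p.1 <;> simp [h]
    calc |p.1| * |F ν p.1| * |if p.2 < p.1 then (1:ℝ) else 0| ≤ |p.1| * 1 * 1 := by gcongr
      _ = |p.1| := by ring
  have i_s2 : Integrable (fun p : ℝ × ℝ => p.2 * F ν p.2 * (if p.1 < p.2 then (1:ℝ) else 0))
      (ν.prod ν) := by
    refine Integrable.mono' (integrable_comp_snd hid.abs)
      ((((measurable_snd.mul ((F_meas ν).comp measurable_snd))).mul (Measurable.ite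
        (measurableSet_lt measurable_fst measurable_snd) measurable_const
          measurable_const)).aestronglyMeasurable) (Eventually.of_forall fun p => ?_)
    rw [Real.norm_eq_abs, abs_mul, abs_mul]
    have h1 := abs_F_le (ν := ν) p.2
    have h2 : |if p.1 < p.2 then (1:ℝ) else 0| ≤ 1 := by
      by_cases h : p.1 < p.2 <;> simp [h]
    calc |p.2| * |F ν p.2| * |if p.1 < p.2 then (1:ℝ) else 0| ≤ |p.2| * 1 * 1 := by gcongr
      _ = |p.2| := by ring
  have imaxF : Integrable (fun p : ℝ × ℝ => max p.1 p.2 * F ν (max p.1 p.2)) (ν.prod ν) := by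
    refine Integrable.mono' (integrable_pair_abs hid)
      ((hmax.mul ((F_meas ν).comp hmax)).aestronglyMeasurable)
      (Eventually.of_forall fun p => ?_)
    rw [Real.norm_eq_abs, abs_mul]
    calc |max p.1 p.2| * |F ν (max p.1 p.2)| ≤ |max p.1 p.2| * 1 :=
          mul_le_mul_of_nonneg_left (abs_F_le _) (abs_nonneg _)
      _ = |max p.1 p.2| := mul_one _
      _ ≤ |p.1| + |p.2| := abs_max_le p
  have hae2 : (fun p : ℝ × ℝ => max p.1 p.2 * F ν (max p.1 p.2)) =ᵐ[ν.prod ν]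
      (fun p : ℝ × ℝ => p.1 * F ν p.1 * (if p.2 < p.1 then (1:ℝ) else 0)
        + p.2 * F ν p.2 * (if p.1 < p.2 then (1:ℝ) else 0)) := by
    filter_upwards [hne] with p hp
    rcases hp.lt_or_gt with h | h
    · rw [max_eq_right h.le]
      simp [h, asymm h]
    · rw [max_eq_left h.le]
      simp [h, asymm h]
  have f1 : ∫ p : ℝ × ℝ, p.1 * F ν p.1 * (if p.2 < p.1 then (1:ℝ) else 0) ∂(ν.prod ν)
      = ∫ z, z * F ν z ^ 2 ∂ν := by
    rw [integral_prod _ i_s1]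
    refine integral_congr_ae (Eventually.of_forall fun x => ?_)
    show ∫ y, x * F ν x * (if y < x then (1:ℝ) else 0) ∂ν = x * F ν x ^ 2
    rw [MeasureTheory.integral_const_mul, int_ite (μ := ν) (p := fun y => y < x)
      measurableSet_Iio, show {y : ℝ | y < x} = Iio x from rfl, ← F_eq_Iio ν h0]
    ring
  have f2 : ∫ p : ℝ × ℝ, p.2 * F ν p.2 * (if p.1 < p.2 then (1:ℝ) else 0) ∂(ν.prod ν)
      = ∫ z, z * F ν z ^ 2 ∂ν := by
    rw [integral_prod_symm _ i_s2]
    refine integral_congr_ae (Eventually.of_forall fun y => ?_)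
    show ∫ x, y * F ν y * (if x < y then (1:ℝ) else 0) ∂ν = y * F ν y ^ 2
    rw [MeasureTheory.integral_const_mul, int_ite (μ := ν) (p := fun x => x < y)
      measurableSet_Iio, show {x : ℝ | x < y} = Iio y from rfl, ← F_eq_Iio ν h0]
    ring
  have A2 : ∫ p : ℝ × ℝ, max p.1 p.2 * F ν (max p.1 p.2) ∂(ν.prod ν)
      = 2 * ∫ z, z * F ν z ^ 2 ∂ν := by
    rw [integral_congr_ae hae2, integral_add i_s1 i_s2, f1, f2]
    ring
  -- combine
  have hsplit : ∫ p, ((1 - G ν (max p.1 p.2)) + max p.1 p.2 * F ν (max p.1 p.2)) ∂(ν.prod ν)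
      = (1 - ∫ p : ℝ × ℝ, G ν (max p.1 p.2) ∂(ν.prod ν))
        + ∫ p : ℝ × ℝ, max p.1 p.2 * F ν (max p.1 p.2) ∂(ν.prod ν) := by
    have i1G : Integrable (fun p : ℝ × ℝ => 1 - G ν (max p.1 p.2)) (ν.prod ν) :=
      (integrable_const 1).sub iGmax
    rw [integral_add i1G imaxF, integral_sub (integrable_const 1) iGmax, integral_const]
    simp
  rw [hsplit, A1, A2, I_eq h0 hid hmean]
  ring

lemma main_bounds (h0 : ∀ c : ℝ, ν {c} = 0) (hpos : ∀ᵐ z ∂ν, 0 ≤ z)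
    (hid : Integrable (fun z : ℝ => z) ν) (hmean : ∫ z, z ∂ν = 1) :
    1 / 3 * (1 - (∫ p, |p.1 - p.2| ∂(ν.prod ν)) / 2) ≤ ∫ t, F ν t * G ν t ∂ν ∧
      (∫ t, F ν t * G ν t ∂ν) ≤ 1 / 3 := by
  have hS1 := S_ge h0 hid hmean
  have hS2 : 3 * ∫ z, z * F ν z ^ 2 ∂ν ≤ 1 + ∫ p, |p.1 - p.2| ∂(ν.prod ν) := by
    rw [← M_eq h0 hpos hid hmean]
    exact M_le h0 hpos hid hmean
  have hI := I_eq h0 hid hmean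
  constructor <;> rw [hI] <;> linarith

end S7

open MeasureTheory ProbabilityTheory

/-- with `L := dP_Y/dP_X` having atomless law under both `P_X` and `P_Y`,
CDFs `F_X`, `F_Y` of `L(Z)` under `P_X`, `P_Y`, and `δ := E|L(Z_X) − L(Z'_X)|`
for independent `Z_X, Z'_X ~ P_X`, one has, for `Z_X ~ P_X`,
`(1/3)·(1 − δ/2) ≤ E[F_X(L(Z_X))·F_Y(L(Z_X))] ≤ 1/3`. -/
theorem statement7 {E : Type*} [MeasurableSpace E] (PX PY : Measure E)
    [IsProbabilityMeasure PX] [IsProbabilityMeasure PY] (hac : PY ≪ PX)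
    (L : E → ℝ) (hL : L = fun z => (PY.rnDeriv PX z).toReal)
    (hatomlessX : ∀ c : ℝ, PX {z | L z = c} = 0)
    (hatomlessY : ∀ c : ℝ, PY {z | L z = c} = 0)
    (FX FY : ℝ → ℝ)
    (hFX : FX = fun t => (PX {z | L z ≤ t}).toReal)
    (hFY : FY = fun t => (PY {z | L z ≤ t}).toReal)
    (δ : ℝ) (hδ : δ = ∫ p, |L p.1 - L p.2| ∂(PX.prod PX)) :
    (1 / 3) * (1 - δ / 2) ≤ ∫ z, FX (L z) * FY (L z) ∂PX ∧
      (∫ z, FX (L z) * FY (L z) ∂PX) ≤ 1 / 3 := by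
  classical
  have hLmeas : Measurable L := by
    rw [hL]; exact (Measure.measurable_rnDeriv PY PX).ennreal_toReal
  have hLnn : ∀ z, 0 ≤ L z := by
    rw [hL]; exact fun z => ENNReal.toReal_nonneg
  set ν : Measure ℝ := PX.map L with hν
  haveI : IsProbabilityMeasure ν := Measure.isProbabilityMeasure_map hLmeas.aemeasurable
  have h0 : ∀ c : ℝ, ν {c} = 0 := by
    intro c
    rw [hν, Measure.map_apply hLmeas (measurableSet_singleton c)]
    exact hatomlessX c
  have hpos : ∀ᵐ z ∂ν, 0 ≤ z := by
    rw [hν]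
    exact (ae_map_iff hLmeas.aemeasurable
      (measurableSet_le measurable_const measurable_id)).2
      (Filter.Eventually.of_forall fun z => hLnn z)
  have hint : Integrable L PX := by
    rw [hL]; exact Measure.integrable_toReal_rnDeriv
  have hid : Integrable (fun z : ℝ => z) ν :=
    (integrable_map_measure aestronglyMeasurable_id hLmeas.aemeasurable).2 hint
  have hmean : ∫ z, z ∂ν = 1 := by
    rw [hν, integral_map (f := fun x : ℝ => x) hLmeas.aemeasurable aestronglyMeasurable_id]
    show ∫ x, L x ∂PX = 1
    rw [hL, Measure.integral_toReal_rnDeriv hac, probReal_univ]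
  have hFXF : FX = S7.F ν := by
    funext t
    rw [hFX]
    show (PX {z | L z ≤ t}).toReal = (ν (Set.Iic t)).toReal
    rw [hν, Measure.map_apply hLmeas measurableSet_Iic]
    rfl
  have hFYG : FY = S7.G ν := by
    funext t
    rw [hFY]
    show (PY {z | L z ≤ t}).toReal = S7.G ν t
    have h1 : (PY {z | L z ≤ t}).toReal = ∫ z in {z | L z ≤ t}, L z ∂PX := by
      rw [hL]
      exact (Measure.setIntegral_toReal_rnDeriv hac _).symm
    have h2 : ∫ x in Set.Iic t, x ∂ν = ∫ z in {z | L z ≤ t}, L z ∂PX := by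
      rw [hν, setIntegral_map (f := fun x : ℝ => x) measurableSet_Iic aestronglyMeasurable_id hLmeas.aemeasurable]
      rfl
    have h3 : ∫ x in Set.Iic t, x ∂ν = S7.G ν t := by
      show _ = ∫ z, z * (if z ≤ t then (1:ℝ) else 0) ∂ν
      rw [← integral_indicator measurableSet_Iic]
      refine integral_congr_ae (Filter.Eventually.of_forall fun x => ?_)
      by_cases h : x ≤ t <;> simp [Set.indicator_apply, Set.mem_Iic, h]
    rw [h1, ← h2, h3]
  have htarget : ∫ z, FX (L z) * FY (L z) ∂PX = ∫ t, S7.F ν t * S7.G ν t ∂ν := by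
    rw [hFXF, hFYG, hν, integral_map (f := fun t => S7.F ν t * S7.G ν t) hLmeas.aemeasurable
      (((S7.F_meas ν).mul (S7.G_meas hpos hid)).aestronglyMeasurable)]
  have hδν : δ = ∫ p, |p.1 - p.2| ∂(ν.prod ν) := by
    rw [hδ, hν, Measure.map_prod_map PX PX hLmeas hLmeas,
      integral_map (f := fun p : ℝ × ℝ => |p.1 - p.2|) (hLmeas.prodMap hLmeas).aemeasurable
        ((measurable_fst.sub measurable_snd).abs.aestronglyMeasurable)]
    rfl
  have hmain := S7.main_bounds h0 hpos hid hmean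
  rw [htarget, hδν]
  exact hmain
end

section
/- Let P_X and P_Y be probability measures on a common measurable space (E, ℰ) with P_Y absolutely continuous with respect to P_X, let L := dP_Y/dP_X, and suppose L(Z) has a continuous (atomless) distribution both when Z ~ P_X and when Z ~ P_Y. Let F_X, F_Y be the cumulative distribution functions of L(Z) under P_X and P_Y respectively, δ := E|L(Z_X) − L(Z'_X)| for independent Z_X, Z'_X ~ P_X, and μ := P(L(Z_X) < L(Z_Y)) for independent Z_X ~ P_X, Z_Y ~ P_Y. Define, for Z_X ~ P_X, the random variable W := F_Y(L(Z_X)) − (1 − μ) + F_X(L(Z_X)) − 1/2. Then E[W] = 0 and there exists a universal constant C > 0 such that | Var(W) − 1/3 | ≤ C·δ; in particular Var(W) → 1/3 as δ → 0. -/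
set_option linter.unusedSectionVars false
set_option linter.unusedVariables false

open MeasureTheory ProbabilityTheory Set ENNReal

namespace Stmt8Aux

variable (ν ρ : Measure ℝ) [IsProbabilityMeasure ν] [IsProbabilityMeasure ρ]

lemma meas_cdf : Measurable (fun t => ν (Iic t)) :=
  Monotone.measurable (fun a b hab => measure_mono (Iic_subset_Iic.2 hab))

lemma meas_cdfo : Measurable (fun t => ν (Iio t)) :=
  Monotone.measurable (fun a b hab => measure_mono (Iio_subset_Iio hab))

lemma meas_tail : Measurable (fun t => ν (Ioi t)) :=
  Antitone.measurable (fun a b hab => measure_mono (Ioi_subset_Ioi hab))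

lemma iic_eq_iio (hν : ∀ c : ℝ, ν {c} = 0) (t : ℝ) : ν (Iic t) = ν (Iio t) := by
  rw [← Set.Iic_diff_right (a := t)]
  exact (measure_diff_null (hν t)).symm

lemma tail_eq (t : ℝ) : ν (Ioi t) = 1 - ν (Iic t) := by
  rw [← compl_Iic, measure_compl measurableSet_Iic (measure_ne_top _ _), measure_univ]

lemma iic_eq (t : ℝ) : ν (Iic t) = 1 - ν (Ioi t) := by
  rw [← compl_Ioi, measure_compl measurableSet_Ioi (measure_ne_top _ _), measure_univ]

lemma lint_one_sub {f : ℝ → ℝ≥0∞} (hf : Measurable f) (hle : ∀ t, f t ≤ 1) :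
    ∫⁻ t, (1 - f t) ∂ν = 1 - ∫⁻ t, f t ∂ν := by
  have hfin : ∫⁻ t, f t ∂ν ≠ ⊤ := by
    refine ne_top_of_le_ne_top (by simp : (∫⁻ _ : ℝ, (1 : ℝ≥0∞) ∂ν) ≠ ⊤) (lintegral_mono hle)
  have h := lintegral_sub hf hfin (ae_of_all _ hle)
  simpa using h

lemma lint_iic_eq_one_sub_tail :
    ∫⁻ t, ρ (Iic t) ∂ν = 1 - ∫⁻ t, ρ (Ioi t) ∂ν := by
  rw [show (fun t => ρ (Iic t)) = fun t => 1 - ρ (Ioi t) from funext (iic_eq ρ)]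
  exact lint_one_sub ν (Stmt8Aux.meas_tail ρ) (fun t => prob_le_one)

lemma J_half (hν : ∀ c : ℝ, ν {c} = 0) : ∫⁻ t, ν (Iic t) ∂ν = 1 / 2 := by
  set f : ℝ → ℝ → ℝ≥0∞ := fun t s => {p : ℝ × ℝ | p.2 ≤ p.1}.indicator 1 (t, s) with hf
  have hfm : AEMeasurable (Function.uncurry f) (ν.prod ν) := by
    have : Function.uncurry f = {p : ℝ × ℝ | p.2 ≤ p.1}.indicator 1 := rfl
    rw [this]
    exact ((measurable_const.indicator (measurableSet_le measurable_snd measurable_fst))).aemeasurable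
  have h1 : ∀ t, ∫⁻ s, f t s ∂ν = ν (Iic t) := by
    intro t
    have : (fun s => f t s) = (Iic t).indicator 1 := by
      funext s; by_cases h : s ≤ t <;> simp [hf, Set.indicator, h]
    rw [this, lintegral_indicator_one measurableSet_Iic]
  have h2 : ∀ s, ∫⁻ t, f t s ∂ν = ν (Ici s) := by
    intro s
    have : (fun t => f t s) = (Ici s).indicator 1 := by
      funext t; by_cases h : s ≤ t <;> simp [hf, Set.indicator, h]
    rw [this, lintegral_indicator_one measurableSet_Ici]
  have hswap := lintegral_lintegral_swap hfm
  have hJ : ∫⁻ t, ν (Iic t) ∂ν = ∫⁻ s, ν (Ici s) ∂ν := by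
    calc ∫⁻ t, ν (Iic t) ∂ν = ∫⁻ t, ∫⁻ s, f t s ∂ν ∂ν := by simp_rw [h1]
    _ = ∫⁻ s, ∫⁻ t, f t s ∂ν ∂ν := hswap
    _ = ∫⁻ s, ν (Ici s) ∂ν := by simp_rw [h2]
  have hIci : ∀ s : ℝ, ν (Ici s) = 1 - ν (Iic s) := by
    intro s
    rw [← compl_Iio, measure_compl measurableSet_Iio (measure_ne_top _ _), measure_univ,
      iic_eq_iio ν hν]
  have hkey : ∫⁻ t, ν (Iic t) ∂ν = 1 - ∫⁻ t, ν (Iic t) ∂ν := by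
    calc ∫⁻ t, ν (Iic t) ∂ν = ∫⁻ s, (1 - ν (Iic s)) ∂ν := by rw [hJ]; simp_rw [hIci]
    _ = 1 - ∫⁻ t, ν (Iic t) ∂ν := lint_one_sub ν (Stmt8Aux.meas_cdf ν) (fun t => prob_le_one)
  set J := ∫⁻ t, ν (Iic t) ∂ν with hJdef
  have hJle : J ≤ 1 := by
    calc J ≤ ∫⁻ _, 1 ∂ν := lintegral_mono (fun t => prob_le_one)
    _ = 1 := by simp
  have h2J : 2 * J = 1 := by
    rw [two_mul]
    nth_rewrite 1 [hkey]
    exact tsub_add_cancel_of_le hJle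
  rw [ENNReal.eq_div_iff (by norm_num) (by norm_num)]
  exact h2J

end Stmt8Aux

namespace Stmt8Aux2

variable (ν : Measure ℝ) [IsProbabilityMeasure ν]

lemma meas_cdf : Measurable (fun t => ν (Iic t)) :=
  Monotone.measurable (fun a b hab => measure_mono (Iic_subset_Iic.2 hab))

lemma meas_cdfo : Measurable (fun t => ν (Iio t)) :=
  Monotone.measurable (fun a b hab => measure_mono (Iio_subset_Iio hab))

lemma iic_eq_iio (hν : ∀ c : ℝ, ν {c} = 0) (t : ℝ) : ν (Iic t) = ν (Iio t) := by
  rw [← Set.Iic_diff_right (a := t)]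
  exact (measure_diff_null (hν t)).symm

lemma tail_eq (t : ℝ) : ν (Ioi t) = 1 - ν (Iic t) := by
  rw [← compl_Iic, measure_compl measurableSet_Iic (measure_ne_top _ _), measure_univ]

lemma sq_cdf_eq (hν : ∀ c : ℝ, ν {c} = 0) (t : ℝ) :
    ν (Iio t) * ν (Iio t) = 2 * ∫⁻ s, (Iio t).indicator (fun s => ν (Iio s)) s ∂ν := by
  have hS1 : MeasurableSet {p : ℝ × ℝ | p.2 < p.1 ∧ p.1 < t} :=
    (measurableSet_lt measurable_snd measurable_fst).inter
      (measurableSet_lt measurable_fst measurable_const)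
  have hS2 : MeasurableSet {p : ℝ × ℝ | p.1 < p.2 ∧ p.2 < t} :=
    (measurableSet_lt measurable_fst measurable_snd).inter
      (measurableSet_lt measurable_snd measurable_const)
  have hS1val : (ν.prod ν) {p : ℝ × ℝ | p.2 < p.1 ∧ p.1 < t}
      = ∫⁻ s, (Iio t).indicator (fun s => ν (Iio s)) s ∂ν := by
    rw [Measure.prod_apply hS1]
    congr 1
    funext x
    by_cases hx : x < t
    · have h1 : Prod.mk x ⁻¹' {p : ℝ × ℝ | p.2 < p.1 ∧ p.1 < t} = Iio x := by
        ext y; simp [hx]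
      simp [h1, Set.indicator, hx]
    · have h1 : Prod.mk x ⁻¹' {p : ℝ × ℝ | p.2 < p.1 ∧ p.1 < t} = ∅ := by
        ext y; simp [hx]
      simp [h1, Set.indicator, hx]
  have hS2val : (ν.prod ν) {p : ℝ × ℝ | p.1 < p.2 ∧ p.2 < t}
      = (ν.prod ν) {p : ℝ × ℝ | p.2 < p.1 ∧ p.1 < t} := by
    have hpre : Prod.swap ⁻¹' {p : ℝ × ℝ | p.2 < p.1 ∧ p.1 < t}
        = {p : ℝ × ℝ | p.1 < p.2 ∧ p.2 < t} := by
      ext p; simp [Set.mem_setOf_eq]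
    rw [← hpre]
    exact (Measure.measurePreserving_swap (μ := ν) (ν := ν)).measure_preimage hS1.nullMeasurableSet
  have hdiag : (ν.prod ν) {p : ℝ × ℝ | p.1 = p.2 ∧ p.1 < t} = 0 := by
    have hm : MeasurableSet {p : ℝ × ℝ | p.1 = p.2 ∧ p.1 < t} :=
      (measurableSet_eq_fun measurable_fst measurable_snd).inter
        (measurableSet_lt measurable_fst measurable_const)
    rw [Measure.prod_apply hm]
    have hz : ∀ x : ℝ, ν (Prod.mk x ⁻¹' {p : ℝ × ℝ | p.1 = p.2 ∧ p.1 < t}) = 0 := by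
      intro x
      refine measure_mono_null ?_ (hν x)
      intro y hy
      simp only [Set.mem_preimage, Set.mem_setOf_eq] at hy
      simp [hy.1.symm]
    rw [lintegral_congr hz, lintegral_zero]
  have hunion : (Iio t) ×ˢ (Iio t)
      = ({p : ℝ × ℝ | p.2 < p.1 ∧ p.1 < t} ∪ {p : ℝ × ℝ | p.1 < p.2 ∧ p.2 < t})
        ∪ {p : ℝ × ℝ | p.1 = p.2 ∧ p.1 < t} := by
    ext p
    simp only [Set.mem_prod, mem_Iio, Set.mem_union, Set.mem_setOf_eq]
    constructor
    · rintro ⟨h1, h2⟩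
      rcases lt_trichotomy p.1 p.2 with h | h | h
      · exact Or.inl (Or.inr ⟨h, h2⟩)
      · exact Or.inr ⟨h, h1⟩
      · exact Or.inl (Or.inl ⟨h, h1⟩)
    · rintro ((⟨h1, h2⟩ | ⟨h1, h2⟩) | ⟨h1, h2⟩)
      · exact ⟨h2, lt_trans h1 h2⟩
      · exact ⟨lt_trans h1 h2, h2⟩
      · exact ⟨h2, h1 ▸ h2⟩
  have hdisj : Disjoint {p : ℝ × ℝ | p.2 < p.1 ∧ p.1 < t} {p : ℝ × ℝ | p.1 < p.2 ∧ p.2 < t} := by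
    rw [Set.disjoint_left]
    rintro p ⟨h1, _⟩ ⟨h2, _⟩
    exact absurd (lt_trans h1 h2) (lt_irrefl _)
  calc ν (Iio t) * ν (Iio t) = (ν.prod ν) ((Iio t) ×ˢ (Iio t)) := (Measure.prod_prod _ _).symm
  _ = (ν.prod ν) ({p : ℝ × ℝ | p.2 < p.1 ∧ p.1 < t} ∪ {p : ℝ × ℝ | p.1 < p.2 ∧ p.2 < t}) := by
      rw [hunion]
      refine le_antisymm ?_ (measure_mono Set.subset_union_left)
      calc (ν.prod ν) (({p : ℝ × ℝ | p.2 < p.1 ∧ p.1 < t} ∪ {p : ℝ × ℝ | p.1 < p.2 ∧ p.2 < t})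
            ∪ {p : ℝ × ℝ | p.1 = p.2 ∧ p.1 < t})
          ≤ (ν.prod ν) ({p : ℝ × ℝ | p.2 < p.1 ∧ p.1 < t} ∪ {p : ℝ × ℝ | p.1 < p.2 ∧ p.2 < t})
            + (ν.prod ν) {p : ℝ × ℝ | p.1 = p.2 ∧ p.1 < t} := measure_union_le _ _
      _ = (ν.prod ν) ({p : ℝ × ℝ | p.2 < p.1 ∧ p.1 < t} ∪ {p : ℝ × ℝ | p.1 < p.2 ∧ p.2 < t}) := by
            rw [hdiag, add_zero]
  _ = (ν.prod ν) {p : ℝ × ℝ | p.2 < p.1 ∧ p.1 < t}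
      + (ν.prod ν) {p : ℝ × ℝ | p.1 < p.2 ∧ p.2 < t} := measure_union hdisj hS2
  _ = 2 * ∫⁻ s, (Iio t).indicator (fun s => ν (Iio s)) s ∂ν := by
      rw [hS2val, hS1val, two_mul]

lemma I_third (hν : ∀ c : ℝ, ν {c} = 0) :
    ∫⁻ t, ν (Iic t) * ν (Iic t) ∂ν = 1 / 3 := by
  have hJ : ∫⁻ t, ν (Iic t) ∂ν = 1 / 2 := Stmt8Aux.J_half ν hν
  set f2 : ℝ → ℝ → ℝ≥0∞ :=
    fun t s => {p : ℝ × ℝ | p.2 < p.1}.indicator (fun p => ν (Iio p.2)) (t, s) with hf2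
  have hf2m : Measurable (Function.uncurry f2) := by
    have : Function.uncurry f2 = {p : ℝ × ℝ | p.2 < p.1}.indicator (fun p => ν (Iio p.2)) := rfl
    rw [this]
    exact ((meas_cdfo ν).comp measurable_snd).indicator
      (measurableSet_lt measurable_snd measurable_fst)
  have hinner1 : ∀ t, ∫⁻ s, f2 t s ∂ν = ∫⁻ s, (Iio t).indicator (fun s => ν (Iio s)) s ∂ν := by
    intro t
    refine lintegral_congr (fun s => ?_)
    by_cases h : s < t <;> simp [hf2, Set.indicator, h]
  have hinner2 : ∀ s, ∫⁻ t, f2 t s ∂ν = ν (Iic s) * (1 - ν (Iic s)) := by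
    intro s
    have h1 : (fun t => f2 t s) = (Ioi s).indicator (fun _ => ν (Iio s)) := by
      funext t
      by_cases h : s < t <;> simp [hf2, Set.indicator, h]
    rw [h1, lintegral_indicator_const measurableSet_Ioi, ← iic_eq_iio ν hν, tail_eq ν]
  have hptwise : ∀ t, ν (Iic t) * ν (Iic t) = 2 * ∫⁻ s, f2 t s ∂ν := by
    intro t
    rw [hinner1, iic_eq_iio ν hν, sq_cdf_eq ν hν]
  have hCmeas : Measurable (fun t => ∫⁻ s, f2 t s ∂ν) := hf2m.lintegral_prod_right'
  set K := ∫⁻ s, ν (Iic s) * (1 - ν (Iic s)) ∂ν with hKdef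
  set I := ∫⁻ t, ν (Iic t) * ν (Iic t) ∂ν with hIdef
  have hI2K : I = 2 * K := by
    calc I = ∫⁻ t, 2 * ∫⁻ s, f2 t s ∂ν ∂ν := by rw [hIdef]; exact lintegral_congr hptwise
    _ = 2 * ∫⁻ t, ∫⁻ s, f2 t s ∂ν ∂ν := lintegral_const_mul 2 hCmeas
    _ = 2 * ∫⁻ s, ∫⁻ t, f2 t s ∂ν ∂ν := by rw [lintegral_lintegral_swap hf2m.aemeasurable]
    _ = 2 * K := by rw [hKdef]; congr 1; exact lintegral_congr hinner2
  have hsplit : (1 : ℝ≥0∞) / 2 = I + K := by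
    rw [← hJ, hIdef, hKdef, ← lintegral_add_left (f := fun t => ν (Iic t) * ν (Iic t)) ((Stmt8Aux.meas_cdf ν).mul (Stmt8Aux.meas_cdf ν))]
    congr 1
    funext t
    rw [← mul_add, add_tsub_cancel_of_le prob_le_one, mul_one]
  have h6K : 6 * K = 1 := by
    have h3K : 3 * K = 1 / 2 := by
      rw [hsplit, hI2K]; ring
    calc (6 : ℝ≥0∞) * K = 2 * (3 * K) := by ring
    _ = 2 * (1 / 2) := by rw [h3K]
    _ = 1 := by
        rw [one_div]
        exact ENNReal.mul_inv_cancel (by norm_num) (by norm_num)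
  have h3I : 3 * I = 1 := by
    calc (3 : ℝ≥0∞) * I = 6 * K := by rw [hI2K]; ring
    _ = 1 := h6K
  rw [ENNReal.eq_div_iff (by norm_num) (by norm_num)]
  exact h3I

end Stmt8Aux2


namespace Stmt8Aux

lemma integrable_of_bdd {α : Type*} [MeasurableSpace α] {P : Measure α} [IsFiniteMeasure P]
    {f : α → ℝ} {c : ℝ} (hm : AEStronglyMeasurable f P) (hb : ∀ x, |f x| ≤ c) :
    Integrable f P :=
  Integrable.mono' (integrable_const c) hm (ae_of_all _ (fun x => by
    simpa [Real.norm_eq_abs] using hb x))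

end Stmt8Aux

open Stmt8Aux Stmt8Aux2 in
/-- with `L := dP_Y/dP_X` having atomless law under `P_X` and `P_Y`,
CDFs `F_X`, `F_Y`, `δ := E|L(Z_X) − L(Z'_X)|`, `μ := P(L(Z_X) < L(Z_Y))`, and for
`Z_X ~ P_X` the random variable `W := F_Y(L(Z_X)) − (1 − μ) + F_X(L(Z_X)) − 1/2`:
then `E[W] = 0` and there is a universal constant `C > 0` with `|Var(W) − 1/3| ≤ C·δ`. -/
theorem statement8 :
    ∃ C : ℝ, 0 < C ∧
      ∀ (E : Type) [MeasurableSpace E] (PX PY : Measure E)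
        [IsProbabilityMeasure PX] [IsProbabilityMeasure PY],
        PY ≪ PX →
        ∀ (L : E → ℝ), L = (fun z => (PY.rnDeriv PX z).toReal) →
        (∀ c : ℝ, PX {z | L z = c} = 0) →
        (∀ c : ℝ, PY {z | L z = c} = 0) →
        ∀ (FX FY : ℝ → ℝ),
          FX = (fun t => (PX {z | L z ≤ t}).toReal) →
          FY = (fun t => (PY {z | L z ≤ t}).toReal) →
        ∀ (δ : ℝ), δ = ∫ p, |L p.1 - L p.2| ∂(PX.prod PX) →
        ∀ (μ : ℝ), μ = ((PX.prod PY) {p | L p.1 < L p.2}).toReal →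
        ∀ (W : E → ℝ), W = (fun z => FY (L z) - (1 - μ) + FX (L z) - 1 / 2) →
          (∫ z, W z ∂PX) = 0 ∧ |variance W PX - 1 / 3| ≤ C * δ := by
  refine ⟨12, by norm_num, ?_⟩
  intro E _ PX PY _ _ habs L hLdef hAX hAY FX FY hFX hFY δ hδ μ hμ W hW
  -- basic facts about L
  have hL : Measurable L := by
    rw [hLdef]; exact (Measure.measurable_rnDeriv PY PX).ennreal_toReal
  have hLnn : ∀ z, 0 ≤ L z := by
    rw [hLdef]; intro z; exact ENNReal.toReal_nonneg
  have hLint : Integrable L PX := by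
    rw [hLdef]; exact Measure.integrable_toReal_rnDeriv
  have hLmean : ∫ z, L z ∂PX = 1 := by
    rw [hLdef, Measure.integral_toReal_rnDeriv habs]; simp
  -- pushforward measures
  set νX := PX.map L with hνX
  set νY := PY.map L with hνY
  haveI : IsProbabilityMeasure νX := Measure.isProbabilityMeasure_map hL.aemeasurable
  haveI : IsProbabilityMeasure νY := Measure.isProbabilityMeasure_map hL.aemeasurable
  have hatomX : ∀ c : ℝ, νX {c} = 0 := by
    intro c
    rw [hνX, Measure.map_apply hL (measurableSet_singleton c)]
    have : L ⁻¹' {c} = {z | L z = c} := by ext z; simp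
    rw [this]; exact hAX c
  have hPXmap : ∀ t, PX {z | L z ≤ t} = νX (Iic t) := by
    intro t
    rw [hνX, Measure.map_apply hL measurableSet_Iic]
    rfl
  have hPYmap : ∀ t, PY {z | L z ≤ t} = νY (Iic t) := by
    intro t
    rw [hνY, Measure.map_apply hL measurableSet_Iic]
    rfl
  have hFXg : FX = fun t => (νX (Iic t)).toReal := by
    rw [hFX]; funext t; rw [hPXmap]
  have hFYg : FY = fun t => (νY (Iic t)).toReal := by
    rw [hFY]; funext t; rw [hPYmap]
  have hFXmeas : Measurable FX := by
    rw [hFXg]; exact (Stmt8Aux.meas_cdf νX).ennreal_toReal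
  have hFYmeas : Measurable FY := by
    rw [hFYg]; exact (Stmt8Aux.meas_cdf νY).ennreal_toReal
  have hFX01 : ∀ t, 0 ≤ FX t ∧ FX t ≤ 1 := by
    intro t
    rw [hFXg]
    refine ⟨ENNReal.toReal_nonneg, ?_⟩
    simpa using ENNReal.toReal_mono one_ne_top (prob_le_one (μ := νX) (s := Iic t))
  have hFY01 : ∀ t, 0 ≤ FY t ∧ FY t ≤ 1 := by
    intro t
    rw [hFYg]
    refine ⟨ENNReal.toReal_nonneg, ?_⟩
    simpa using ENNReal.toReal_mono one_ne_top (prob_le_one (μ := νY) (s := Iic t))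
  -- U and V
  set U : E → ℝ := fun z => FX (L z) with hU
  set V : E → ℝ := fun z => FY (L z) with hV
  have hUmeas : Measurable U := hFXmeas.comp hL
  have hVmeas : Measurable V := hFYmeas.comp hL
  have hUb : ∀ z, |U z| ≤ 1 := fun z => abs_le.2 ⟨by linarith [(hFX01 (L z)).1], (hFX01 (L z)).2⟩
  have hVb : ∀ z, |V z| ≤ 1 := fun z => abs_le.2 ⟨by linarith [(hFY01 (L z)).1], (hFY01 (L z)).2⟩
  have hUint : Integrable U PX := integrable_of_bdd hUmeas.aestronglyMeasurable hUb
  have hVint : Integrable V PX := integrable_of_bdd hVmeas.aestronglyMeasurable hVb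
  have hU2int : Integrable (fun z => U z ^ 2) PX :=
    integrable_of_bdd ((hUmeas.pow_const 2).aestronglyMeasurable)
      (fun z => by
        have := hUb z
        rw [abs_le] at this ⊢
        constructor <;> nlinarith [this.1, this.2])
  -- E[U] = 1/2
  have hEU : ∫ z, U z ∂PX = 1 / 2 := by
    calc ∫ z, U z ∂PX = ∫ t, FX t ∂νX :=
          (integral_map hL.aemeasurable hFXmeas.aestronglyMeasurable).symm
    _ = (∫⁻ t, νX (Iic t) ∂νX).toReal := by
          rw [hFXg]
          exact integral_toReal (Stmt8Aux.meas_cdf νX).aemeasurable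
            (ae_of_all _ (fun t => measure_lt_top _ _))
    _ = 1 / 2 := by rw [J_half νX hatomX]; simp [ENNReal.toReal_div]
  -- E[U^2] = 1/3
  have hEU2 : ∫ z, U z ^ 2 ∂PX = 1 / 3 := by
    calc ∫ z, U z ^ 2 ∂PX = ∫ t, FX t ^ 2 ∂νX :=
          (integral_map hL.aemeasurable (hFXmeas.pow_const 2).aestronglyMeasurable).symm
    _ = ∫ t, (νX (Iic t) * νX (Iic t)).toReal ∂νX := by
          refine integral_congr_ae (ae_of_all _ (fun t => ?_))
          rw [hFXg]
          simp [pow_two, ENNReal.toReal_mul]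
    _ = (∫⁻ t, νX (Iic t) * νX (Iic t) ∂νX).toReal := by
          exact integral_toReal ((Stmt8Aux.meas_cdf νX).mul (Stmt8Aux.meas_cdf νX)).aemeasurable
            (ae_of_all _ (fun t => ENNReal.mul_lt_top (measure_lt_top _ _) (measure_lt_top _ _)))
    _ = 1 / 3 := by rw [I_third νX hatomX]; simp [ENNReal.toReal_div]
  -- μ facts
  set μenn := (PX.prod PY) {p : E × E | L p.1 < L p.2} with hμenn
  have hμenn_le : μenn ≤ 1 := prob_le_one
  have hμ01 : 0 ≤ μ ∧ μ ≤ 1 := by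
    constructor
    · rw [hμ]; exact ENNReal.toReal_nonneg
    · rw [hμ]; simpa using ENNReal.toReal_mono one_ne_top hμenn_le
  have hsetlt : MeasurableSet {p : E × E | L p.1 < L p.2} :=
    measurableSet_lt (hL.comp measurable_fst) (hL.comp measurable_snd)
  have htail : ∫⁻ t, νY (Ioi t) ∂νX = μenn := by
    have h1 : ∫⁻ t, νY (Ioi t) ∂νX = ∫⁻ z, νY (Ioi (L z)) ∂PX := by
      rw [hνX]; exact lintegral_map (Stmt8Aux.meas_tail νY) hL
    have h2 : ∀ z, νY (Ioi (L z)) = PY (Prod.mk z ⁻¹' {p : E × E | L p.1 < L p.2}) := by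
      intro z
      rw [hνY, Measure.map_apply hL measurableSet_Ioi]
      congr 1
    rw [h1, lintegral_congr h2, hμenn, Measure.prod_apply hsetlt]
  -- E[V] = 1 - μ
  have hEV : ∫ z, V z ∂PX = 1 - μ := by
    calc ∫ z, V z ∂PX = ∫ t, FY t ∂νX :=
          (integral_map hL.aemeasurable hFYmeas.aestronglyMeasurable).symm
    _ = (∫⁻ t, νY (Iic t) ∂νX).toReal := by
          rw [hFYg]
          exact integral_toReal (Stmt8Aux.meas_cdf νY).aemeasurable
            (ae_of_all _ (fun t => measure_lt_top _ _))
    _ = ((1 : ℝ≥0∞) - μenn).toReal := by rw [lint_iic_eq_one_sub_tail νX νY, htail]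
    _ = 1 - μ := by
          rw [ENNReal.toReal_sub_of_le hμenn_le one_ne_top, hμ]
          simp
  -- eta
  set η := ∫ z, |L z - 1| ∂PX with hη
  have hLsub1_int : Integrable (fun z => |L z - 1|) PX := (hLint.sub (integrable_const 1)).abs
  have hηnn : 0 ≤ η := integral_nonneg (fun z => abs_nonneg _)
  have hη2 : η ≤ 2 := by
    have hpt : ∀ z, |L z - 1| ≤ L z + 1 := by
      intro z
      rw [abs_le]
      constructor <;> nlinarith [hLnn z]
    calc η ≤ ∫ z, (L z + 1) ∂PX :=
          integral_mono hLsub1_int (hLint.add (integrable_const 1)) hpt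
    _ = 2 := by
          rw [integral_add hLint (integrable_const 1), hLmean]
          simp
          norm_num
  -- eta ≤ delta
  have hprod_int : Integrable (fun p : E × E => |L p.1 - L p.2|) (PX.prod PX) := by
    have h1 : Integrable (fun p : E × E => L p.1) (PX.prod PX) := by
      simpa using hLint.mul_prod (integrable_const (1 : ℝ))
    have h2 : Integrable (fun p : E × E => L p.2) (PX.prod PX) := by
      simpa using (integrable_const (1 : ℝ)).mul_prod hLint
    exact (h1.sub h2).abs
  have hηδ : η ≤ δ := by
    have hpt : ∀ z, |L z - 1| ≤ ∫ w, |L z - L w| ∂PX := by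
      intro z
      have h0 : ∫ w, (L z - L w) ∂PX = L z - 1 := by
        rw [integral_sub (integrable_const _) hLint, integral_const, hLmean]
        simp
      calc |L z - 1| = |∫ w, (L z - L w) ∂PX| := by rw [h0]
      _ ≤ ∫ w, |L z - L w| ∂PX := by
          simpa [Real.norm_eq_abs] using
            norm_integral_le_integral_norm (μ := PX) (fun w => L z - L w)
    have hRHSint : Integrable (fun z => ∫ w, |L z - L w| ∂PX) PX := by
      have := hprod_int.integral_prod_left
      simpa using this
    calc η ≤ ∫ z, (∫ w, |L z - L w| ∂PX) ∂PX := integral_mono hLsub1_int hRHSint hpt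
    _ = δ := by rw [hδ, integral_prod _ hprod_int]
  have hδnn : 0 ≤ η := hηnn
  -- |FY t - FX t| ≤ η
  have hkeyY : ∀ s : Set E, (PY s).toReal = ∫ z in s, L z ∂PX := by
    intro s
    rw [hLdef]
    exact (Measure.setIntegral_toReal_rnDeriv habs s).symm
  have hFdiff : ∀ t, |FY t - FX t| ≤ η := by
    intro t
    have hFYi : FY t = ∫ z in {z | L z ≤ t}, L z ∂PX := by
      rw [hFY]
      exact hkeyY _
    have hFXi : FX t = ∫ z in {z | L z ≤ t}, (1 : ℝ) ∂PX := by
      rw [hFX]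
      simp [setIntegral_const]
      rfl
    have hdiff : FY t - FX t = ∫ z in {z | L z ≤ t}, (L z - 1) ∂PX := by
      rw [hFYi, hFXi, ← integral_sub hLint.integrableOn (integrable_const 1).integrableOn]
    rw [hdiff]
    calc |∫ z in {z | L z ≤ t}, (L z - 1) ∂PX| ≤ ∫ z in {z | L z ≤ t}, |L z - 1| ∂PX := by
          simpa [Real.norm_eq_abs] using
            norm_integral_le_integral_norm (μ := PX.restrict {z | L z ≤ t}) (fun z => L z - 1)
    _ ≤ η := setIntegral_le_integral hLsub1_int (ae_of_all _ (fun z => abs_nonneg _))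
  have hVU : ∀ z, |V z - U z| ≤ η := fun z => hFdiff (L z)
  have hhalfμ : |1 / 2 - μ| ≤ η := by
    have h0 : (1 : ℝ) / 2 - μ = ∫ z, (V z - U z) ∂PX := by
      rw [integral_sub hVint hUint, hEV, hEU]; ring
    rw [h0]
    calc |∫ z, (V z - U z) ∂PX| ≤ ∫ z, |V z - U z| ∂PX := by
          simpa [Real.norm_eq_abs] using
            norm_integral_le_integral_norm (μ := PX) (fun z => V z - U z)
    _ ≤ ∫ _, η ∂PX := integral_mono (hVint.sub hUint).abs (integrable_const η)
          (fun z => hVU z)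
    _ = η := by simp
  -- W basics
  have hWeq : W = fun z => (V z + U z) + (μ - 3 / 2) := by
    rw [hW]; funext z; ring
  have hWmeas : Measurable W := by
    rw [hWeq]; exact ((hVmeas.add hUmeas).add_const _)
  have hWb : ∀ z, ‖W z‖ ≤ 4 := by
    intro z
    have hz : W z = V z + U z + (μ - 3 / 2) := by rw [hWeq]
    rw [Real.norm_eq_abs, hz]
    have h1 := hUb z
    have h2 := hVb z
    rw [abs_le] at h1 h2 ⊢
    constructor <;> nlinarith [hμ01.1, hμ01.2]
  have hEW0 : ∫ z, W z ∂PX = 0 := by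
    have e1 : ∫ z, W z ∂PX
        = ∫ z, (V z + U z) ∂PX + ∫ _z, (μ - 3 / 2) ∂PX := by
      rw [hWeq]
      exact integral_add (hVint.add hUint) (integrable_const _)
    have e2 : ∫ z, (V z + U z) ∂PX = ∫ z, V z ∂PX + ∫ z, U z ∂PX :=
      integral_add hVint hUint
    rw [e1, e2, hEV, hEU, integral_const]
    simp only [measure_univ, probReal_univ, ENNReal.toReal_one, one_smul, smul_eq_mul, one_mul]
    ring
  refine ⟨hEW0, ?_⟩
  -- variance
  have hMem : MemLp W 2 PX :=
    MemLp.of_bound hWmeas.aestronglyMeasurable 4 (ae_of_all _ hWb)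
  have hvar : variance W PX = ∫ z, W z ^ 2 ∂PX := by
    rw [variance_eq_sub hMem, hEW0]
    simp
  -- decomposition
  set R : E → ℝ := fun z => V z - U z - (1 / 2 - μ) with hR
  have hRmeas : Measurable R := (hVmeas.sub hUmeas).sub_const _
  have hRb : ∀ z, |R z| ≤ 2 * η := by
    intro z
    have h1 := hVU z
    have h2 := hhalfμ
    calc |R z| = |(V z - U z) + -(1 / 2 - μ)| := by rw [hR]; ring_nf
    _ ≤ |V z - U z| + |-(1 / 2 - μ)| := abs_add_le _ _
    _ ≤ 2 * η := by rw [abs_neg]; linarith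
  set G : E → ℝ := fun z => R z ^ 2 + 2 * R z * (2 * U z - 1) with hG
  have hGmeas : Measurable G :=
    ((hRmeas.pow_const 2).add (((hRmeas.const_mul 2)).mul ((hUmeas.const_mul 2).sub_const 1)))
  have hGb : ∀ z, |G z| ≤ 12 * η := by
    intro z
    have h1 := hRb z
    have h2 := hUb z
    have h4 : 0 ≤ U z := (hFX01 (L z)).1
    have h5 : U z ≤ 1 := (hFX01 (L z)).2
    have h3 : |2 * U z - 1| ≤ 1 := by
      rw [abs_le]
      constructor <;> linarith
    calc |G z| ≤ |R z ^ 2| + |2 * R z * (2 * U z - 1)| := abs_add_le _ _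
    _ = R z ^ 2 + 2 * |R z| * |2 * U z - 1| := by
        rw [abs_of_nonneg (sq_nonneg _), abs_mul, abs_mul, abs_two]
    _ ≤ 12 * η := by nlinarith [abs_nonneg (R z), sq_abs (R z), abs_nonneg (2 * U z - 1)]
  have hGint : Integrable G PX := integrable_of_bdd hGmeas.aestronglyMeasurable hGb
  have hW2 : ∀ z, W z ^ 2 = G z + (4 * U z ^ 2 - 4 * U z + 1) := by
    intro z
    have hz : W z = V z - (1 - μ) + U z - 1 / 2 := by rw [hW]
    rw [hz, hG, hR]
    ring
  have hq1int : Integrable (fun z => 4 * U z ^ 2 - 4 * U z) PX :=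
    (hU2int.const_mul 4).sub (hUint.const_mul 4)
  have hqint : Integrable (fun z => 4 * U z ^ 2 - 4 * U z + 1) PX :=
    hq1int.add (integrable_const 1)
  have hEq : ∫ z, (4 * U z ^ 2 - 4 * U z + 1) ∂PX = 1 / 3 := by
    have e1 : ∫ z, (4 * U z ^ 2 - 4 * U z + 1) ∂PX
        = ∫ z, (4 * U z ^ 2 - 4 * U z) ∂PX + ∫ _z, (1 : ℝ) ∂PX :=
      integral_add hq1int (integrable_const 1)
    have e2 : ∫ z, (4 * U z ^ 2 - 4 * U z) ∂PX
        = ∫ z, 4 * U z ^ 2 ∂PX - ∫ z, 4 * U z ∂PX :=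
      integral_sub (hU2int.const_mul 4) (hUint.const_mul 4)
    have e3 : ∫ z, 4 * U z ^ 2 ∂PX = 4 * ∫ z, U z ^ 2 ∂PX :=
      integral_const_mul 4 _
    have e4 : ∫ z, 4 * U z ∂PX = 4 * ∫ z, U z ∂PX :=
      integral_const_mul 4 _
    rw [e1, e2, e3, e4, hEU2, hEU, integral_const]
    simp only [measure_univ, probReal_univ, ENNReal.toReal_one, one_smul, smul_eq_mul, one_mul]
    norm_num
  have hEW2 : ∫ z, W z ^ 2 ∂PX = ∫ z, G z ∂PX + 1 / 3 := by
    have e : ∫ z, (G z + (4 * U z ^ 2 - 4 * U z + 1)) ∂PX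
        = ∫ z, G z ∂PX + ∫ z, (4 * U z ^ 2 - 4 * U z + 1) ∂PX :=
      integral_add hGint hqint
    calc ∫ z, W z ^ 2 ∂PX = ∫ z, (G z + (4 * U z ^ 2 - 4 * U z + 1)) ∂PX :=
          integral_congr_ae (ae_of_all _ hW2)
    _ = ∫ z, G z ∂PX + ∫ z, (4 * U z ^ 2 - 4 * U z + 1) ∂PX := e
    _ = ∫ z, G z ∂PX + 1 / 3 := by rw [hEq]
  have hfinal : |variance W PX - 1 / 3| ≤ 12 * η := by
    rw [hvar, hEW2]
    simp only [add_sub_cancel_right]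
    calc |∫ z, G z ∂PX| ≤ ∫ z, |G z| ∂PX := by
          simpa [Real.norm_eq_abs] using norm_integral_le_integral_norm (μ := PX) G
    _ ≤ ∫ _, 12 * η ∂PX := integral_mono hGint.abs (integrable_const _) hGb
    _ = 12 * η := by simp
  calc |variance W PX - 1 / 3| ≤ 12 * η := hfinal
  _ ≤ 12 * δ := by linarith
end

section
/- Let P_X and P_Y be probability measures on a measurable space (E, ℰ) and g : E → ℝ a measurable function such that g(Z) has a continuous (atomless) distribution with cumulative distribution function F_X when Z ~ P_X and F_Y when Z ~ P_Y. Set μ* := P( g(Z_X) < g(Z_Y) ) for independent Z_X ~ P_X, Z_Y ~ P_Y, and define the kernel h†(z, z') := 1{ g(z) < g(z') } − F_X(g(z')) + F_Y(g(z)) − 1 + μ*. Let X_1, X_2 be independent with law P_X and Y_1, Y_2 independent with law P_Y, all four mutually independent. Then E[ h†(X_1, Y_1) · h†(X_1, Y_2) ] = 0, E[ h†(X_1, Y_1) · h†(X_2, Y_1) ] = 0, and E[ h†(X_1, Y_1) · h†(X_2, Y_2) ] = 0. -/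
open MeasureTheory ProbabilityTheory Set

private lemma integrable_of_bdd' {α : Type*} [MeasurableSpace α] {μ : Measure α}
    [IsFiniteMeasure μ] {f : α → ℝ} (hf : Measurable f) {C : ℝ} (hC : ∀ a, |f a| ≤ C) :
    Integrable f μ :=
  (integrable_const C).mono' hf.aestronglyMeasurable (Filter.Eventually.of_forall fun a => by
    simpa [Real.norm_eq_abs] using hC a)

private lemma prod_integral_zero' {α β : Type*} [MeasurableSpace α] [MeasurableSpace β]
    (μ : Measure α) (ν : Measure β) [IsFiniteMeasure μ] [IsFiniteMeasure ν]
    {F : α × β → ℝ} (hF : Measurable F) {C : ℝ} (hC : ∀ p, |F p| ≤ C)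
    (h0 : ∀ a, ∫ b, F (a, b) ∂ν = 0) : ∫ p, F p ∂(μ.prod ν) = 0 := by
  rw [MeasureTheory.integral_prod _ (integrable_of_bdd' hF hC)]
  simp [h0]

/-- with `g(Z)` atomless under `P_X` (CDF `F_X`) and under `P_Y`
(CDF `F_Y`), `μ* := P(g(Z_X) < g(Z_Y))`, and kernel
`h†(z,z') := 1{g z < g z'} − F_X(g z') + F_Y(g z) − 1 + μ*`: for mutually
independent `X_1, X_2 ~ P_X` and `Y_1, Y_2 ~ P_Y`,
`E[h†(X_1,Y_1)·h†(X_1,Y_2)] = 0`, `E[h†(X_1,Y_1)·h†(X_2,Y_1)] = 0`, and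
`E[h†(X_1,Y_1)·h†(X_2,Y_2)] = 0`. -/
theorem statement10 {E Ω : Type*} [MeasurableSpace E] [MeasureSpace Ω]
    [IsProbabilityMeasure (ℙ : Measure Ω)]
    (PX PY : Measure E) [IsProbabilityMeasure PX] [IsProbabilityMeasure PY]
    (g : E → ℝ) (hg : Measurable g)
    (hatomlessX : ∀ c : ℝ, PX {z | g z = c} = 0)
    (hatomlessY : ∀ c : ℝ, PY {z | g z = c} = 0)
    (FX FY : ℝ → ℝ)
    (hFX : FX = fun t => (PX {z | g z ≤ t}).toReal)
    (hFY : FY = fun t => (PY {z | g z ≤ t}).toReal)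
    (μs : ℝ) (hμs : μs = ((PX.prod PY) {p | g p.1 < g p.2}).toReal)
    (hdag : E → E → ℝ)
    (hhdag : hdag = fun z z' =>
      (if g z < g z' then (1 : ℝ) else 0) - FX (g z') + FY (g z) - 1 + μs)
    (X₁ X₂ Y₁ Y₂ : Ω → E)
    (hX₁ : Measurable X₁) (hX₂ : Measurable X₂)
    (hY₁ : Measurable Y₁) (hY₂ : Measurable Y₂)
    (hindep : iIndepFun ![X₁, X₂, Y₁, Y₂] ℙ)
    (hlawX₁ : Measure.map X₁ ℙ = PX) (hlawX₂ : Measure.map X₂ ℙ = PX)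
    (hlawY₁ : Measure.map Y₁ ℙ = PY) (hlawY₂ : Measure.map Y₂ ℙ = PY) :
    (∫ ω, hdag (X₁ ω) (Y₁ ω) * hdag (X₁ ω) (Y₂ ω)) = 0 ∧
      (∫ ω, hdag (X₁ ω) (Y₁ ω) * hdag (X₂ ω) (Y₁ ω)) = 0 ∧
      (∫ ω, hdag (X₁ ω) (Y₁ ω) * hdag (X₂ ω) (Y₂ ω)) = 0 := by
  -- basic measurability of the cdfs
  have hSXm : Measurable (fun t : ℝ => PX {z | g z ≤ t}) :=
    Monotone.measurable (fun a b hab => measure_mono (fun z hz => le_trans hz hab))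
  have hSYm : Measurable (fun t : ℝ => PY {z | g z ≤ t}) :=
    Monotone.measurable (fun a b hab => measure_mono (fun z hz => le_trans hz hab))
  have hFXm : Measurable FX := by rw [hFX]; exact hSXm.ennreal_toReal
  have hFYm : Measurable FY := by rw [hFY]; exact hSYm.ennreal_toReal
  have hA : MeasurableSet {p : E × E | g p.1 < g p.2} :=
    measurableSet_lt (hg.comp measurable_fst) (hg.comp measurable_snd)
  -- strict cdf equals cdf under atomlessness
  have hK1X : ∀ c : ℝ, PX {z | g z < c} = PX {z | g z ≤ c} := by
    intro c
    refine le_antisymm (measure_mono fun z hz => show g z ≤ c from le_of_lt hz) ?_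
    calc PX {z | g z ≤ c} ≤ PX ({z | g z < c} ∪ {z | g z = c}) := by
          refine measure_mono fun z hz => ?_
          rcases lt_or_eq_of_le (show g z ≤ c from hz) with h | h
          · exact Or.inl h
          · exact Or.inr h
      _ ≤ PX {z | g z < c} + PX {z | g z = c} := measure_union_le _ _
      _ = PX {z | g z < c} := by rw [hatomlessX c, add_zero]
  -- indicator integrals
  have hK2Y : ∀ x : E, ∫ y, (if g x < g y then (1:ℝ) else 0) ∂PY = 1 - FY (g x) := by
    intro x
    have hs : MeasurableSet {y | g x < g y} := measurableSet_lt measurable_const hg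
    have hind : (fun y => if g x < g y then (1:ℝ) else 0)
        = Set.indicator {y | g x < g y} (fun _ => (1:ℝ)) := by
      funext y; simp [Set.indicator_apply]
    rw [hind, MeasureTheory.integral_indicator_const (1:ℝ) hs]
    have hcompl : {y | g x < g y} = {z | g z ≤ g x}ᶜ := by
      ext y; simp [not_le]
    rw [hcompl, measureReal_def, prob_compl_eq_one_sub (measurableSet_le hg measurable_const),
      ENNReal.toReal_sub_of_le prob_le_one ENNReal.one_ne_top, hFY]
    simp
  have hK2X : ∀ y : E, ∫ x, (if g x < g y then (1:ℝ) else 0) ∂PX = FX (g y) := by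
    intro y
    have hs : MeasurableSet {x | g x < g y} := measurableSet_lt hg measurable_const
    have hind : (fun x => if g x < g y then (1:ℝ) else 0)
        = Set.indicator {x | g x < g y} (fun _ => (1:ℝ)) := by
      funext x; simp [Set.indicator_apply]
    rw [hind, MeasureTheory.integral_indicator_const (1:ℝ) hs]
    rw [show ({x | g x < g y} : Set E) = {z | g z < g y} from rfl, measureReal_def, hK1X, hFX]
    simp
  -- ∫ FX ∘ g dPY = μs
  have hK3 : ∫ y, FX (g y) ∂PY = μs := by
    rw [hμs, Measure.prod_apply_symm hA]
    have h1 : ∫⁻ y, PX ((fun x => (x, y)) ⁻¹' {p : E × E | g p.1 < g p.2}) ∂PY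
        = ∫⁻ y, PX {z | g z ≤ g y} ∂PY := by
      refine lintegral_congr fun y => ?_
      have : ((fun x => (x, y)) ⁻¹' {p : E × E | g p.1 < g p.2}) = {z | g z < g y} := rfl
      rw [this, hK1X]
    rw [h1, hFX]
    exact integral_toReal ((hSXm.comp hg).aemeasurable)
      (Filter.Eventually.of_forall fun y => measure_lt_top _ _)
  -- ∫ FY ∘ g dPX = 1 - μs
  have hK4 : ∫ x, FY (g x) ∂PX = 1 - μs := by
    have hcompl : {p : E × E | g p.1 < g p.2}ᶜ = {p : E × E | g p.2 ≤ g p.1} := by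
      ext p; simp [not_lt]
    have h2 : (PX.prod PY) {p : E × E | g p.2 ≤ g p.1}
        = ∫⁻ x, PY {z | g z ≤ g x} ∂PX := by
      rw [Measure.prod_apply (hcompl ▸ hA.compl)]
      rfl
    have h3 : ∫ x, FY (g x) ∂PX
        = ((PX.prod PY) {p : E × E | g p.2 ≤ g p.1}).toReal := by
      rw [h2, hFY]
      exact integral_toReal ((hSYm.comp hg).aemeasurable)
        (Filter.Eventually.of_forall fun y => measure_lt_top _ _)
    rw [h3, ← hcompl, prob_compl_eq_one_sub hA,
      ENNReal.toReal_sub_of_le prob_le_one ENNReal.one_ne_top, hμs]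
    simp
  -- bounds
  have hFX01 : ∀ t, 0 ≤ FX t ∧ FX t ≤ 1 := by
    intro t
    rw [hFX]
    refine ⟨ENNReal.toReal_nonneg, ?_⟩
    simpa using ENNReal.toReal_mono ENNReal.one_ne_top (prob_le_one (μ := PX))
  have hFY01 : ∀ t, 0 ≤ FY t ∧ FY t ≤ 1 := by
    intro t
    rw [hFY]
    refine ⟨ENNReal.toReal_nonneg, ?_⟩
    simpa using ENNReal.toReal_mono ENNReal.one_ne_top (prob_le_one (μ := PY))
  have hμ01 : 0 ≤ μs ∧ μs ≤ 1 := by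
    rw [hμs]
    refine ⟨ENNReal.toReal_nonneg, ?_⟩
    simpa using ENNReal.toReal_mono ENNReal.one_ne_top (prob_le_one (μ := PX.prod PY))
  have hbd : ∀ z z', |hdag z z'| ≤ 5 := by
    intro z z'
    rw [hhdag]
    have h1 : (0:ℝ) ≤ (if g z < g z' then (1:ℝ) else 0) ∧
        (if g z < g z' then (1:ℝ) else 0) ≤ 1 := by split <;> norm_num
    rcases hFX01 (g z') with ⟨a1, a2⟩
    rcases hFY01 (g z) with ⟨b1, b2⟩
    rcases hμ01 with ⟨c1, c2⟩
    rw [abs_le]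
    constructor <;> simp only <;> nlinarith [h1.1, h1.2]
  have hHm : Measurable (fun p : E × E => hdag p.1 p.2) := by
    rw [hhdag]
    exact ((((Measurable.ite hA measurable_const measurable_const).sub
      (hFXm.comp (hg.comp measurable_snd))).add
      (hFYm.comp (hg.comp measurable_fst))).sub measurable_const).add measurable_const
  -- integrabilities
  have hIndIntY : ∀ x : E, Integrable (fun y => if g x < g y then (1:ℝ) else 0) PY := by
    intro x
    refine integrable_of_bdd' (Measurable.ite (measurableSet_lt measurable_const hg)
      measurable_const measurable_const) (C := 1) fun a => ?_
    split <;> norm_num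
  have hIndIntX : ∀ y : E, Integrable (fun x => if g x < g y then (1:ℝ) else 0) PX := by
    intro y
    refine integrable_of_bdd' (Measurable.ite (measurableSet_lt hg measurable_const)
      measurable_const measurable_const) (C := 1) fun a => ?_
    split <;> norm_num
  have hFXgInt : Integrable (fun y => FX (g y)) PY :=
    integrable_of_bdd' (hFXm.comp hg) (C := 1) fun a => abs_le.mpr
      ⟨by linarith [(hFX01 (g a)).1], (hFX01 (g a)).2⟩
  have hFYgInt : Integrable (fun x => FY (g x)) PX :=
    integrable_of_bdd' (hFYm.comp hg) (C := 1) fun a => abs_le.mpr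
      ⟨by linarith [(hFY01 (g a)).1], (hFY01 (g a)).2⟩
  -- Degeneracy in the second argument
  have hA0 : ∀ x : E, ∫ y, hdag x y ∂PY = 0 := by
    intro x
    rw [hhdag]
    have heq : (fun y => (if g x < g y then (1:ℝ) else 0) - FX (g y) + FY (g x) - 1 + μs)
        = fun y => ((if g x < g y then (1:ℝ) else 0) - FX (g y)) + (FY (g x) - 1 + μs) := by
      funext y; ring
    have hsub : Integrable (fun y => (if g x < g y then (1:ℝ) else 0) - FX (g y)) PY :=
      (hIndIntY x).sub hFXgInt
    rw [heq, integral_add hsub (integrable_const _),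
      integral_sub (hIndIntY x) hFXgInt, hK2Y x, hK3, integral_const]
    simp
  -- Degeneracy in the first argument
  have hB0 : ∀ y : E, ∫ x, hdag x y ∂PX = 0 := by
    intro y
    rw [hhdag]
    have heq : (fun x => (if g x < g y then (1:ℝ) else 0) - FX (g y) + FY (g x) - 1 + μs)
        = fun x => ((if g x < g y then (1:ℝ) else 0) + FY (g x)) + (-FX (g y) - 1 + μs) := by
      funext x; ring
    have hadd : Integrable (fun x => (if g x < g y then (1:ℝ) else 0) + FY (g x)) PX :=
      (hIndIntX y).add hFYgInt
    rw [heq, integral_add hadd (integrable_const _),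
      integral_add (hIndIntX y) hFYgInt, hK2X y, hK4, integral_const]
    simp only [probReal_univ, one_smul]
    ring
  -- mean-zero on the product
  have hbdH : ∀ p : E × E, |(fun p : E × E => hdag p.1 p.2) p| ≤ 5 := fun p => hbd _ _
  have hmean : ∫ p : E × E, hdag p.1 p.2 ∂(PX.prod PY) = 0 :=
    prod_integral_zero' PX PY hHm hbdH (fun x => hA0 x)
  -- independence and joint laws
  have hm : ∀ i, Measurable (![X₁, X₂, Y₁, Y₂] i) := by
    intro i; fin_cases i <;> assumption
  have i11 : IndepFun X₁ Y₁ ℙ := by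
    have := hindep.indepFun (i := 0) (j := 2) (by decide)
    simpa using this
  have m11 : Measure.map (fun ω => (X₁ ω, Y₁ ω)) ℙ = PX.prod PY := by
    rw [← hlawX₁, ← hlawY₁]
    exact (indepFun_iff_map_prod_eq_prod_map_map hX₁.aemeasurable hY₁.aemeasurable).mp i11
  have m22 : Measure.map (fun ω => (X₂ ω, Y₂ ω)) ℙ = PX.prod PY := by
    have i22 : IndepFun X₂ Y₂ ℙ := by
      have := hindep.indepFun (i := 1) (j := 3) (by decide)
      simpa using this
    rw [← hlawX₂, ← hlawY₂]
    exact (indepFun_iff_map_prod_eq_prod_map_map hX₂.aemeasurable hY₂.aemeasurable).mp i22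
  have iP2 : IndepFun (fun ω => (X₁ ω, Y₁ ω)) Y₂ ℙ := by
    have := hindep.indepFun_prodMk hm 0 2 3 (by decide) (by decide)
    simpa using this
  have W1law : Measure.map (fun ω => ((X₁ ω, Y₁ ω), Y₂ ω)) ℙ = (PX.prod PY).prod PY := by
    rw [(indepFun_iff_map_prod_eq_prod_map_map
      (hX₁.prodMk hY₁).aemeasurable hY₂.aemeasurable).mp iP2, m11, hlawY₂]
  have iP3 : IndepFun (fun ω => (X₁ ω, Y₁ ω)) X₂ ℙ := by
    have := hindep.indepFun_prodMk hm 0 2 1 (by decide) (by decide)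
    simpa using this
  have W2law : Measure.map (fun ω => ((X₁ ω, Y₁ ω), X₂ ω)) ℙ = (PX.prod PY).prod PX := by
    rw [(indepFun_iff_map_prod_eq_prod_map_map
      (hX₁.prodMk hY₁).aemeasurable hX₂.aemeasurable).mp iP3, m11, hlawX₂]
  have iP4 : IndepFun (fun ω => (X₁ ω, Y₁ ω)) (fun ω => (X₂ ω, Y₂ ω)) ℙ := by
    have := hindep.indepFun_prodMk_prodMk hm 0 2 1 3
      (by decide) (by decide) (by decide) (by decide)
    simpa using this
  have W3law : Measure.map (fun ω => ((X₁ ω, Y₁ ω), (X₂ ω, Y₂ ω))) ℙ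
      = (PX.prod PY).prod (PX.prod PY) := by
    rw [(indepFun_iff_map_prod_eq_prod_map_map
      (hX₁.prodMk hY₁).aemeasurable (hX₂.prodMk hY₂).aemeasurable).mp iP4, m11, m22]
  -- measurability of the three product functions
  have hF1m : Measurable (fun p : (E × E) × E => hdag p.1.1 p.1.2 * hdag p.1.1 p.2) := by
    exact (hHm.comp ((measurable_fst.fst).prodMk (measurable_fst.snd))).mul
      (hHm.comp ((measurable_fst.fst).prodMk measurable_snd))
  have hF2m : Measurable (fun p : (E × E) × E => hdag p.1.1 p.1.2 * hdag p.2 p.1.2) := by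
    exact (hHm.comp ((measurable_fst.fst).prodMk (measurable_fst.snd))).mul
      (hHm.comp (measurable_snd.prodMk (measurable_fst.snd)))
  have hF3m : Measurable (fun p : (E × E) × (E × E) => hdag p.1.1 p.1.2 * hdag p.2.1 p.2.2) := by
    exact (hHm.comp ((measurable_fst.fst).prodMk (measurable_fst.snd))).mul
      (hHm.comp ((measurable_snd.fst).prodMk (measurable_snd.snd)))
  have hbd25 : ∀ (a b c d : E), |hdag a b * hdag c d| ≤ 25 := by
    intro a b c d
    rw [abs_mul]
    calc |hdag a b| * |hdag c d| ≤ 5 * 5 :=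
          mul_le_mul (hbd a b) (hbd c d) (abs_nonneg _) (by norm_num)
      _ = 25 := by norm_num
  refine ⟨?_, ?_, ?_⟩
  · -- E[h(X₁,Y₁) h(X₁,Y₂)]
    have key : ∫ p : (E × E) × E, hdag p.1.1 p.1.2 * hdag p.1.1 p.2
        ∂((PX.prod PY).prod PY) = 0 := by
      refine prod_integral_zero' _ _ hF1m (fun p => hbd25 _ _ _ _) fun q => ?_
      show ∫ b, hdag q.1 q.2 * hdag q.1 b ∂PY = 0
      rw [MeasureTheory.integral_const_mul, hA0 q.1, mul_zero]
    calc (∫ ω, hdag (X₁ ω) (Y₁ ω) * hdag (X₁ ω) (Y₂ ω))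
        = ∫ p : (E × E) × E, hdag p.1.1 p.1.2 * hdag p.1.1 p.2
            ∂((PX.prod PY).prod PY) := by
          rw [← W1law]
          exact (integral_map ((hX₁.prodMk hY₁).prodMk hY₂).aemeasurable
            hF1m.aestronglyMeasurable).symm
      _ = 0 := key
  · -- E[h(X₁,Y₁) h(X₂,Y₁)]
    have key : ∫ p : (E × E) × E, hdag p.1.1 p.1.2 * hdag p.2 p.1.2
        ∂((PX.prod PY).prod PX) = 0 := by
      refine prod_integral_zero' _ _ hF2m (fun p => hbd25 _ _ _ _) fun q => ?_
      show ∫ b, hdag q.1 q.2 * hdag b q.2 ∂PX = 0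
      rw [MeasureTheory.integral_const_mul, hB0 q.2, mul_zero]
    calc (∫ ω, hdag (X₁ ω) (Y₁ ω) * hdag (X₂ ω) (Y₁ ω))
        = ∫ p : (E × E) × E, hdag p.1.1 p.1.2 * hdag p.2 p.1.2
            ∂((PX.prod PY).prod PX) := by
          rw [← W2law]
          exact (integral_map ((hX₁.prodMk hY₁).prodMk hX₂).aemeasurable
            hF2m.aestronglyMeasurable).symm
      _ = 0 := key
  · -- E[h(X₁,Y₁) h(X₂,Y₂)]
    have key : ∫ p : (E × E) × (E × E), hdag p.1.1 p.1.2 * hdag p.2.1 p.2.2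
        ∂((PX.prod PY).prod (PX.prod PY)) = 0 := by
      refine prod_integral_zero' _ _ hF3m (fun p => hbd25 _ _ _ _) fun q => ?_
      show ∫ b : E × E, hdag q.1 q.2 * hdag b.1 b.2 ∂(PX.prod PY) = 0
      rw [MeasureTheory.integral_const_mul]
      rw [show (∫ b : E × E, hdag b.1 b.2 ∂(PX.prod PY)) = 0 from hmean, mul_zero]
    calc (∫ ω, hdag (X₁ ω) (Y₁ ω) * hdag (X₂ ω) (Y₂ ω))
        = ∫ p : (E × E) × (E × E), hdag p.1.1 p.1.2 * hdag p.2.1 p.2.2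
            ∂((PX.prod PY).prod (PX.prod PY)) := by
          rw [← W3law]
          exact (integral_map ((hX₁.prodMk hY₁).prodMk (hX₂.prodMk hY₂)).aemeasurable
            hF3m.aestronglyMeasurable).symm
      _ = 0 := key
end
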